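/- arXiv:1501.03170 — 9 statements merged into one kernel-verified Lean document; each statement's English description precedes it below -/
import Mathlib

section
/- A positive integer n is a cyclic number (i.e., every group of order n is cyclic) if and only if gcd(n, φ(n)) = 1, where φ is Euler's totient function. -/
open Subgroup

-- decomposition of non-coprimality
lemma aux_decomp {n : ℕ} (hn : 0 < n) (h : Nat.gcd n (Nat.totient n) ≠ 1) :
    ∃ r : ℕ, r.Prime ∧ r ∣ n ∧ (r * r ∣ n ∨ ∃ q : ℕ, q.Prime ∧ q ∣ n ∧ r ∣ q - 1) := by
  set d := Nat.gcd n (Nat.totient n) with hd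
  have hd0 : d ≠ 0 := by
    intro h0
    rw [hd] at h0
    have := Nat.eq_zero_of_gcd_eq_zero_left h0
    omega
  set r := d.minFac with hr
  have hrp : r.Prime := Nat.minFac_prime h
  have hrn : r ∣ n := (Nat.minFac_dvd d).trans (Nat.gcd_dvd_left _ _)
  have hrt : r ∣ Nat.totient n := (Nat.minFac_dvd d).trans (Nat.gcd_dvd_right _ _)
  refine ⟨r, hrp, hrn, ?_⟩
  rw [Nat.totient_eq_prod_factorization hn.ne'] at hrt
  obtain ⟨q, hq, hdvd⟩ := hrp.prime.exists_mem_finset_dvd hrt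
  have hqp : q.Prime := Nat.prime_of_mem_primeFactors (by
    rwa [Nat.support_factorization] at hq)
  rcases hrp.prime.dvd_mul.mp hdvd with h2 | h2
  · left
    have hrq : r = q := (Nat.prime_dvd_prime_iff_eq hrp hqp).mp (hrp.dvd_of_dvd_pow h2)
    have hk : 2 ≤ n.factorization q := by
      by_contra hk
      interval_cases hfq : n.factorization q
      · simp [hfq] at h2; exact hrp.one_lt.ne' h2
      · simp [hfq] at h2; exact hrp.one_lt.ne' h2
    have : q ^ 2 ∣ q ^ n.factorization q := pow_dvd_pow q hk
    have h3 : q ^ 2 ∣ n := this.trans (Nat.ordProj_dvd n q)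
    rw [hrq]
    simpa [sq] using h3
  · exact Or.inr ⟨q, hqp, Nat.dvd_of_mem_primeFactors (by rwa [Nat.support_factorization] at hq), h2⟩

-- cyclic implies commute
lemma aux_cyclic_comm {G : Type*} [Group G] (h : IsCyclic G) (a b : G) : a * b = b * a := by
  obtain ⟨g, hg⟩ := h.exists_generator
  obtain ⟨i, hi⟩ := hg a
  obtain ⟨j, hj⟩ := hg b
  subst hi hj
  exact ((Commute.refl g).zpow_zpow i j)

-- Case A: noncyclic group when r^2 ∣ n
lemma aux_caseA {n r : ℕ} (hn : 0 < n) (hr : r.Prime) (h : r * r ∣ n) :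
    ∃ (G : Type) (_ : Group G) (_ : Fintype G), Fintype.card G = n ∧ ¬ IsCyclic G := by
  obtain ⟨m, hm⟩ := h
  have hm0 : m ≠ 0 := by rintro rfl; omega
  haveI : NeZero m := ⟨hm0⟩
  haveI : NeZero r := ⟨hr.pos.ne'⟩
  refine ⟨Multiplicative (ZMod r × ZMod r × ZMod m), inferInstance, inferInstance, ?_, ?_⟩
  · simp [hm, ZMod.card, mul_assoc]
  · intro hcyc
    have hexp := hcyc.exponent_eq_card (α := Multiplicative (ZMod r × ZMod r × ZMod m))
    have hdvd : Monoid.exponent (Multiplicative (ZMod r × ZMod r × ZMod m)) ∣ r * m := by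
      apply Monoid.exponent_dvd_of_forall_pow_eq_one
      intro g
      have : (r * m) • (Multiplicative.toAdd g) = 0 := by
        obtain ⟨a, b, c⟩ := Multiplicative.toAdd g
        refine Prod.ext ?_ (Prod.ext ?_ ?_)
        · show (r * m) • a = 0
          rw [nsmul_eq_mul]
          rw [show (((r * m : ℕ) : ZMod r)) = 0 from
            (ZMod.natCast_eq_zero_iff _ _).mpr ⟨m, rfl⟩]
          ring
        · show (r * m) • b = 0
          rw [nsmul_eq_mul]
          rw [show (((r * m : ℕ) : ZMod r)) = 0 from
            (ZMod.natCast_eq_zero_iff _ _).mpr ⟨m, rfl⟩]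
          ring
        · show (r * m) • c = 0
          rw [nsmul_eq_mul]
          rw [show (((r * m : ℕ) : ZMod m)) = 0 from
            (ZMod.natCast_eq_zero_iff _ _).mpr ⟨r, mul_comm r m⟩]
          ring
      show g ^ (r * m) = 1
      rw [← ofAdd_toAdd g, ← ofAdd_nsmul, this]
      rfl
    rw [hexp] at hdvd
    have hcard : Nat.card (Multiplicative (ZMod r × ZMod r × ZMod m)) = n := by
      simp [Nat.card_eq_fintype_card, hm, ZMod.card, mul_assoc]
    rw [hcard] at hdvd
    have h0 : 0 < r * m := Nat.mul_pos hr.pos (Nat.pos_of_ne_zero hm0)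
    have := Nat.le_of_dvd h0 hdvd
    have h2 : r * m < n := by
      rw [hm, mul_assoc]
      calc r * m = 1 * (r * m) := (one_mul _).symm
        _ < r * (r * m) := by exact Nat.mul_lt_mul_of_lt_of_le hr.one_lt (le_refl _) h0
    omega


def auxAddAutToMulAut (A : Type*) [AddGroup A] : Multiplicative (AddAut A) →* MulAut (Multiplicative A) where
  toFun f := AddEquiv.toMultiplicative f.toAdd
  map_one' := rfl
  map_mul' f g := rfl

noncomputable def auxPsi (r q : ℕ) [NeZero r] (u : (ZMod q)ˣ) (hu : u ^ r = 1) :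
    Multiplicative (ZMod r) →* (ZMod q)ˣ :=
  AddMonoidHom.toMultiplicativeLeft
    (ZMod.lift r ⟨(zmultiplesHom (Additive (ZMod q)ˣ)) (Additive.ofMul u), by
      show (r : ℤ) • Additive.ofMul u = 0
      rw [← ofMul_zpow, zpow_natCast, hu]
      rfl⟩)

lemma auxPsi_apply_one (r q : ℕ) [NeZero r] (u : (ZMod q)ˣ) (hu : u ^ r = 1) :
    auxPsi r q u hu (Multiplicative.ofAdd (1 : ZMod r)) = u := by
  have h1 : (1 : ZMod r) = ((1 : ℤ) : ZMod r) := by simp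
  simp only [auxPsi, AddMonoidHom.coe_toMultiplicativeLeft, Function.comp_apply, toAdd_ofAdd,
    h1, ZMod.lift_coe]
  simp

def auxSdEquiv {N G : Type*} [Group N] [Group G] (φ : G →* MulAut N) :
    (N ⋊[φ] G) ≃ N × G where
  toFun x := (x.left, x.right)
  invFun p := ⟨p.1, p.2⟩
  left_inv x := rfl
  right_inv p := rfl

noncomputable instance auxSdFintype {N G : Type*} [Group N] [Group G] (φ : G →* MulAut N)
    [Fintype N] [Fintype G] : Fintype (N ⋊[φ] G) :=
  Fintype.ofEquiv (N × G) (auxSdEquiv φ).symm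

lemma aux_caseB {n r q : ℕ} (hn : 0 < n) (hr : r.Prime) (hq : q.Prime)
    (hrqn : r * q ∣ n) (hdvd : r ∣ q - 1) :
    ∃ (G : Type) (_ : Group G) (_ : Fintype G), Fintype.card G = n ∧ ¬ IsCyclic G := by
  obtain ⟨m, hm⟩ := hrqn
  have hm0 : m ≠ 0 := by rintro rfl; omega
  haveI : NeZero m := ⟨hm0⟩
  haveI : NeZero r := ⟨hr.pos.ne'⟩
  haveI : NeZero q := ⟨hq.pos.ne'⟩
  haveI : Fact q.Prime := ⟨hq⟩
  haveI : Fact r.Prime := ⟨hr⟩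
  have hcardu : r ∣ Fintype.card (ZMod q)ˣ := by
    rw [ZMod.card_units_eq_totient, Nat.totient_prime hq]; exact hdvd
  obtain ⟨u, hu⟩ := exists_prime_orderOf_dvd_card r hcardu
  have hupow : u ^ r = 1 := by rw [← hu]; exact pow_orderOf_eq_one u
  have hune : u ≠ 1 := by
    intro h1; rw [h1, orderOf_one] at hu; exact hr.one_lt.ne' hu.symm
  set ψ := auxPsi r q u hupow with hψ
  set φ := (auxAddAutToMulAut (ZMod q)).comp
    ((AddMonoidHom.toMultiplicativeRight (ZMod.AddAutEquivUnits q).symm.toAddMonoidHom).comp ψ) with hφ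
  refine ⟨(Multiplicative (ZMod q) ⋊[φ] Multiplicative (ZMod r)) × Multiplicative (ZMod m),
    inferInstance, inferInstance, ?_, ?_⟩
  · rw [Fintype.card_prod, Fintype.card_congr (auxSdEquiv φ), Fintype.card_prod,
      Fintype.card_multiplicative, Fintype.card_multiplicative, Fintype.card_multiplicative,
      ZMod.card, ZMod.card, ZMod.card, hm]
    ring
  · intro hcyc
    have hcomm := aux_cyclic_comm hcyc
      (SemidirectProduct.inl (Multiplicative.ofAdd (1 : ZMod q)), 1)
      (SemidirectProduct.inr (Multiplicative.ofAdd (1 : ZMod r)), 1)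
    have h1 := congrArg Prod.fst hcomm
    have h2 := congrArg SemidirectProduct.left h1
    simp [SemidirectProduct.mul_left] at h2
    have h3 : (φ (Multiplicative.ofAdd (1 : ZMod r))) (Multiplicative.ofAdd (1 : ZMod q)) =
        Multiplicative.ofAdd ((u : ZMod q)) := by
      simp only [hφ, MonoidHom.comp_apply, hψ, auxPsi_apply_one,
        ZMod.AddAutEquivUnits_symm_apply]
      show Multiplicative.ofAdd ((AddAut.mulLeft u : AddAut (ZMod q)) (1 : ZMod q)) = _
      simp [Units.smul_def]
      exact mul_one (u : ZMod q)
    rw [h3] at h2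
    have h4 : (1 : ZMod q) = (u : ZMod q) := by
      simpa using h2
    exact hune (Units.ext h4.symm)


lemma aux_gcd_dvd {n d : ℕ} (h : Nat.gcd n (Nat.totient n) = 1) (hd : d ∣ n) :
    Nat.gcd d (Nat.totient d) = 1 :=
  Nat.eq_one_of_dvd_one (h ▸ Nat.dvd_gcd ((Nat.gcd_dvd_left d _).trans hd)
    ((Nat.gcd_dvd_right d _).trans (Nat.totient_dvd_of_dvd hd)))

lemma aux_squarefree {n : ℕ} (h : Nat.gcd n (Nat.totient n) = 1) :
    Squarefree n := by
  rw [Nat.squarefree_iff_prime_squarefree]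
  intro p hp hdvd
  have h1 : p ∣ Nat.totient n := by
    refine dvd_trans ?_ (Nat.totient_dvd_of_dvd hdvd)
    have : p * p = p ^ 2 := (sq p).symm
    rw [this, Nat.totient_prime_pow hp (by norm_num)]
    simp [pow_one]
  have h2 : p ∣ n := dvd_trans (dvd_mul_left p p) hdvd
  exact hp.one_lt.ne' (Nat.eq_one_of_dvd_one (h ▸ Nat.dvd_gcd h2 h1))

lemma aux_hom_eq_one {G H : Type*} [Group G] [Group H] [Finite G] [Finite H] (f : G →* H)
    (h : Nat.Coprime (Nat.card G) (Nat.card H)) (g : G) : f g = 1 := by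
  have h1 : Nat.card f.range ∣ Nat.card G := by
    have e := QuotientGroup.quotientKerEquivRange f
    rw [← Nat.card_congr e.toEquiv]
    exact f.ker.index_dvd_card
  have h2 : Nat.card f.range ∣ Nat.card H := card_subgroup_dvd_card f.range
  have hr : f.range = ⊥ := Subgroup.card_eq_one.mp (Nat.eq_one_of_dvd_one (h ▸ Nat.dvd_gcd h1 h2))
  have : f g ∈ f.range := ⟨g, rfl⟩
  rw [hr] at this
  simpa using this

lemma cyclic_of_coprime_totient :
    ∀ n : ℕ, Nat.gcd n (Nat.totient n) = 1 →
      ∀ (G : Type) [Group G] [Fintype G], Fintype.card G = n → IsCyclic G := by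
  intro n
  induction n using Nat.strong_induction_on with
  | _ n ih =>
    intro h G _ _ hcard
    rcases eq_or_ne n 1 with h1 | h1
    · have hc : Fintype.card G = 1 := hcard.trans h1
      have := Fintype.card_le_one_iff_subsingleton.mp hc.le
      exact isCyclic_of_subsingleton
    have hn0 : 0 < n := hcard ▸ Fintype.card_pos
    set p := n.minFac with hp_def
    have hp : p.Prime := Nat.minFac_prime h1
    have hpn : p ∣ n := Nat.minFac_dvd n
    haveI : Fact p.Prime := ⟨hp⟩
    have hsq : Squarefree n := aux_squarefree h
    obtain ⟨m, hm⟩ : ∃ m, n = p * m := hpn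
    have hcop : Nat.Coprime p m := by
      rw [hm] at hsq; exact (Nat.squarefree_mul_iff.mp hsq).1
    have hm0 : 0 < m := Nat.pos_of_ne_zero (by rintro rfl; rw [mul_zero] at hm; omega)
    have hmn : m ∣ n := ⟨p, by rw [hm]; ring⟩
    have hpn : p ∣ n := ⟨m, hm⟩
    obtain ⟨P⟩ : Nonempty (Sylow p G) := inferInstance
    have hcardG : Nat.card G = n := by rw [Nat.card_eq_fintype_card, hcard]
    have hcardP : Nat.card (P : Subgroup G) = p := by
      rw [Sylow.card_eq_multiplicity, hcardG,
        Nat.factorization_eq_one_of_squarefree hsq hp hpn, pow_one]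
    haveI : IsCyclic (P : Subgroup G) := isCyclic_of_prime_card hcardP
    -- normalizer ≤ centralizer
    have hNC : ∀ g : normalizer ((P : Subgroup G) : Set G), (P : Subgroup G).normalizerMonoidHom g = 1 := by
      apply aux_hom_eq_one
      have hc1 : Nat.card (normalizer ((P : Subgroup G) : Set G)) ∣ n := hcardG ▸ card_subgroup_dvd_card _
      have hc2 : Nat.card (MulAut (P : Subgroup G)) = p - 1 := by
        rw [IsCyclic.card_mulAut, hcardP, Nat.totient_prime hp]
      rw [hc2]
      have hdvd : (p - 1) ∣ Nat.totient n := by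
        have := Nat.totient_dvd_of_dvd hpn
        rwa [Nat.totient_prime hp] at this
      exact Nat.Coprime.coprime_dvd_left hc1 (Nat.Coprime.coprime_dvd_right hdvd h)
    have hker : (P : Subgroup G).normalizerMonoidHom.ker = ⊤ := by
      ext x; simpa using hNC x
    rw [normalizerMonoidHom_ker, subgroupOf_eq_top] at hker
    -- Burnside
    have hcompl := MonoidHom.ker_transferSylow_isComplement' P hker
    set K := (MonoidHom.transferSylow P hker).ker with hK_def
    have hcardK : Nat.card K = m := by
      have := hcompl.card_mul
      rw [hcardP, hcardG, hm] at this
      exact Nat.eq_of_mul_eq_mul_left hp.pos (by rw [mul_comm (Nat.card K) p] at this; omega)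
    -- K cyclic by induction
    have hmlt : m < n := by
      rw [hm]; exact lt_mul_of_one_lt_left hm0 hp.one_lt
    haveI : Fintype K := Fintype.ofFinite K
    haveI hKcyc : IsCyclic K := by
      have := ih m hmlt (aux_gcd_dvd h hmn) K
      exact this (by rw [← Nat.card_eq_fintype_card, hcardK])
    -- conjugation action of P on K is trivial
    haveI : K.Normal := MonoidHom.normal_ker _
    have htriv : ∀ g : (P : Subgroup G), (MulAut.conjNormal (G := G) (H := K)).comp
        (P : Subgroup G).subtype g = 1 := by
      apply aux_hom_eq_one
      have hc2 : Nat.card (MulAut K) = Nat.totient m := by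
        rw [IsCyclic.card_mulAut, hcardK]
      rw [hc2, hcardP]
      have h1 : p ∣ n := hpn
      have h2 : Nat.totient m ∣ Nat.totient n := Nat.totient_dvd_of_dvd hmn
      exact Nat.Coprime.coprime_dvd_left h1 (Nat.Coprime.coprime_dvd_right h2 h)
    -- commute
    have hcomm : ∀ g ∈ (P : Subgroup G), ∀ k ∈ K, Commute g k := by
      intro g hg k hk
      have := htriv ⟨g, hg⟩
      have h2 : MulAut.conjNormal g (⟨k, hk⟩ : K) = (⟨k, hk⟩ : K) := by
        rw [show MulAut.conjNormal g = MulAut.conjNormal ((P : Subgroup G).subtype ⟨g, hg⟩) from rfl]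
        rw [show MulAut.conjNormal ((P : Subgroup G).subtype ⟨g, hg⟩) =
          (MulAut.conjNormal (G := G) (H := K)).comp (P : Subgroup G).subtype ⟨g, hg⟩ from rfl,
          this]
        rfl
      have h3 : g * k * g⁻¹ = k := congrArg Subtype.val h2
      exact mul_inv_eq_iff_eq_mul.mp h3
    -- generators
    obtain ⟨k0, hk0⟩ := hKcyc.exists_generator
    obtain ⟨p0, hp0⟩ := (inferInstance : IsCyclic (P : Subgroup G)).exists_generator
    have hok : orderOf (k0 : G) = m := by
      rw [orderOf_submonoid, orderOf_eq_card_of_forall_mem_zpowers hk0]; exact hcardK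
    have hop : orderOf (p0 : G) = p := by
      rw [orderOf_submonoid, orderOf_eq_card_of_forall_mem_zpowers hp0]; exact hcardP
    have hcpk : Commute (p0 : G) (k0 : G) := hcomm p0 p0.2 k0 k0.2
    have horder : orderOf ((p0 : G) * (k0 : G)) = n := by
      rw [Commute.orderOf_mul_eq_mul_orderOf_of_coprime hcpk (by rw [hok, hop]; exact hcop),
        hok, hop, hm]
    exact isCyclic_of_orderOf_eq_card _ (by rw [horder, hcardG])

/-- A positive integer `n` is a cyclic number (every group of order `n` is cyclic)
iff `gcd(n, φ(n)) = 1`. -/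
theorem cyclic_number_iff_coprime_totient (n : ℕ) (hn : 0 < n) :
    (∀ (G : Type) [Group G] [Fintype G], Fintype.card G = n → IsCyclic G) ↔
      Nat.gcd n (Nat.totient n) = 1 := by
  constructor
  · intro hall
    by_contra hg
    obtain ⟨r, hr, hrn, hcase⟩ := aux_decomp hn hg
    rcases hcase with hA | ⟨q, hq, hqn, hdvd⟩
    · obtain ⟨G, _, _, hcard, hnc⟩ := aux_caseA hn hr hA
      exact hnc (hall G hcard)
    · have hne : r ≠ q := by
        rintro rfl
        have h2 := hr.two_le
        have h1 : 0 < r - 1 := Nat.pos_of_ne_zero (by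
          rintro h0
          rw [h0] at hdvd
          simp at hdvd
          omega)
        have := Nat.le_of_dvd h1 hdvd
        omega
      have hrqn : r * q ∣ n :=
        Nat.Coprime.mul_dvd_of_dvd_of_dvd ((Nat.coprime_primes hr hq).mpr hne) hrn hqn
      obtain ⟨G, _, _, hcard, hnc⟩ := aux_caseB hn hr hq hrqn hdvd
      exact hnc (hall G hcard)
  · intro h G _ _ hcard
    exact cyclic_of_coprime_totient n h G hcard
end

section
/- A positive integer n is an abelian number (i.e., every group of order n is abelian) if and only if n is cube-free and has nilpotent factorization. -/
/-- A positive integer `n` with prime factorization `p₁^a₁ ⋯ p_r^a_r` has *nilpotent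
factorization* if `pᵢ ∤ p_j^k - 1` for all `i ≠ j` and all `1 ≤ k ≤ a_j`. -/
def HasNilpotentFactorization (n : ℕ) : Prop :=
  ∀ p ∈ n.primeFactors, ∀ q ∈ n.primeFactors, p ≠ q →
    ∀ k : ℕ, 1 ≤ k → k ≤ n.factorization q → ¬ (p ∣ q ^ k - 1)

open Subgroup MulAction


/-- Key counting lemma: if an automorphism of prime order `r ≠ q` preserves a subgroup `Q`
of order `q ^ c` and moves some element of it, then `r ∣ q ^ k - 1` for some `1 ≤ k ≤ c`. -/
lemma aut_counting {K : Type} [Group K] [Finite K] (σ : MulAut K) {r : ℕ} (hr : r.Prime)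
    (hσr : orderOf σ = r) {Q : Subgroup K} {q c : ℕ} (hq : q.Prime)
    (hQc : Nat.card Q = q ^ c) (hrq : r ≠ q)
    (hmap : ∀ y, y ∈ Q → σ y ∈ Q) :
    (∀ y ∈ Q, σ y = y) ∨ ∃ k, 1 ≤ k ∧ k ≤ c ∧ r ∣ q ^ k - 1 := by
  by_cases hfix : ∀ y ∈ Q, σ y = y
  · exact Or.inl hfix
  right
  push_neg at hfix
  obtain ⟨y₀, hy₀Q, hy₀⟩ := hfix
  -- σ maps Q onto Q
  have hQeq : Subgroup.map σ.toMonoidHom Q = Q := by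
    refine Subgroup.eq_of_le_of_card_ge ?_ ?_
    · rintro x ⟨y, hy, rfl⟩; exact hmap y hy
    · exact le_of_eq (Nat.card_congr (Q.equivMapOfInjective σ.toMonoidHom σ.injective).toEquiv)
  have hsymm_mem : ∀ y : K, y ∈ Q → σ.symm y ∈ Q := by
    intro y hy
    have : y ∈ Subgroup.map σ.toMonoidHom Q := hQeq.symm ▸ hy
    rcases this with ⟨z, hz, hzy⟩
    have : σ.symm y = z := by
      rw [← hzy]; exact σ.symm_apply_apply z
    rwa [this]
  -- restrict σ to Q
  let σ' : MulAut ↥Q :=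
    { toFun := fun y => ⟨σ y, hmap y y.2⟩
      invFun := fun y => ⟨σ.symm y, hsymm_mem y y.2⟩
      left_inv := fun y => by
        apply Subtype.ext
        exact σ.symm_apply_apply (y : K)
      right_inv := fun y => by
        apply Subtype.ext
        exact σ.apply_symm_apply (y : K)
      map_mul' := fun a b => by
        apply Subtype.ext
        exact map_mul σ (a : K) (b : K) }
  have hσ'apply : ∀ (y : ↥Q), ((σ' y : ↥Q) : K) = σ (y : K) := fun y => rfl
  have hσ'pow : ∀ (j : ℕ) (y : ↥Q), (((σ' ^ j) y : ↥Q) : K) = (σ ^ j) (y : K) := by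
    intro j
    induction j with
    | zero => intro y; rfl
    | succ j ih =>
      intro y
      rw [pow_succ, pow_succ, MulAut.mul_apply, MulAut.mul_apply, ih (σ' y), hσ'apply]
  have hσpow1 : σ ^ r = 1 := by rw [← hσr]; exact pow_orderOf_eq_one σ
  have hσ'r : σ' ^ r = 1 := by
    ext y
    have h2 := hσ'pow r y
    rw [hσpow1] at h2
    simpa using h2
  have hσ'ne : σ' ≠ 1 := by
    intro h
    apply hy₀
    have h2 := congrArg (fun (e : MulAut ↥Q) => ((e ⟨y₀, hy₀Q⟩ : ↥Q) : K)) h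
    simpa [hσ'apply] using h2
  have hordσ' : orderOf σ' = r := by
    have hdvd : orderOf σ' ∣ r := orderOf_dvd_of_pow_eq_one hσ'r
    rcases (Nat.dvd_prime hr).mp hdvd with h1 | h1
    · exact absurd (orderOf_eq_one_iff.mp h1) hσ'ne
    · exact h1
  -- the cyclic group generated by σ' acting on Q
  haveI : Fact r.Prime := ⟨hr⟩
  have hS : IsPGroup r (Subgroup.zpowers σ') :=
    IsPGroup.of_card (by rw [Nat.card_zpowers, hordσ', pow_one])
  have hmod := hS.card_modEq_card_fixedPoints ↥Q
  -- the fixed points form a subgroup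
  let F : Subgroup ↥Q := FixedPoints.subgroup (Subgroup.zpowers σ') ↥Q
  have hcardF : Nat.card (fixedPoints (Subgroup.zpowers σ') ↥Q) = Nat.card F := rfl
  rw [hcardF, hQc] at hmod
  have hFdvd : Nat.card F ∣ q ^ c := hQc ▸ F.card_subgroup_dvd_card
  obtain ⟨j, hjc, hj⟩ := (Nat.dvd_prime_pow hq).mp hFdvd
  have hFne : Nat.card F ≠ q ^ c := by
    intro h
    have hFtop : F = ⊤ := F.eq_top_of_card_eq (by rw [h, hQc])
    apply hy₀
    have hmem : (⟨y₀, hy₀Q⟩ : ↥Q) ∈ F := hFtop ▸ Subgroup.mem_top _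
    have h3 : (⟨σ', Subgroup.mem_zpowers σ'⟩ : Subgroup.zpowers σ') • (⟨y₀, hy₀Q⟩ : ↥Q)
        = (⟨y₀, hy₀Q⟩ : ↥Q) := hmem _
    have h4 : σ' ⟨y₀, hy₀Q⟩ = ⟨y₀, hy₀Q⟩ := h3
    exact congrArg Subtype.val h4
  have hjlt : j < c := by
    rcases lt_or_eq_of_le hjc with h | h
    · exact h
    · exact absurd (hj.trans (by rw [h])) hFne
  have hle : q ^ j ≤ q ^ c := Nat.pow_le_pow_right hq.one_lt.le hjc
  have hdvd : r ∣ q ^ c - q ^ j := by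
    rw [hj] at hmod
    exact (Nat.modEq_iff_dvd' hle).mp hmod.symm
  have hfactor : q ^ j * (q ^ (c - j) - 1) = q ^ c - q ^ j := by
    rw [Nat.mul_sub, mul_one, ← pow_add]
    congr 2
    omega
  rw [← hfactor] at hdvd
  have hcop : r.Coprime (q ^ j) :=
    Nat.Coprime.pow_right j ((Nat.coprime_primes hr hq).mpr hrq)
  exact ⟨c - j, by omega, by omega, hcop.dvd_of_dvd_mul_left hdvd⟩

lemma norm_le_cent {G : Type} [Group G] [Fintype G] {n p : ℕ} (hcard : Fintype.card G = n)
    (hn : 0 < n) (hcube : ∀ r : ℕ, r.Prime → ¬ (r ^ 3 ∣ n))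
    (hnf : HasNilpotentFactorization n) (hp : p.Prime) [Fact p.Prime] (hpn : p ∣ n)
    (P : Sylow p G) : Subgroup.normalizer ((↑P : Subgroup G) : Set G) ≤ Subgroup.centralizer ((↑P : Subgroup G) : Set G) := by
  have hncard : Nat.card G = n := by rw [Nat.card_eq_fintype_card, hcard]
  set a := n.factorization p with ha
  have hn0 : n ≠ 0 := hn.ne'
  have ha1 : 1 ≤ a := by
    rw [ha]
    exact (Nat.Prime.factorization_pos_of_dvd hp hn0 hpn)
  have ha2 : a ≤ 2 := by
    by_contra h
    exact hcube p hp ((hp.pow_dvd_iff_le_factorization hn0).mpr (by omega))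
  have cardP : Nat.card ↥(↑P : Subgroup G) = p ^ a := by
    rw [P.card_eq_multiplicity, hncard]
  set N := Subgroup.normalizer ((↑P : Subgroup G) : Set G) with hN
  set P' := (↑P : Subgroup G).subgroupOf N with hP'
  haveI : P'.Normal := Subgroup.normal_in_normalizer
  have cardP' : Nat.card ↥P' = p ^ a := by
    rw [← cardP]
    exact Nat.card_congr (Subgroup.subgroupOfEquivOfLe Subgroup.le_normalizer).toEquiv
  -- P' is abelian
  have hPab : ∀ x y : ↥P', x * y = y * x := by
    rcases (by omega : a = 1 ∨ a = 2) with h | h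
    · rw [h, pow_one] at cardP'
      haveI := isCyclic_of_prime_card cardP'
      letI : CommGroup ↥P' := IsCyclic.commGroup
      exact fun x y => mul_comm x y
    · rw [h] at cardP'
      exact IsPGroup.commutative_of_card_eq_prime_sq cardP'
  set f : ↥N →* MulAut ↥P' := MulAut.conjNormal with hf
  -- P' is in the kernel of f
  have hker : ∀ x : ↥N, x ∈ P' → f x = 1 := by
    intro x hx
    ext y
    have hxy : x * (y : ↥N) = (y : ↥N) * x := congrArg Subtype.val (hPab ⟨x, hx⟩ y)
    have key : ((f x y : ↥P') : ↥N) = (y : ↥N) := by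
      rw [MulAut.conjNormal_apply, hxy, mul_assoc, mul_inv_cancel, mul_one]
    simpa using congrArg Subtype.val key
  -- p does not divide the cardinality of range f
  have hrange : ¬ p ∣ Nat.card ↥f.range := by
    intro hpd
    have h1 : Nat.card ↥N = Nat.card (↥N ⧸ f.ker) * Nat.card ↥f.ker :=
      Subgroup.card_eq_card_quotient_mul_card_subgroup f.ker
    have h2 : Nat.card (↥N ⧸ f.ker) = Nat.card ↥f.range :=
      Nat.card_congr (QuotientGroup.quotientKerEquivRange f).toEquiv
    have h3 : p ^ a ∣ Nat.card ↥f.ker := by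
      rw [← cardP']
      exact Subgroup.card_dvd_of_le (fun x hx => hker x hx)
    have h4 : Nat.card ↥N ∣ n := hncard ▸ Subgroup.card_subgroup_dvd_card N
    have h5 : p ^ (a + 1) ∣ n := by
      refine dvd_trans ?_ h4
      rw [h1, h2, pow_succ, mul_comm (p^a) p]
      exact mul_dvd_mul hpd h3
    have := (hp.pow_dvd_iff_le_factorization hn0).mp h5
    omega
  -- every conjugation is trivial
  have hfg : ∀ g : ↥N, f g = 1 := by
    intro g
    by_contra hne
    have hd0 : orderOf (f g) ≠ 0 := by
      intro h0
      have := Subgroup.orderOf_dvd_natCard f.range ((MonoidHom.mem_range.mpr ⟨g, rfl⟩))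
      rw [h0] at this
      have : Nat.card ↥f.range = 0 := Nat.eq_zero_of_zero_dvd this
      exact hrange (this ▸ dvd_zero p)
    have hd1 : orderOf (f g) ≠ 1 := fun h => hne (orderOf_eq_one_iff.mp h)
    set r := (orderOf (f g)).minFac with hr
    have hrprime : r.Prime := Nat.minFac_prime hd1
    have hrd : r ∣ orderOf (f g) := Nat.minFac_dvd _
    have hordσ : orderOf ((f g) ^ (orderOf (f g) / r)) = r := orderOf_pow_orderOf_div hd0 hrd
    have hdr : orderOf (f g) ∣ Nat.card ↥f.range :=
      Subgroup.orderOf_dvd_natCard f.range ((MonoidHom.mem_range.mpr ⟨g, rfl⟩))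
    have hrp : r ≠ p := fun h => hrange (h ▸ hrd.trans hdr)
    have hrn : r ∣ n := by
      have h1 : Nat.card ↥N = Nat.card (↥N ⧸ f.ker) * Nat.card ↥f.ker :=
        Subgroup.card_eq_card_quotient_mul_card_subgroup f.ker
      have h2 : Nat.card (↥N ⧸ f.ker) = Nat.card ↥f.range :=
        Nat.card_congr (QuotientGroup.quotientKerEquivRange f).toEquiv
      have h4 : Nat.card ↥N ∣ n := hncard ▸ Subgroup.card_subgroup_dvd_card N
      have h5 : Nat.card ↥f.range ∣ n := by
        refine dvd_trans ?_ h4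
        rw [h1, h2]
        exact Dvd.intro _ rfl
      exact ((hrd.trans hdr).trans h5)
    have hmemp : p ∈ n.primeFactors := Nat.mem_primeFactors.mpr ⟨hp, hpn, hn0⟩
    have hmemr : r ∈ n.primeFactors := Nat.mem_primeFactors.mpr ⟨hrprime, hrn, hn0⟩
    rcases aut_counting ((f g) ^ (orderOf (f g) / r)) hrprime hordσ (Q := (⊤ : Subgroup ↥P')) hp
        (by rw [Subgroup.card_top, cardP']) hrp (fun y _ => Subgroup.mem_top _) with hfix | ⟨k, hk1, hk2, hkdvd⟩
    · have : (f g) ^ (orderOf (f g) / r) = 1 := by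
        ext y
        rw [hfix y (Subgroup.mem_top y)]
        simp
      rw [this, orderOf_one] at hordσ
      exact hrprime.one_lt.ne' hordσ.symm
    · exact hnf r hmemr p hmemp hrp k hk1 (by omega) hkdvd
  -- conclude
  intro g hg
  rw [Subgroup.mem_centralizer_iff]
  intro x hx
  have hxN : x ∈ N := Subgroup.le_normalizer hx
  have hx' : (⟨x, hxN⟩ : ↥N) ∈ P' := Subgroup.mem_subgroupOf.mpr hx
  have := congrArg (fun (e : MulAut ↥P') => ((e ⟨⟨x, hxN⟩, hx'⟩ : ↥P') : ↥N)) (hfg ⟨g, hg⟩)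
  simp only [MulAut.conjNormal_apply, MulAut.one_apply] at this
  have h6 : (⟨g, hg⟩ : ↥N) * ⟨x, hxN⟩ * (⟨g, hg⟩ : ↥N)⁻¹ = ⟨x, hxN⟩ := by
    exact_mod_cast this
  have h7 : (⟨g, hg⟩ : ↥N) * ⟨x, hxN⟩ = (⟨x, hxN⟩ : ↥N) * ⟨g, hg⟩ := by
    have h8 := congrArg (fun z => z * (⟨g, hg⟩ : ↥N)) h6
    simpa [mul_assoc] using h8
  have h8 : g * x = x * g := by simpa using congrArg Subtype.val h7
  exact h8.symm

lemma nilfac_of_dvd {n d : ℕ} (hn : n ≠ 0) (hd : d ∣ n) (h : HasNilpotentFactorization n) :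
    HasNilpotentFactorization d := by
  intro p hp q hq hpq k hk1 hk2
  have hd0 : d ≠ 0 := fun h0 => hn (Nat.eq_zero_of_zero_dvd (h0 ▸ hd))
  refine h p (Nat.primeFactors_mono hd hn hp) q (Nat.primeFactors_mono hd hn hq) hpq k hk1 ?_
  exact hk2.trans (((Nat.factorization_le_iff_dvd hd0 hn).mpr hd) q)

theorem abelian_of_conditions : ∀ n : ℕ, 0 < n → (∀ p : ℕ, p.Prime → ¬ (p ^ 3 ∣ n)) →
    HasNilpotentFactorization n → ∀ (G : Type) [Group G] [Fintype G], Fintype.card G = n →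
    ∀ x y : G, x * y = y * x := by
  intro n
  induction n using Nat.strong_induction_on with
  | _ n IH =>
  intro hn hcube hnf G _ _ hcard
  have hncard : Nat.card G = n := by rw [Nat.card_eq_fintype_card, hcard]
  have hn0 : n ≠ 0 := hn.ne'
  by_cases hn1 : n = 1
  · haveI : Subsingleton G := by
      rw [← Fintype.card_le_one_iff_subsingleton, hcard, hn1]
    exact fun x y => Subsingleton.elim _ _
  -- the smallest prime
  set p := n.minFac with hpdef
  have hp : p.Prime := Nat.minFac_prime hn1
  haveI : Fact p.Prime := ⟨hp⟩
  have hpn : p ∣ n := Nat.minFac_dvd n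
  set a := n.factorization p with hadef
  have ha1 : 1 ≤ a := Nat.Prime.factorization_pos_of_dvd hp hn0 hpn
  have ha2 : a ≤ 2 := by
    by_contra h
    exact hcube p hp ((hp.pow_dvd_iff_le_factorization hn0).mpr (by omega))
  haveI : Nonempty (Sylow p G) := inferInstance
  obtain ⟨P⟩ : Nonempty (Sylow p G) := inferInstance
  have cardP : Nat.card ↥(↑P : Subgroup G) = p ^ a := by
    rw [P.card_eq_multiplicity, hncard]
  have hNC := norm_le_cent hcard hn hcube hnf hp hpn P
  set K := (MonoidHom.transferSylow P hNC).ker with hKdef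
  have hcompl : K.IsComplement' ↑P := MonoidHom.ker_transferSylow_isComplement' P hNC
  set m := Nat.card ↥K with hmdef
  have hm : m * p ^ a = n := by
    rw [hmdef, ← cardP, hcompl.card_mul, hncard]
  have hm0 : m ≠ 0 := Nat.card_pos.ne'
  have hmdvd : m ∣ n := Dvd.intro _ hm
  have hpm : ¬ p ∣ m := by
    intro hdvd
    have : p ^ (a + 1) ∣ n := by
      rw [← hm, pow_succ, mul_comm (p ^ a) p]
      exact mul_dvd_mul hdvd dvd_rfl
    have := (hp.pow_dvd_iff_le_factorization hn0).mp this
    omega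
  have hmlt : m < n := by
    have hpa : 1 < p ^ a := Nat.one_lt_pow (by omega) hp.one_lt
    have := (Nat.lt_mul_iff_one_lt_right (Nat.pos_of_ne_zero hm0)).mpr hpa
    omega
  -- K is abelian by induction
  letI : Fintype ↥K := Fintype.ofFinite _
  have hcardK : Fintype.card ↥K = m := by rw [← Nat.card_eq_fintype_card]
  have hKab : ∀ x y : ↥K, x * y = y * x :=
    IH m hmlt (Nat.pos_of_ne_zero hm0)
      (fun r hr hdvd => hcube r hr (hdvd.trans hmdvd))
      (nilfac_of_dvd hn0 hmdvd hnf) ↥K hcardK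
  -- P is abelian
  have hPab : ∀ x y : ↥(↑P : Subgroup G), x * y = y * x := by
    rcases (by omega : a = 1 ∨ a = 2) with h | h
    · rw [h, pow_one] at cardP
      haveI := isCyclic_of_prime_card cardP
      letI : CommGroup ↥(↑P : Subgroup G) := IsCyclic.commGroup
      exact fun x y => mul_comm x y
    · rw [h] at cardP
      exact IsPGroup.commutative_of_card_eq_prime_sq cardP
  letI : CommGroup ↥K := { (inferInstance : Group ↥K) with mul_comm := hKab }
  -- elements of P commute with elements of K
  have hmix : ∀ x ∈ (↑P : Subgroup G), ∀ k ∈ K, x * k = k * x := by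
    intro x hx
    set f' : G →* MulAut ↥K := MulAut.conjNormal with hf'
    have hf'x : f' x = 1 := by
      by_contra hne
      have hd1 : orderOf (f' x) ≠ 1 := fun h => hne (orderOf_eq_one_iff.mp h)
      have hdvd1 : orderOf (f' x) ∣ p ^ a := by
        refine (orderOf_map_dvd f' x).trans ?_
        exact cardP ▸ Subgroup.orderOf_dvd_natCard _ hx
      have hd0 : orderOf (f' x) ≠ 0 := by
        intro h0
        rw [h0] at hdvd1
        exact pow_ne_zero a hp.pos.ne' (Nat.eq_zero_of_zero_dvd hdvd1)
      have hpd : p ∣ orderOf (f' x) := by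
        obtain ⟨i, hia, hi⟩ := (Nat.dvd_prime_pow hp).mp hdvd1
        have hi1 : 1 ≤ i := by
          rcases Nat.eq_zero_or_pos i with h0 | h1
          · rw [h0, pow_zero] at hi; exact absurd hi hd1
          · exact h1
        rw [hi]
        exact dvd_pow_self p (by omega)
      have hordσ : orderOf ((f' x) ^ (orderOf (f' x) / p)) = p :=
        orderOf_pow_orderOf_div hd0 hpd
      set σ := (f' x) ^ (orderOf (f' x) / p) with hσdef
      -- fixed points of σ
      set F : Subgroup ↥K :=
        { carrier := {y | σ y = y}
          one_mem' := map_one σ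
          mul_mem' := fun {u v} hu hv => by
            show σ (u * v) = u * v
            rw [map_mul, hu, hv]
          inv_mem' := fun {u} hu => by
            show σ u⁻¹ = u⁻¹
            rw [map_inv, hu] } with hFdef
      have hcardF0 : Nat.card ↥F ≠ 0 := Nat.card_pos.ne'
      -- each Sylow subgroup of K is contained in F
      have hsylF : ∀ q : ℕ, q.Prime → q ∣ m → ∀ hq : Fact q.Prime, ∀ Qs : Sylow q ↥K,
          (↑Qs : Subgroup ↥K) ≤ F := by
        intro q hq hqm _ Qs
        have hpq : p ≠ q := fun h => hpm (h ▸ hqm)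
        have cardQs : Nat.card ↥(↑Qs : Subgroup ↥K) = q ^ m.factorization q := by
          rw [Qs.card_eq_multiplicity, hmdef]
        -- σ preserves Qs
        have hrange : (↑Qs : Subgroup ↥K) ≤ σ.toMonoidHom.range := by
          intro y _
          exact ⟨σ.symm y, σ.apply_symm_apply y⟩
        set Qs' : Sylow q ↥K := Qs.comapOfInjective σ.toMonoidHom σ.injective hrange with hQs'
        haveI : Unique (Sylow q ↥K) := Sylow.unique_of_normal Qs inferInstance
        have hQQ : Qs' = Qs := Subsingleton.elim _ _
        have hmapQ : ∀ y, y ∈ (↑Qs : Subgroup ↥K) → σ y ∈ (↑Qs : Subgroup ↥K) := by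
          intro y hy
          have h1 : (↑Qs' : Subgroup ↥K) = Subgroup.comap σ.toMonoidHom ↑Qs :=
            Qs.coe_comapOfInjective _ σ.injective hrange
          rw [hQQ] at h1
          rw [h1] at hy
          exact hy
        rcases aut_counting σ hp hordσ hq cardQs hpq hmapQ with hfix | ⟨k, hk1, hk2, hkdvd⟩
        · exact fun y hy => hfix y hy
        · exfalso
          have hqn : q ∣ n := hqm.trans hmdvd
          have hmemp : p ∈ n.primeFactors := Nat.mem_primeFactors.mpr ⟨hp, hpn, hn0⟩
          have hmemq : q ∈ n.primeFactors := Nat.mem_primeFactors.mpr ⟨hq, hqn, hn0⟩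
          have hk3 : k ≤ n.factorization q :=
            hk2.trans (((Nat.factorization_le_iff_dvd hm0 hn0).mpr hmdvd) q)
          exact hnf p hmemp q hmemq hpq k hk1 hk3 hkdvd
      -- m divides the cardinality of F
      have hmF : m ∣ Nat.card ↥F := by
        rw [← Nat.factorization_le_iff_dvd hm0 hcardF0, Finsupp.le_iff]
        intro q hq
        rw [Nat.support_factorization] at hq
        obtain ⟨hqprime, hqm, -⟩ := Nat.mem_primeFactors.mp hq
        haveI : Fact q.Prime := ⟨hqprime⟩
        obtain ⟨Qs⟩ : Nonempty (Sylow q ↥K) := inferInstance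
        have hle := hsylF q hqprime hqm ⟨hqprime⟩ Qs
        have hdvd : q ^ m.factorization q ∣ Nat.card ↥F := by
          have := Subgroup.card_dvd_of_le hle
          rwa [Qs.card_eq_multiplicity, ← hmdef] at this
        exact (hqprime.pow_dvd_iff_le_factorization hcardF0).mp hdvd
      have hFtop : F = ⊤ := by
        refine F.eq_top_of_card_eq ?_
        have h1 : Nat.card ↥F ∣ m := hmdef ▸ F.card_subgroup_dvd_card
        rw [← hmdef]
        exact Nat.dvd_antisymm h1 hmF
      have hσ1 : σ = 1 := by
        ext y
        have : y ∈ F := hFtop ▸ Subgroup.mem_top y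
        have h2 : σ y = y := this
        rw [h2]
        simp
      rw [hσ1, orderOf_one] at hordσ
      exact hp.one_lt.ne' hordσ.symm
    intro k hk
    have := congrArg (fun (e : MulAut ↥K) => ((e ⟨k, hk⟩ : ↥K) : G)) hf'x
    rw [hf'] at this
    simp only [MulAut.conjNormal_apply, MulAut.one_apply] at this
    -- this : x * k * x⁻¹ = k
    have h3 : x * k = k * x := by
      have h4 := congrArg (fun z => z * x) this
      simpa [mul_assoc] using h4
    exact h3
  -- conclude
  intro x y
  obtain ⟨⟨⟨k1, hk1⟩, ⟨p1, hp1⟩⟩, hx⟩ := hcompl.2 x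
  obtain ⟨⟨⟨k2, hk2⟩, ⟨p2, hp2⟩⟩, hy⟩ := hcompl.2 y
  simp only at hx hy
  have ck : k1 * k2 = k2 * k1 := congrArg Subtype.val (hKab ⟨k1, hk1⟩ ⟨k2, hk2⟩)
  have cp : p1 * p2 = p2 * p1 := congrArg Subtype.val (hPab ⟨p1, hp1⟩ ⟨p2, hp2⟩)
  have c12 : p1 * k2 = k2 * p1 := (hmix p1 hp1 k2 hk2).symm ▸ (hmix p1 hp1 k2 hk2)
  have c21 : p2 * k1 = k1 * p2 := hmix p2 hp2 k1 hk1
  rw [← hx, ← hy]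
  calc k1 * p1 * (k2 * p2) = k1 * (p1 * k2) * p2 := by group
  _ = k1 * (k2 * p1) * p2 := by rw [hmix p1 hp1 k2 hk2]
  _ = (k1 * k2) * (p1 * p2) := by group
  _ = (k2 * k1) * (p2 * p1) := by rw [ck, cp]
  _ = k2 * (k1 * p2) * p1 := by group
  _ = k2 * (p2 * k1) * p1 := by rw [c21]
  _ = k2 * p2 * (k1 * p1) := by group

open SemidirectProduct

/-- equivalence of a semidirect product with the product type -/
def sdpEquiv {N G : Type} [Group N] [Group G] (φ : G →* MulAut N) :
    (N ⋊[φ] G) ≃ N × G where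
  toFun x := (x.left, x.right)
  invFun a := ⟨a.1, a.2⟩
  left_inv x := rfl
  right_inv a := rfl

noncomputable instance sdpFintype {N G : Type} [Group N] [Group G] (φ : G →* MulAut N)
    [Finite N] [Finite G] : Fintype (N ⋊[φ] G) := by
  haveI : Finite (N ⋊[φ] G) := Finite.of_equiv _ (sdpEquiv φ).symm
  exact Fintype.ofFinite _

lemma sdp_card {N G : Type} [Group N] [Group G] (φ : G →* MulAut N)
    [Finite N] [Finite G] : Nat.card (N ⋊[φ] G) = Nat.card N * Nat.card G := by
  rw [Nat.card_congr (sdpEquiv φ), Nat.card_prod]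

/-- The Heisenberg-type nonabelian group of order `p ^ 3`. -/
lemma cube_nonabelian (p : ℕ) (hp : p.Prime) :
    ∃ (H : Type) (_ : Group H) (_ : Fintype H), Fintype.card H = p ^ 3 ∧
      ∃ x y : H, x * y ≠ y * x := by
  haveI : NeZero p := ⟨hp.pos.ne'⟩
  haveI : Fact (1 < p) := ⟨hp.one_lt⟩
  -- the shear automorphism
  let shear : ZMod p → (ZMod p × ZMod p) ≃+ (ZMod p × ZMod p) := fun c =>
    { toFun := fun x => (x.1 + c * x.2, x.2)
      invFun := fun x => (x.1 - c * x.2, x.2)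
      left_inv := fun x => by simp [Prod.ext_iff]
      right_inv := fun x => by simp [Prod.ext_iff]
      map_add' := fun x y => by simp [Prod.ext_iff]; ring }
  let φ : Multiplicative (ZMod p) →* MulAut (Multiplicative (ZMod p × ZMod p)) :=
    MonoidHom.mk' (fun c => AddEquiv.toMultiplicative (shear (Multiplicative.toAdd c)))
      (by
        intro a b
        ext1 z
        show Multiplicative.ofAdd ((shear (Multiplicative.toAdd (a * b))) _) = _
        simp only [toAdd_mul]
        show Multiplicative.ofAdd _ = Multiplicative.ofAdd ((shear _) ((shear _) _))
        apply congrArg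
        show (((Multiplicative.toAdd z).1 + (Multiplicative.toAdd a + Multiplicative.toAdd b) *
            (Multiplicative.toAdd z).2, (Multiplicative.toAdd z).2) : ZMod p × ZMod p) =
          (((Multiplicative.toAdd z).1 + Multiplicative.toAdd b * (Multiplicative.toAdd z).2) +
            Multiplicative.toAdd a * (Multiplicative.toAdd z).2, (Multiplicative.toAdd z).2)
        rw [Prod.ext_iff]
        refine ⟨by ring, rfl⟩)
  refine ⟨(Multiplicative (ZMod p × ZMod p)) ⋊[φ] (Multiplicative (ZMod p)),
    inferInstance, inferInstance, ?_, ?_⟩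
  · rw [← Nat.card_eq_fintype_card, sdp_card]
    simp only [Nat.card_eq_fintype_card]
    rw [Fintype.card_multiplicative, Fintype.card_multiplicative, Fintype.card_prod, ZMod.card]
    ring
  · refine ⟨inl (Multiplicative.ofAdd ((0 : ZMod p), (1 : ZMod p))),
      inr (Multiplicative.ofAdd (1 : ZMod p)), ?_⟩
    intro h
    have hleft := congrArg SemidirectProduct.left h
    simp only [mul_left, left_inl, left_inr, right_inl, right_inr, map_one, MulAut.one_apply,
      mul_one, one_mul] at hleft
    -- hleft : ofAdd (0,1) = φ (ofAdd 1) (ofAdd (0,1))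
    have : ((0 : ZMod p), (1 : ZMod p)) = ((0 : ZMod p) + 1 * 1, (1 : ZMod p)) := by
      have := congrArg Multiplicative.toAdd hleft
      exact this
    rw [Prod.ext_iff] at this
    simp at this

set_option maxHeartbeats 1000000 in
lemma pq_nonabelian (p q k : ℕ) (hp : p.Prime) (hq : q.Prime) (hk : k ≠ 0)
    (hdvd : p ∣ q ^ k - 1) :
    ∃ (H : Type) (_ : Group H) (_ : Fintype H), Fintype.card H = q ^ k * p ∧
      ∃ x y : H, x * y ≠ y * x := by
  haveI : Fact q.Prime := ⟨hq⟩
  haveI : Fact p.Prime := ⟨hp⟩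
  haveI : NeZero p := ⟨hp.pos.ne'⟩
  set F := GaloisField q k with hF
  haveI : Finite F := inferInstance
  letI : Fintype F := Fintype.ofFinite F
  letI : DecidableEq F := Classical.decEq F
  have hcardF : Nat.card F = q ^ k := GaloisField.card q k hk
  -- a unit of order p
  have hpu : p ∣ Fintype.card Fˣ := by
    classical
    rw [Fintype.card_units, ← Nat.card_eq_fintype_card, hcardF]
    exact hdvd
  obtain ⟨u, hu⟩ := exists_prime_orderOf_dvd_card p hpu
  have hup : u ^ p = 1 := by rw [← hu]; exact pow_orderOf_eq_one u
  -- the action of ZMod p on F by multiplication by u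
  have key : ∀ (x y : ℕ), x ≡ y [MOD p] → u ^ x = u ^ y := by
    intro x y hxy
    rw [pow_eq_pow_iff_modEq, hu]
    exact hxy
  let φ : Multiplicative (ZMod p) →* MulAut (Multiplicative F) :=
    MonoidHom.mk'
      (fun c => AddEquiv.toMultiplicative
        ((DistribMulAction.toAddAut Fˣ F) (u ^ (Multiplicative.toAdd c).val)))
      (by
        intro a b
        ext z
        apply congrArg Multiplicative.toAdd
        show (u ^ (Multiplicative.toAdd (a * b)).val : Fˣ) • (Multiplicative.toAdd z : F) =
          (u ^ (Multiplicative.toAdd a).val : Fˣ) •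
            ((u ^ (Multiplicative.toAdd b).val : Fˣ) • (Multiplicative.toAdd z : F))
        rw [smul_smul, ← pow_add]
        congr 1
        apply key
        show (Multiplicative.toAdd a + Multiplicative.toAdd b).val ≡ _ [MOD p]
        rw [ZMod.val_add]
        exact Nat.mod_modEq _ p)
  refine ⟨(Multiplicative F) ⋊[φ] (Multiplicative (ZMod p)), inferInstance, inferInstance, ?_, ?_⟩
  · rw [← Nat.card_eq_fintype_card, sdp_card]
    rw [show Nat.card (Multiplicative F) = Nat.card F from rfl, hcardF]
    rw [show Nat.card (Multiplicative (ZMod p)) = Nat.card (ZMod p) from rfl]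
    rw [Nat.card_eq_fintype_card, ZMod.card]
  · refine ⟨inl (Multiplicative.ofAdd (1 : F)), inr (Multiplicative.ofAdd (1 : ZMod p)), ?_⟩
    intro h
    have hleft := congrArg SemidirectProduct.left h
    simp only [mul_left, left_inl, left_inr, right_inl, right_inr, map_one, MulAut.one_apply,
      mul_one, one_mul] at hleft
    have h2 : (1 : F) = (u ^ (Multiplicative.toAdd (Multiplicative.ofAdd (1 : ZMod p))).val : Fˣ) • (1 : F) :=
      congrArg Multiplicative.toAdd hleft
    rw [toAdd_ofAdd, ZMod.val_one, pow_one] at h2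
    have hu1 : u = 1 := Units.ext (by
      rw [Units.val_one]
      simpa [Units.smul_def] using h2.symm)
    rw [hu1, orderOf_one] at hu
    exact hp.one_lt.ne' hu.symm


lemma extend_nonabelian {n d : ℕ} (hn : 0 < n) (hd : d ∣ n)
    (hab : ∀ (G : Type) [Group G] [Fintype G], Fintype.card G = n → ∀ x y : G, x * y = y * x)
    (H : Type) [Group H] [Fintype H] (hcard : Fintype.card H = d)
    (x y : H) (hxy : x * y ≠ y * x) : False := by
  have hd0 : 0 < d := Nat.pos_of_dvd_of_pos hd hn
  have hm0 : 0 < n / d := Nat.div_pos (Nat.le_of_dvd hn hd) hd0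
  haveI : NeZero (n / d) := ⟨hm0.ne'⟩
  have hGcard : Fintype.card (H × Multiplicative (ZMod (n / d))) = n := by
    rw [Fintype.card_prod, hcard, Fintype.card_multiplicative, ZMod.card,
      Nat.mul_div_cancel' hd]
  have := hab (H × Multiplicative (ZMod (n / d))) hGcard (x, 1) (y, 1)
  rw [Prod.ext_iff] at this
  exact hxy this.1

/-- A positive integer `n` is an abelian number (every group of order `n` is abelian)
iff `n` is cube-free and has nilpotent factorization. -/
theorem abelian_number_iff_cubefree_nilpotentFactorization (n : ℕ) (hn : 0 < n) :
    (∀ (G : Type) [Group G] [Fintype G], Fintype.card G = n →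
        ∀ x y : G, x * y = y * x) ↔
      ((∀ p : ℕ, p.Prime → ¬ (p ^ 3 ∣ n)) ∧ HasNilpotentFactorization n) := by
  constructor
  · intro hab
    constructor
    · intro p hp hdvd
      obtain ⟨H, _, _, hcard, x, y, hxy⟩ := cube_nonabelian p hp
      exact extend_nonabelian hn hdvd hab H hcard x y hxy
    · intro p hpmem q hqmem hpq k hk1 hk2 hdvd
      have hn0 : n ≠ 0 := hn.ne'
      obtain ⟨hp, hpn, -⟩ := Nat.mem_primeFactors.mp hpmem
      obtain ⟨hq, hqn, -⟩ := Nat.mem_primeFactors.mp hqmem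
      have hqk : q ^ k ∣ n := (hq.pow_dvd_iff_le_factorization hn0).mpr hk2
      have hcop : (q ^ k).Coprime p :=
        Nat.Coprime.pow_left k ((Nat.coprime_primes hq hp).mpr (Ne.symm hpq))
      have hdn : q ^ k * p ∣ n := hcop.mul_dvd_of_dvd_of_dvd hqk hpn
      obtain ⟨H, _, _, hcard, x, y, hxy⟩ := pq_nonabelian p q k hp hq (by omega) hdvd
      exact extend_nonabelian hn hdn hab H hcard x y hxy
  · rintro ⟨hcube, hnf⟩
    exact abelian_of_conditions n hn hcube hnf
end

section
/- A positive integer n is a cyclic number (i.e., every group of order n is cyclic) if and only if n is square-free and has nilpotent factorization. -/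
open Subgroup

lemma sqfree_dvd_of_forall {a m : ℕ} (ha : Squarefree a) (hm : m ≠ 0)
    (h : ∀ p, p.Prime → p ∣ a → p ∣ m) : a ∣ m := by
  rw [← Nat.factorization_le_iff_dvd ha.ne_zero hm]
  intro p
  rcases Nat.eq_zero_or_pos (a.factorization p) with h0 | hpos
  · simp [h0]
  · have hp : p ∈ a.primeFactors := by
      rw [← Nat.support_factorization]; exact Finsupp.mem_support_iff.mpr hpos.ne'
    have hp1 : p.Prime := Nat.prime_of_mem_primeFactors hp
    have h1 : a.factorization p ≤ 1 := ha.natFactorization_le_one p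
    have h2 : 1 ≤ m.factorization p :=
      (hp1.factorization_pos_of_dvd hm (h p hp1 (Nat.dvd_of_mem_primeFactors hp)))
    omega

lemma exists_prime_dvd_sub_one_of_dvd_totient :
    ∀ m : ℕ, Squarefree m → ∀ r : ℕ, r.Prime → r ∣ m.totient →
      ∃ q : ℕ, q.Prime ∧ q ∣ m ∧ r ∣ q - 1 := by
  intro m
  induction m using Nat.strong_induction_on with
  | _ m ih =>
    intro hm r hr hdvd
    rcases eq_or_ne m 1 with rfl | hm1
    · simp only [Nat.totient_one, Nat.dvd_one] at hdvd
      exact absurd hdvd hr.ne_one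
    have hm0 : m ≠ 0 := hm.ne_zero
    set q := m.minFac with hq
    have hqp : q.Prime := Nat.minFac_prime hm1
    have hqdvd : q ∣ m := Nat.minFac_dvd m
    have hnd : ¬ q ∣ m / q := by
      intro hcontra
      have : q * q ∣ m := by
        have := Nat.mul_dvd_mul_left q hcontra
        rwa [Nat.mul_div_cancel' hqdvd] at this
      exact hqp.not_isUnit (hm q this)
    have hcop : Nat.Coprime q (m / q) := (Nat.Prime.coprime_iff_not_dvd hqp).mpr hnd
    have htot : m.totient = (q - 1) * (m / q).totient := by
      conv_lhs => rw [← Nat.mul_div_cancel' hqdvd]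
      rw [Nat.totient_mul hcop, Nat.totient_prime hqp]
    rw [htot] at hdvd
    rcases (Nat.Prime.dvd_mul hr).mp hdvd with h | h
    · exact ⟨q, hqp, hqdvd, h⟩
    · obtain ⟨q', hq'p, hq'dvd, hrd⟩ :=
        ih (m / q) (Nat.div_lt_self (Nat.pos_of_ne_zero hm0) hqp.one_lt)
          (hm.squarefree_of_dvd (Nat.div_dvd_of_dvd hqdvd)) r hr h
      exact ⟨q', hq'p, hq'dvd.trans (Nat.div_dvd_of_dvd hqdvd), hrd⟩

lemma isCyclic_of_comm_squarefree (G : Type) [Group G] [Fintype G]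
    (hcomm : ∀ a b : G, a * b = b * a) (hsq : Squarefree (Fintype.card G)) : IsCyclic G := by
  letI : CommGroup G := { (inferInstance : Group G) with mul_comm := hcomm }
  obtain ⟨g, hg⟩ := Monoid.exists_orderOf_eq_exponent (Monoid.ExponentExists.of_finite (G := G))
  have hdvd : Fintype.card G ∣ orderOf g := by
    rw [hg]
    refine sqfree_dvd_of_forall hsq Monoid.exponent_ne_zero_of_finite ?_
    intro p hp hpdvd
    haveI : Fact p.Prime := ⟨hp⟩
    obtain ⟨x, hx⟩ := exists_prime_orderOf_dvd_card p hpdvd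
    exact hx ▸ Monoid.order_dvd_exponent x
  have := orderOf_dvd_card (x := g)
  exact isCyclic_of_orderOf_eq_card g
    (by rw [Nat.card_eq_fintype_card]; exact Nat.dvd_antisymm this hdvd)

lemma key_cyclic : ∀ n : ℕ, ∀ (G : Type) [Group G] [Fintype G], Squarefree n →
    (∀ p q : ℕ, p.Prime → q.Prime → p ∣ n → q ∣ n → ¬ p ∣ q - 1) →
    Fintype.card G = n → IsCyclic G := by
  intro n
  induction n using Nat.strong_induction_on with
  | _ n ih =>
    intro G _ _ hsq hc hcard
    rcases eq_or_ne n 1 with rfl | hn1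
    · haveI : Subsingleton G := Fintype.card_le_one_iff_subsingleton.mp (le_of_eq hcard)
      exact isCyclic_of_subsingleton
    have hn0 : n ≠ 0 := hsq.ne_zero
    set p := n.minFac with hpdef
    have hp : p.Prime := Nat.minFac_prime hn1
    haveI : Fact p.Prime := ⟨hp⟩
    have hpn : p ∣ n := Nat.minFac_dvd n
    obtain ⟨P⟩ : Nonempty (Sylow p G) := inferInstance
    letI : Fintype (P : Subgroup G) := Fintype.ofFinite _
    have hfact : (Nat.card G).factorization p = 1 := by
      rw [Nat.card_eq_fintype_card, hcard]
      have h1 : n.factorization p ≤ 1 := hsq.natFactorization_le_one p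
      have h2 : 1 ≤ n.factorization p := hp.factorization_pos_of_dvd hn0 hpn
      omega
    have hcardP : Nat.card (P : Subgroup G) = p := by
      rw [Sylow.card_eq_multiplicity, hfact, pow_one]
    haveI hPcyc : IsCyclic (P : Subgroup G) := isCyclic_of_prime_card (p := p) hcardP
    -- N(P) ≤ C(P)
    have hker : ((P : Subgroup G).normalizerMonoidHom).ker = ⊤ := by
      set ψ := (P : Subgroup G).normalizerMonoidHom with hψ
      rw [← Subgroup.index_eq_one]
      have hd1 : ψ.ker.index ∣ p - 1 := by
        have h1 : ψ.ker.index ∣ Nat.card (MulAut (P : Subgroup G)) := by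
          rw [Subgroup.index, Nat.card_congr (QuotientGroup.quotientKerEquivRange ψ).toEquiv]
          exact Subgroup.card_subgroup_dvd_card _
        rwa [IsCyclic.card_mulAut, hcardP, Nat.totient_prime hp] at h1
      have hd2 : ψ.ker.index ∣ n := by
        refine (Subgroup.index_dvd_card _).trans ?_
        refine (Subgroup.card_subgroup_dvd_card _).trans ?_
        rw [Nat.card_eq_fintype_card, hcard]
      by_contra hne
      have hne0 : ψ.ker.index ≠ 0 := Subgroup.index_ne_zero_of_finite
      have hr : (ψ.ker.index).minFac.Prime := Nat.minFac_prime hne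
      have hrd : (ψ.ker.index).minFac ∣ ψ.ker.index := Nat.minFac_dvd _
      exact hc _ p hr hp (hrd.trans hd2) hpn (hrd.trans hd1)
    have hNC : Subgroup.normalizer ((P : Subgroup G) : Set G) ≤
        Subgroup.centralizer ((P : Subgroup G) : Set G) := by
      rw [← Subgroup.subgroupOf_eq_top, ← Subgroup.normalizerMonoidHom_ker]
      exact hker
    -- Burnside normal p-complement
    haveI : (P : Subgroup G).FiniteIndex := ⟨Subgroup.index_ne_zero_of_finite⟩
    have hcompl := MonoidHom.ker_transferSylow_isComplement' P hNC
    set K := (MonoidHom.transferSylow P hNC).ker with hKdef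
    set m := Nat.card K with hm
    have hmn : m * p = n := by
      have := hcompl.card_mul
      rwa [Nat.card_eq_fintype_card (α := G), hcard, hcardP] at this
    have hm0 : m ≠ 0 := Nat.card_pos.ne'
    have hmdvd : m ∣ n := ⟨p, hmn.symm⟩
    have hmlt : m < n := by
      have := hp.two_le
      nlinarith [Nat.pos_of_ne_zero hm0]
    letI : Fintype K := Fintype.ofFinite K
    haveI hKcyc : IsCyclic K := by
      refine ih m hmlt K (hsq.squarefree_of_dvd hmdvd)
        (fun a b ha hb hadvd hbdvd => hc a b ha hb (hadvd.trans hmdvd) (hbdvd.trans hmdvd)) ?_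
      rw [← Nat.card_eq_fintype_card]
    -- conjugation action trivial
    have hcker : (MulAut.conjNormal : G →* MulAut K).ker = ⊤ := by
      set c := (MulAut.conjNormal : G →* MulAut K) with hcd
      rw [← Subgroup.index_eq_one]
      have hd1 : c.ker.index ∣ Nat.totient m := by
        have h1 : c.ker.index ∣ Nat.card (MulAut K) := by
          rw [Subgroup.index, Nat.card_congr (QuotientGroup.quotientKerEquivRange c).toEquiv]
          exact Subgroup.card_subgroup_dvd_card _
        rwa [IsCyclic.card_mulAut] at h1
      have hd2 : c.ker.index ∣ n := by
        refine (Subgroup.index_dvd_card _).trans ?_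
        rw [Nat.card_eq_fintype_card, hcard]
      by_contra hne
      have hr : (c.ker.index).minFac.Prime := Nat.minFac_prime hne
      have hrd : (c.ker.index).minFac ∣ c.ker.index := Nat.minFac_dvd _
      obtain ⟨q, hqp, hqm, hqr⟩ := exists_prime_dvd_sub_one_of_dvd_totient m
        (hsq.squarefree_of_dvd hmdvd) _ hr (hrd.trans hd1)
      exact hc _ q hr hqp (hrd.trans hd2) (hqm.trans hmdvd) hqr
    have hcenter : K ≤ Subgroup.center G := by
      intro k hk
      rw [Subgroup.mem_center_iff]
      intro g
      have hg : g ∈ (MulAut.conjNormal : G →* MulAut K).ker := hcker ▸ Subgroup.mem_top g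
      rw [MonoidHom.mem_ker] at hg
      have h1 : MulAut.conjNormal g (⟨k, hk⟩ : K) = ⟨k, hk⟩ := by rw [hg]; rfl
      have h2 := congrArg Subtype.val h1
      rw [MulAut.conjNormal_apply] at h2
      exact mul_inv_eq_iff_eq_mul.mp h2
    have hindex : K.index = p := by
      have h1 := Subgroup.card_mul_index K
      rw [Nat.card_eq_fintype_card (α := G), hcard, ← hm, ← hmn] at h1
      exact Nat.eq_of_mul_eq_mul_left (Nat.pos_of_ne_zero hm0) h1
    haveI : IsCyclic (G ⧸ K) := isCyclic_of_prime_card (p := p) hindex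
    have hcomm := commutative_of_cyclic_center_quotient (QuotientGroup.mk' K)
      (by rw [QuotientGroup.ker_mk']; exact hcenter)
    exact isCyclic_of_comm_squarefree G hcomm (hcard ▸ hsq)

lemma not_sq_dvd_of_cyclic (n : ℕ) (hn : 0 < n)
    (hcy : ∀ (G : Type) [Group G] [Fintype G], Fintype.card G = n → IsCyclic G)
    (p : ℕ) (hp : p.Prime) : ¬ p ^ 2 ∣ n := by
  intro hdvd
  haveI : Fact p.Prime := ⟨hp⟩
  haveI : NeZero p := ⟨hp.pos.ne'⟩
  set m := n / p ^ 2 with hm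
  have hn' : n = p ^ 2 * m := (Nat.mul_div_cancel' hdvd).symm
  have hm0 : m ≠ 0 := by
    intro h; rw [h, mul_zero] at hn'; omega
  haveI : NeZero m := ⟨hm0⟩
  set G := Multiplicative (ZMod p × ZMod p × ZMod m) with hG
  have hcard : Fintype.card G = n := by
    show Fintype.card (Multiplicative (ZMod p × ZMod p × ZMod m)) = n
    rw [Fintype.card_multiplicative, Fintype.card_prod, Fintype.card_prod,
      ZMod.card, ZMod.card, hn']
    ring
  haveI := hcy G hcard
  obtain ⟨g, hgen⟩ := IsCyclic.exists_generator (α := G)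
  have horder : orderOf g = n := by
    rw [← hcard, ← Nat.card_eq_fintype_card]
    exact orderOf_eq_card_of_forall_mem_zpowers hgen
  have hpow : g ^ (p * m) = 1 := by
    have : (p * m) • g.toAdd = (0 : ZMod p × ZMod p × ZMod m) := by
      obtain ⟨a, b, c⟩ := g.toAdd
      show ((p * m) • a, (p * m) • b, (p * m) • c) = (0, 0, 0)
      have h1 : ∀ x : ZMod p, (p * m) • x = 0 := by
        intro x
        rw [nsmul_eq_mul, Nat.cast_mul, ZMod.natCast_self, zero_mul, zero_mul]
      have h2 : (p * m) • c = 0 := by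
        rw [nsmul_eq_mul, Nat.cast_mul, ZMod.natCast_self, mul_zero, zero_mul]
      rw [h1 a, h1 b, h2]
    have := congrArg Multiplicative.ofAdd this
    rwa [← toAdd_pow] at this
    -- this : ofAdd (toAdd (g ^ (p*m))) = ofAdd 0
  have hdvd2 : n ∣ p * m := horder ▸ orderOf_dvd_of_pow_eq_one hpow
  have hle : n ≤ p * m := Nat.le_of_dvd (Nat.mul_pos hp.pos (Nat.pos_of_ne_zero hm0)) hdvd2
  nlinarith [hp.two_le, Nat.pos_of_ne_zero hm0]

lemma no_pq_group (n p q : ℕ) (hn : 0 < n) (hp : p.Prime) (hq : q.Prime) (hpq : p ≠ q)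
    (hpn : p ∣ n) (hqn : q ∣ n) (hd : p ∣ q - 1)
    (hcy : ∀ (G : Type) [Group G] [Fintype G], Fintype.card G = n → IsCyclic G) : False := by
  haveI : Fact p.Prime := ⟨hp⟩
  haveI : Fact q.Prime := ⟨hq⟩
  haveI : NeZero p := ⟨hp.pos.ne'⟩
  haveI : NeZero q := ⟨hq.pos.ne'⟩
  have hpqd : p * q ∣ n :=
    (Nat.Coprime.mul_dvd_of_dvd_of_dvd ((Nat.coprime_primes hp hq).mpr hpq) hpn hqn)
  set m := n / (p * q) with hmdef
  have hn' : n = p * q * m := (Nat.mul_div_cancel' hpqd).symm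
  have hm0 : m ≠ 0 := by rintro h; rw [h, mul_zero] at hn'; omega
  haveI : NeZero m := ⟨hm0⟩
  -- a unit of order p in (ZMod q)ˣ
  obtain ⟨u, hu⟩ : ∃ u : (ZMod q)ˣ, orderOf u = p := by
    apply exists_prime_orderOf_dvd_card p
    rwa [ZMod.card_units]
  have hu1 : u ≠ 1 := by
    intro h; rw [h, orderOf_one] at hu; exact hp.one_lt.ne' hu.symm
  -- additive automorphism of ZMod q of order dividing p
  set α₀ : AddAut (ZMod q) :=
    Multiplicative.toAdd (DistribMulAction.toAddAut (ZMod q)ˣ (ZMod q) u) with hα₀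
  have hupow : u ^ p = 1 := by rw [← hu]; exact pow_orderOf_eq_one u
  have hα₀p : p • α₀ = 0 := by
    rw [hα₀, ← toAdd_pow, ← map_pow, hupow, map_one]; rfl
  -- the multiplicative automorphism
  set N := Multiplicative (ZMod q) with hN
  set α : MulAut N := AddEquiv.toMultiplicative α₀ with hα
  have happ : ∀ x : N, α x = Multiplicative.ofAdd (α₀ x.toAdd) := fun _ => rfl
  have hpowapp : ∀ (k : ℕ) (x : N), (α ^ k) x = Multiplicative.ofAdd ((k • α₀) x.toAdd) := by
    intro k
    induction k with
    | zero => intro x; simp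
    | succ k ihk =>
      intro x
      rw [pow_succ, MulAut.mul_apply, happ x, ihk, succ_nsmul, AddAut.add_apply]
      rfl
  have hαp : α ^ p = 1 := by
    ext x
    rw [hpowapp, hα₀p]
    rfl
  have hF : (zmultiplesHom (Additive (MulAut N)) (Additive.ofMul α)) ((p : ℕ) : ℤ) = 0 := by
    rw [zmultiplesHom_apply, ← ofMul_zpow, zpow_natCast, hαp]
    rfl
  set φ : Multiplicative (ZMod p) →* MulAut N :=
    AddMonoidHom.toMultiplicativeLeft
      (ZMod.lift p ⟨zmultiplesHom (Additive (MulAut N)) (Additive.ofMul α), hF⟩) with hφ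
  have hφ1 : φ (Multiplicative.ofAdd (1 : ZMod p)) = α := by
    show Additive.toMul
      ((ZMod.lift p ⟨zmultiplesHom (Additive (MulAut N)) (Additive.ofMul α), hF⟩)
        (1 : ZMod p)) = α
    rw [show (1 : ZMod p) = ((1 : ℤ) : ZMod p) by push_cast; rfl, ZMod.lift_coe]
    simp
  -- the semidirect product
  set H := SemidirectProduct N (Multiplicative (ZMod p)) φ with hH
  let e : H ≃ N × Multiplicative (ZMod p) :=
    { toFun := fun x => (x.left, x.right)
      invFun := fun x => ⟨x.1, x.2⟩
      left_inv := fun x => rfl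
      right_inv := fun x => rfl }
  letI : Fintype H := Fintype.ofEquiv _ e.symm
  have hcardH : Fintype.card H = q * p := by
    rw [Fintype.card_congr e, Fintype.card_prod]
    show Fintype.card (Multiplicative (ZMod q)) * Fintype.card (Multiplicative (ZMod p)) = q * p
    rw [Fintype.card_multiplicative, Fintype.card_multiplicative, ZMod.card, ZMod.card]
  set Gbig := H × Multiplicative (ZMod m) with hGbig
  have hcardbig : Fintype.card Gbig = n := by
    show Fintype.card (H × Multiplicative (ZMod m)) = n
    rw [Fintype.card_prod, hcardH]
    show q * p * Fintype.card (Multiplicative (ZMod m)) = n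
    rw [Fintype.card_multiplicative, ZMod.card, hn']
    ring
  haveI := hcy Gbig hcardbig
  have hcm := (IsCyclic.commGroup (α := Gbig)).mul_comm
  set x : N := Multiplicative.ofAdd (1 : ZMod q) with hx
  set y : Multiplicative (ZMod p) := Multiplicative.ofAdd (1 : ZMod p) with hy
  have h1 := hcm (SemidirectProduct.inl x, 1) (SemidirectProduct.inr y, 1)
  have h2 : (SemidirectProduct.inl x : H) * (SemidirectProduct.inr y : H)
      = (SemidirectProduct.inr y : H) * (SemidirectProduct.inl x : H) := by
    have h := hcm ((SemidirectProduct.inl x : H), (1 : Multiplicative (ZMod m)))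
      ((SemidirectProduct.inr y : H), 1)
    rw [Prod.mk_mul_mk, Prod.mk_mul_mk, Prod.mk.injEq] at h
    exact h.1
  have h3 := congrArg SemidirectProduct.left h2
  simp only [SemidirectProduct.mul_left, SemidirectProduct.left_inl,
    SemidirectProduct.left_inr, SemidirectProduct.right_inl, SemidirectProduct.right_inr,
    map_one, MulAut.one_apply, mul_one, one_mul] at h3
  rw [hφ1, happ] at h3
  have h4 : (1 : ZMod q) = α₀ (1 : ZMod q) := by
    have := congrArg Multiplicative.toAdd h3
    simpa [hx] using this
  have h5 : α₀ (1 : ZMod q) = (u : ZMod q) := by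
    show u • (1 : ZMod q) = (u : ZMod q)
    simp [Units.smul_def]
  rw [h5] at h4
  exact hu1 (Units.ext h4.symm)

/-- A positive integer `n` is a cyclic number (every group of order `n` is cyclic)
iff `n` is square-free and has nilpotent factorization. -/
theorem cyclic_number_iff_squarefree_nilpotentFactorization (n : ℕ) (hn : 0 < n) :
    (∀ (G : Type) [Group G] [Fintype G], Fintype.card G = n → IsCyclic G) ↔
      ((∀ p : ℕ, p.Prime → ¬ (p ^ 2 ∣ n)) ∧ HasNilpotentFactorization n) := by
  constructor
  · intro hcy
    have hsf : ∀ p : ℕ, p.Prime → ¬ (p ^ 2 ∣ n) := fun p hp => not_sq_dvd_of_cyclic n hn hcy p hp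
    refine ⟨hsf, ?_⟩
    have hsq : Squarefree n := Nat.squarefree_iff_prime_squarefree.mpr
      (fun p hp h => hsf p hp (by rwa [pow_two]))
    intro p hp q hq hpq k hk1 hk2 hdvd
    have pp := Nat.prime_of_mem_primeFactors hp
    have qp := Nat.prime_of_mem_primeFactors hq
    have pdvd := Nat.dvd_of_mem_primeFactors hp
    have qdvd := Nat.dvd_of_mem_primeFactors hq
    have hf1 : n.factorization q ≤ 1 := hsq.natFactorization_le_one q
    have hk : k = 1 := by omega
    subst hk
    rw [pow_one] at hdvd
    exact no_pq_group n p q hn pp qp hpq pdvd qdvd hdvd hcy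
  · rintro ⟨hsf, hnf⟩ G _ _ hcard
    have hsq : Squarefree n := Nat.squarefree_iff_prime_squarefree.mpr
      (fun p hp h => hsf p hp (by rwa [pow_two]))
    refine key_cyclic n G hsq ?_ hcard
    intro p q pp qp hpn hqn hdvd
    rcases eq_or_ne p q with rfl | hpq
    · have h1 : 1 ≤ p - 1 := by have := pp.two_le; omega
      have := Nat.le_of_dvd (by omega) hdvd
      have := pp.two_le
      omega
    · refine hnf p (Nat.mem_primeFactors.mpr ⟨pp, hpn, hsq.ne_zero⟩)
        q (Nat.mem_primeFactors.mpr ⟨qp, hqn, hsq.ne_zero⟩) hpq 1 le_rfl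
        (qp.factorization_pos_of_dvd hsq.ne_zero hqn) ?_
      rwa [pow_one]
end

section
/- If G is any finite solvable group and π is any set of primes, then G has a Hall π-subgroup. -/
open Subgroup

/-- A nontrivial finite solvable group has a nontrivial normal `p`-subgroup. -/
lemma exists_normal_pGroup_of_solvable (G : Type*) [Group G] [Finite G] [Group.IsSolvable G]
    [Nontrivial G] :
    ∃ (p : ℕ) (N : Subgroup G), p.Prime ∧ N.Normal ∧ N ≠ ⊥ ∧ IsPGroup p N := by
  classical
  have hsolv : ∃ n, derivedSeries G n = ⊥ := Group.IsSolvable.solvable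
  let k := Nat.find hsolv
  have hk : derivedSeries G k = ⊥ := Nat.find_spec hsolv
  have hk0 : k ≠ 0 := by
    intro h
    have := hk
    rw [h, derivedSeries_zero] at this
    exact top_ne_bot this
  set A : Subgroup G := derivedSeries G (k - 1) with hA
  have hAne : A ≠ ⊥ := Nat.find_min hsolv (Nat.sub_lt (Nat.pos_of_ne_zero hk0) one_pos)
  have hAA : ⁅A, A⁆ = ⊥ := by
    have : derivedSeries G (k - 1 + 1) = ⊥ := by
      rwa [Nat.sub_add_cancel (Nat.one_le_iff_ne_zero.mpr hk0)]
    rwa [derivedSeries_succ] at this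
  haveI hAnormal : A.Normal := derivedSeries_normal G (k - 1)
  have hcomm : ∀ a b : A, a * b = b * a := by
    intro a b
    have hle : A ≤ Subgroup.centralizer (A : Set G) :=
      (Subgroup.commutator_eq_bot_iff_le_centralizer).mp hAA
    have := hle b.2 a a.2
    exact Subtype.ext (by simpa using this)
  have hcard : 1 < Nat.card A := A.one_lt_card_iff_ne_bot.mpr hAne
  set p := (Nat.card A).minFac with hp
  have hpprime : p.Prime := Nat.minFac_prime hcard.ne'
  haveI : Fact p.Prime := ⟨hpprime⟩
  obtain ⟨P⟩ : Nonempty (Sylow p A) := Sylow.nonempty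
  have hPnormal : (P : Subgroup A).Normal := by
    constructor
    intro x hx g
    have : g * x * g⁻¹ = x := by
      rw [hcomm g x, mul_assoc, mul_inv_cancel, mul_one]
    rwa [this]
  haveI : (P : Subgroup A).Characteristic := Sylow.characteristic_of_normal P hPnormal
  refine ⟨p, (P : Subgroup A).map A.subtype, hpprime, inferInstance, ?_, ?_⟩
  · have hPne : (P : Subgroup A) ≠ ⊥ :=
      P.ne_bot_of_dvd_card (Nat.minFac_dvd _)
    intro h
    exact hPne ((Subgroup.map_eq_bot_iff_of_injective _ A.subtype_injective).mp h)
  · exact P.2.map A.subtype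

lemma hall_aux : ∀ (n : ℕ) (G : Type u) [Group G] [Finite G] [Group.IsSolvable G],
    Nat.card G ≤ n → ∀ (π : Set ℕ), (∀ q ∈ π, Nat.Prime q) →
    ∃ H : Subgroup G,
      (∀ q : ℕ, q.Prime → q ∣ Nat.card H → q ∈ π) ∧
        (∀ q : ℕ, q.Prime → q ∣ H.index → q ∉ π) := by
  intro n
  induction n with
  | zero =>
    intro G _ _ _ hcard
    exact absurd hcard (by simp [Nat.card_pos.ne'])
  | succ n IH =>
    intro G _ _ _ hcard π hπ
    by_cases hG : Nontrivial G
    case neg =>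
      -- trivial group
      have hsub : Subsingleton G := not_nontrivial_iff_subsingleton.mp hG
      refine ⟨⊤, ?_, ?_⟩
      · intro q hq hdvd
        have h1 : Nat.card (⊤ : Subgroup G) = 1 := by
          have : Nat.card G = 1 := Nat.card_eq_one_iff_unique.mpr ⟨hsub, ⟨1⟩⟩
          simpa [this] using Subgroup.card_top (G := G)
        rw [h1] at hdvd
        exact absurd (Nat.eq_one_of_dvd_one hdvd) hq.ne_one
      · intro q hq hdvd
        rw [Subgroup.index_top] at hdvd
        exact (hq.ne_one (Nat.eq_one_of_dvd_one hdvd)).elim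
    case pos =>
      obtain ⟨p, N, hpprime, hNnormal, hNne, hNp⟩ := exists_normal_pGroup_of_solvable G
      haveI := hNnormal
      haveI : Fact p.Prime := ⟨hpprime⟩
      obtain ⟨a, hcardN⟩ := hNp.exists_card_eq
      have hNgt : 1 < Nat.card N := N.one_lt_card_iff_ne_bot.mpr hNne
      -- the quotient is strictly smaller
      have hGeq : Nat.card G = Nat.card (G ⧸ N) * Nat.card N :=
        Subgroup.card_eq_card_quotient_mul_card_subgroup N
      have hQpos : 0 < Nat.card (G ⧸ N) := Nat.card_pos
      have hQlt : Nat.card (G ⧸ N) < Nat.card G := by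
        rw [hGeq]
        exact lt_mul_of_one_lt_right hQpos hNgt
      have hQle : Nat.card (G ⧸ N) ≤ n := by omega
      obtain ⟨K', hK'1, hK'2⟩ := IH (G ⧸ N) hQle π hπ
      set H₀ : Subgroup G := K'.comap (QuotientGroup.mk' N) with hH₀
      have hidx : H₀.index = K'.index :=
        K'.index_comap_of_surjective (QuotientGroup.mk'_surjective N)
      have hidxne : K'.index ≠ 0 := Subgroup.index_ne_zero_of_finite
      have hcardH₀ : Nat.card H₀ = Nat.card N * Nat.card K' := by
        have h1 : Nat.card H₀ * H₀.index = Nat.card G := H₀.card_mul_index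
        have h2 : Nat.card K' * K'.index = Nat.card (G ⧸ N) := K'.card_mul_index
        have h3 : Nat.card H₀ * K'.index = (Nat.card N * Nat.card K') * K'.index := by
          rw [← hidx, h1, hGeq, ← h2, hidx]; ring
        exact Nat.eq_of_mul_eq_mul_right (Nat.pos_of_ne_zero hidxne) h3
      by_cases hp : p ∈ π
      · -- p ∈ π : the preimage of a Hall subgroup of G/N works
        refine ⟨H₀, ?_, ?_⟩
        · intro q hq hdvd
          rw [hcardH₀] at hdvd
          rcases (Nat.Prime.dvd_mul hq).mp hdvd with h | h
          · rw [hcardN] at h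
            have : q = p := (Nat.prime_dvd_prime_iff_eq hq hpprime).mp (hq.dvd_of_dvd_pow h)
            rwa [this]
          · exact hK'1 q hq h
        · intro q hq hdvd
          rw [hidx] at hdvd
          exact hK'2 q hq hdvd
      · by_cases htop : H₀ = ⊤
        · -- Schur–Zassenhaus case
          have hK'idx : K'.index = 1 := by
            have : H₀.index = 1 := by rw [htop, Subgroup.index_top]
            rwa [hidx] at this
          have hcardK' : Nat.card K' = Nat.card (G ⧸ N) := by
            have h2 : Nat.card K' * K'.index = Nat.card (G ⧸ N) := K'.card_mul_index
            rwa [hK'idx, mul_one] at h2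
          have hQprimes : ∀ q : ℕ, q.Prime → q ∣ Nat.card (G ⧸ N) → q ∈ π := by
            intro q hq hdvd
            exact hK'1 q hq (hcardK' ▸ hdvd)
          have hNidx : N.index = Nat.card (G ⧸ N) := N.index_eq_card
          have hpnotdvd : ¬ p ∣ N.index := by
            intro h
            exact hp (hQprimes p hpprime (hNidx ▸ h))
          have hcop : Nat.Coprime (Nat.card N) N.index := by
            rw [hcardN]
            exact Nat.Coprime.pow_left a ((Nat.Prime.coprime_iff_not_dvd hpprime).mpr hpnotdvd)
          obtain ⟨H, hH⟩ := Subgroup.exists_right_complement'_of_coprime hcop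
          refine ⟨H, ?_, ?_⟩
          · intro q hq hdvd
            have : Nat.card H = N.index := (hH.symm.index_eq_card).symm
            exact hQprimes q hq (hNidx ▸ this ▸ hdvd)
          · intro q hq hdvd hqπ
            have : H.index = Nat.card N := hH.index_eq_card
            rw [this, hcardN] at hdvd
            have : q = p := (Nat.prime_dvd_prime_iff_eq hq hpprime).mp (hq.dvd_of_dvd_pow hdvd)
            exact hp (this ▸ hqπ)
        · -- recurse into the proper subgroup H₀
          have hH₀idx1 : H₀.index ≠ 1 := fun h => htop (Subgroup.index_eq_one.mp h)
          have hH₀idx0 : H₀.index ≠ 0 := Subgroup.index_ne_zero_of_finite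
          have hcardlt : Nat.card H₀ < Nat.card G := by
            have h1 : Nat.card H₀ * H₀.index = Nat.card G := H₀.card_mul_index
            have hpos : 0 < Nat.card H₀ := Nat.card_pos
            have h2 : 2 ≤ H₀.index := by omega
            nlinarith
          have hle : Nat.card H₀ ≤ n := by omega
          obtain ⟨H, hH1, hH2⟩ := IH H₀ hle π hπ
          refine ⟨H.map H₀.subtype, ?_, ?_⟩
          · intro q hq hdvd
            have : Nat.card (H.map H₀.subtype) = Nat.card H :=
              Nat.card_congr (Subgroup.equivMapOfInjective H _ H₀.subtype_injective).toEquiv.symm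
            exact hH1 q hq (this ▸ hdvd)
          · intro q hq hdvd
            rw [Subgroup.index_map_subtype] at hdvd
            rcases (Nat.Prime.dvd_mul hq).mp hdvd with h | h
            · exact hH2 q hq h
            · rw [hidx] at h
              exact hK'2 q hq h

/-- (P. Hall) Every finite solvable group has a Hall `π`-subgroup, for any set of
primes `π`: a subgroup `H` such that every prime dividing `|H|` lies in `π` and no prime
dividing `|G : H|` lies in `π`. -/
theorem exists_hall_subgroup_of_solvable (G : Type*) [Group G] [Finite G] [Group.IsSolvable G]
    (π : Set ℕ) (hπ : ∀ q ∈ π, Nat.Prime q) :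
    ∃ H : Subgroup G,
      (∀ q : ℕ, q.Prime → q ∣ Nat.card H → q ∈ π) ∧
        (∀ q : ℕ, q.Prime → q ∣ H.index → q ∉ π) := by
  exact hall_aux (Nat.card G) G le_rfl π hπ
end

section
/- Let G be a finite group that is not nilpotent, but such that every proper maximal subgroup of G is nilpotent. Then the order of G is divisible by exactly two distinct primes; that is, |G| = p^m q^n with m, n > 0 for distinct primes p and q. -/
open Subgroup MulAction Pointwise
open scoped commutatorElement
set_option linter.unusedSectionVars false
set_option maxHeartbeats 1000000
universe u
section schmidt
variable {G : Type u} [Group G] [Finite G]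

lemma schmidt_aux_cyclic_nilpotent (h : IsCyclic G) : Group.IsNilpotent G := by
  letI := h.commGroup
  infer_instance

lemma schmidt_aux_proper_nilpotent
    (hmax : ∀ H : Subgroup G, IsCoatom H → Group.IsNilpotent ↥H)
    {H : Subgroup G} (h : H ≠ ⊤) : Group.IsNilpotent ↥H := by
  rcases eq_top_or_exists_le_coatom H with h' | ⟨K, hK, hle⟩
  · exact absurd h' h
  · haveI : Group.IsNilpotent ↥K := hmax K hK
    exact nilpotent_of_mulEquiv (subgroupOfEquivOfLe hle)

lemma schmidt_aux_commutator_ne_top (G : Type u) [Group G] [Nontrivial G]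
    [h : Group.IsNilpotent G] : commutator G ≠ ⊤ := by
  intro hc
  obtain ⟨n, hn⟩ := _root_.nilpotent_iff_lowerCentralSeries.mp h
  have htop : ∀ m, Subgroup.lowerCentralSeries (⊤ : Subgroup G) m = ⊤ := by
    intro m
    induction m with
    | zero => exact Subgroup.lowerCentralSeries_zero _
    | succ m ih =>
      have h1 : Subgroup.lowerCentralSeries (⊤ : Subgroup G) (m+1) =
          ⁅Subgroup.lowerCentralSeries (⊤ : Subgroup G) m, (⊤ : Subgroup G)⁆ :=
        Subgroup.lowerCentralSeries_succ _ m
      rw [h1, ih]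
      exact hc
  have := htop n
  rw [hn] at this
  exact bot_ne_top this

lemma schmidt_aux_ngrow {M D : Subgroup G} (hM : Group.IsNilpotent ↥M) (hD : D < M) :
    ∃ x, x ∈ M ∧ x ∉ D ∧ x ∈ (normalizer (D : Set G)) := by
  haveI := hM
  have hnc : NormalizerCondition ↥M := normalizerCondition_of_isNilpotent
  have hDle : D ≤ M := hD.le
  have hD0 : D.subgroupOf M < ⊤ := by
    rcases lt_iff_le_and_ne.mp hD with ⟨-, hne⟩
    refine lt_of_le_of_ne le_top ?_
    intro h
    apply hne
    refine le_antisymm hDle fun m hm => ?_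
    have : (⟨m, hm⟩ : M) ∈ D.subgroupOf M := h ▸ mem_top _
    exact mem_subgroupOf.mp this
  have hlt := hnc _ hD0
  obtain ⟨x, hxn, hxd⟩ := SetLike.exists_of_lt hlt
  refine ⟨(x : G), x.2, ?_, ?_⟩
  · intro hxD
    exact hxd (mem_subgroupOf.mpr hxD)
  · apply mem_normalizer_fintype
    intro d hd
    have hdM : d ∈ M := hDle hd
    have hmem : (⟨d, hdM⟩ : M) ∈ D.subgroupOf M := mem_subgroupOf.mpr hd
    have h2 : x * ⟨d, hdM⟩ * x⁻¹ ∈ D.subgroupOf M := by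
      rw [mem_normalizer_iff] at hxn
      exact (hxn ⟨d, hdM⟩).mp hmem
    exact mem_subgroupOf.mp h2

lemma schmidt_aux_sylow_normalizer {p : ℕ} [Fact p.Prime] {H : Subgroup G}
    (hH : Group.IsNilpotent ↥H) (P : Sylow p G) (hP : (P : Subgroup G) ≤ H) :
    H ≤ (normalizer ((P : Subgroup G) : Set G)) := by
  haveI := hH
  have hpg : IsPGroup p ((P : Subgroup G).subgroupOf H) :=
    P.isPGroup'.comap_of_injective H.subtype H.subtype_injective
  obtain ⟨Q, hQ⟩ := hpg.exists_le_sylow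
  haveI hQn : (Q : Subgroup ↥H).Normal :=
    Sylow.normal_of_normalizerCondition normalizerCondition_of_isNilpotent Q
  have hQP : (Q : Subgroup ↥H).map H.subtype = P := by
    have h1 : IsPGroup p ((Q : Subgroup ↥H).map H.subtype) := Q.isPGroup'.map _
    have h2 : (P : Subgroup G) ≤ (Q : Subgroup ↥H).map H.subtype := by
      calc (P : Subgroup G) = ((P : Subgroup G).subgroupOf H).map H.subtype := by
            rw [subgroupOf_map_subtype, inf_of_le_left hP]
        _ ≤ _ := map_mono hQ
    exact P.3 h1 h2
  intro g hg
  apply mem_normalizer_fintype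
  intro n hn
  rw [← hQP] at hn ⊢
  obtain ⟨y, hy, rfl⟩ := hn
  exact ⟨(⟨g, hg⟩ : H) * y * (⟨g, hg⟩ : H)⁻¹, hQn.conj_mem y hy _, rfl⟩

lemma schmidt_aux_stabilizer_card (M : Subgroup G) :
    Nat.card (stabilizer (ConjAct G) M) = Nat.card (normalizer (M : Set G)) := by
  have h : stabilizer (ConjAct G) M
      = (normalizer (M : Set G)).comap (ConjAct.ofConjAct : ConjAct G ≃* G).toMonoidHom := by
    ext g
    simp only [mem_stabilizer_iff, mem_comap, MulEquiv.coe_toMonoidHom, mem_normalizer_iff]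
    constructor
    · intro h x
      constructor
      · intro hx
        have : ConjAct.ofConjAct g * x * (ConjAct.ofConjAct g)⁻¹ ∈ g • M := by
          rw [Subgroup.mem_pointwise_smul_iff_inv_smul_mem]
          simpa [ConjAct.smul_def, mul_assoc] using hx
        rwa [h] at this
      · intro hx
        have : ConjAct.ofConjAct g * x * (ConjAct.ofConjAct g)⁻¹ ∈ g • M := by rw [h]; exact hx
        rw [Subgroup.mem_pointwise_smul_iff_inv_smul_mem] at this
        simpa [ConjAct.smul_def, mul_assoc] using this
    · intro h
      ext y
      rw [Subgroup.mem_pointwise_smul_iff_inv_smul_mem]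
      simp only [ConjAct.smul_def, map_inv, inv_inv]
      constructor
      · intro hy
        have := (h _).mp hy
        convert this using 1; group
      · intro hy
        have : ConjAct.ofConjAct g * ((ConjAct.ofConjAct g)⁻¹ * y * ConjAct.ofConjAct g) *
            (ConjAct.ofConjAct g)⁻¹ ∈ M := by
          convert hy using 1; group
        exact (h _).mpr this
  rw [h]
  exact Nat.card_congr (Subgroup.equivMapOfInjective _ _ (MulEquiv.injective _)).toEquiv |>.trans
    (by rw [Subgroup.map_comap_eq_self_of_surjective (MulEquiv.surjective _)])

lemma schmidt_aux_smul_card (a : ConjAct G) (M : Subgroup G) :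
    Nat.card (a • M : Subgroup G) = Nat.card M :=
  (Nat.card_congr (Subgroup.equivSMul a M).toEquiv).symm

lemma schmidt_aux_smul_top (a : ConjAct G) : a • (⊤ : Subgroup G) = ⊤ :=
  top_le_iff.mp (subset_pointwise_smul_iff.mpr le_top)

lemma schmidt_aux_smul_coatom {M : Subgroup G} (hM : IsCoatom M) (a : ConjAct G) :
    IsCoatom (a • M) := by
  constructor
  · intro h
    apply hM.1
    have := congrArg (fun K => a⁻¹ • K) h
    simpa [inv_smul_smul, schmidt_aux_smul_top] using this
  · intro K hK
    have h1 : M ≤ a⁻¹ • K := by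
      rw [← Subgroup.pointwise_smul_le_pointwise_smul_iff (a := a), smul_inv_smul]
      exact hK.le
    have h2 : M ≠ a⁻¹ • K := by
      intro h
      rw [h, smul_inv_smul] at hK
      exact lt_irrefl _ hK
    have := hM.2 _ (lt_of_le_of_ne h1 h2)
    have := congrArg (fun K => a • K) this
    simpa [smul_inv_smul, schmidt_aux_smul_top] using this

lemma schmidt_aux_card_lt {D E : Subgroup G} (h : D < E) : Nat.card D < Nat.card E := by
  have hs : (D : Set G) ⊂ (E : Set G) := by
    rw [Set.ssubset_iff_of_subset (SetLike.coe_subset_coe.mpr h.le)]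
    obtain ⟨x, hxE, hxD⟩ := SetLike.exists_of_lt h
    exact ⟨x, hxE, hxD⟩
  have := Set.ncard_lt_ncard hs (E : Set G).toFinite
  rw [← Nat.card_coe_set_eq, ← Nat.card_coe_set_eq] at this
  exact this

lemma schmidt_aux_coatom_inter
    (hprop : ∀ H : Subgroup G, H ≠ ⊤ → Group.IsNilpotent ↥H)
    (hsimp : ∀ N : Subgroup G, N.Normal → N = ⊥ ∨ N = ⊤) :
    ∀ M1 M2 : Subgroup G, IsCoatom M1 → IsCoatom M2 → M1 ≠ M2 → M1 ⊓ M2 = ⊥ := by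
  classical
  by_contra hcon
  push_neg at hcon
  obtain ⟨M1, M2, h1, h2, hne, hbot⟩ := hcon
  haveI : Fintype (Subgroup G) := Fintype.ofFinite _
  set S : Finset (Subgroup G) :=
    Finset.univ.filter
      (fun D => ∃ K1 K2 : Subgroup G, IsCoatom K1 ∧ IsCoatom K2 ∧ K1 ≠ K2 ∧ D = K1 ⊓ K2) with hS
  have hSne : (M1 ⊓ M2) ∈ S := by
    simp only [hS, Finset.mem_filter, Finset.mem_univ, true_and]
    exact ⟨M1, M2, h1, h2, hne, rfl⟩
  obtain ⟨D, hDS, hDmax⟩ := S.exists_max_image (fun D => Nat.card D) ⟨_, hSne⟩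
  have hDcard : 2 ≤ Nat.card D := by
    have := hDmax _ hSne
    have h2' : 1 < Nat.card (M1 ⊓ M2 : Subgroup G) := (one_lt_card_iff_ne_bot _).mpr hbot
    omega
  have hDbot : D ≠ ⊥ := by
    intro h
    rw [h, Subgroup.card_bot] at hDcard
    omega
  simp only [hS, Finset.mem_filter, Finset.mem_univ, true_and] at hDS
  obtain ⟨K1, K2, hK1, hK2, hKne, hDeq⟩ := hDS
  -- D is strictly below K1 and K2
  have hlt : ∀ K K' : Subgroup G, IsCoatom K → IsCoatom K' → K ≠ K' → K ⊓ K' < K := by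
    intro K K' hK hK' hne'
    refine lt_of_le_of_ne inf_le_left ?_
    intro h
    have hle : K ≤ K' := h ▸ inf_le_right
    rcases lt_or_eq_of_le hle with h' | h'
    · exact hK'.1 (hK.2 _ h')
    · exact hne' h'
  have hD1 : D < K1 := hDeq ▸ hlt K1 K2 hK1 hK2 hKne
  have hD2 : D < K2 := by
    rw [hDeq, inf_comm]
    exact hlt K2 K1 hK2 hK1 (Ne.symm hKne)
  obtain ⟨x, hx1, hxD, hxN⟩ := schmidt_aux_ngrow (hprop K1 hK1.1) hD1
  obtain ⟨y, hy2, hyD, hyN⟩ := schmidt_aux_ngrow (hprop K2 hK2.1) hD2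
  have hNne : (normalizer (D : Set G)) ≠ ⊤ := by
    intro h
    rcases hsimp D (normalizer_eq_top_iff.mp h) with h' | h'
    · exact hDbot h'
    · exact hK1.1 (top_le_iff.mp (h' ▸ hD1.le))
  obtain ⟨M3, hM3, hNM3⟩ := (eq_top_or_exists_le_coatom (normalizer (D : Set G))).resolve_left hNne
  have key : ∀ K : Subgroup G, IsCoatom K → D < K →
      (∀ z, z ∈ K → z ∉ D → z ∈ (normalizer (D : Set G)) → True) → -- dummy
      ∀ z, z ∈ K → z ∉ D → z ∈ (normalizer (D : Set G)) → K = M3 := by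
    intro K hK hDK _ z hzK hzD hzN
    by_contra hKM3
    have hE : (K ⊓ M3) ∈ S := by
      simp only [hS, Finset.mem_filter, Finset.mem_univ, true_and]
      exact ⟨K, M3, hK, hM3, hKM3, rfl⟩
    have hDE : D < K ⊓ M3 := by
      refine lt_of_le_of_ne (le_inf hDK.le (le_trans le_normalizer hNM3)) ?_
      intro h
      exact hzD (h ▸ mem_inf.mpr ⟨hzK, hNM3 hzN⟩)
    have := schmidt_aux_card_lt hDE
    have := hDmax _ hE
    omega
  have e1 : K1 = M3 := key K1 hK1 hD1 (fun _ _ _ _ => trivial) x hx1 hxD hxN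
  have e2 : K2 = M3 := key K2 hK2 hD2 (fun _ _ _ _ => trivial) y hy2 hyD hyN
  exact hKne (e1.trans e2.symm)

lemma schmidt_aux_no_simple
    (hG : ¬ Group.IsNilpotent G)
    (hprop : ∀ H : Subgroup G, H ≠ ⊤ → Group.IsNilpotent ↥H)
    (hsimp : ∀ N : Subgroup G, N.Normal → N = ⊥ ∨ N = ⊤) : False := by
  classical
  haveI : Fintype G := Fintype.ofFinite G
  haveI : Fintype (Subgroup G) := Fintype.ofFinite _
  haveI hnontriv : Nontrivial G := by
    rcases subsingleton_or_nontrivial G with h | h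
    · exact absurd Group.isNilpotent_of_subsingleton hG
    · exact h
  have hnc : ¬ IsCyclic G := fun h => hG (schmidt_aux_cyclic_nilpotent h)
  set n := Nat.card G with hn
  have hn2 : 2 ≤ n := Finite.one_lt_card
  -- every coatom is nontrivial
  have hcoatom_ne_bot : ∀ M : Subgroup G, IsCoatom M → M ≠ ⊥ := by
    intro M hM hbot
    apply hnc
    subst hbot
    obtain ⟨x, hx⟩ := exists_ne (1 : G)
    have hzb : Subgroup.zpowers x ≠ ⊥ := by simpa [Subgroup.zpowers_eq_bot] using hx
    have : Subgroup.zpowers x = ⊤ := hM.2 _ (bot_lt_iff_ne_bot.mpr hzb)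
    exact ⟨⟨x, fun y => (this ▸ mem_top y : y ∈ Subgroup.zpowers x)⟩⟩
  -- every nontrivial element lies in a coatom
  have hcover : ∀ x : G, x ≠ 1 → ∃ M : Subgroup G, IsCoatom M ∧ x ∈ M := by
    intro x hx
    rcases eq_top_or_exists_le_coatom (Subgroup.zpowers x) with h | ⟨M, hM, hle⟩
    · exact absurd ⟨⟨x, fun y => (h ▸ mem_top y : y ∈ Subgroup.zpowers x)⟩⟩ hnc
    · exact ⟨M, hM, hle (Subgroup.mem_zpowers x)⟩
  have hinter := schmidt_aux_coatom_inter hprop hsimp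
  -- coatoms are self-normalizing
  have hselfnorm : ∀ M : Subgroup G, IsCoatom M → (normalizer (M : Set G)) = M := by
    intro M hM
    rcases (lt_or_eq_of_le (le_normalizer (H := M))) with h | h
    · exfalso
      have := hM.2 _ h
      rcases hsimp M (normalizer_eq_top_iff.mp this) with h' | h'
      · exact hcoatom_ne_bot M hM h'
      · exact hM.1 h'
    · exact h.symm
  -- the orbit of a coatom under conjugation
  let O : Subgroup G → Finset (Subgroup G) := fun M => (orbit (ConjAct G) M).toFinset
  have hmemO : ∀ M K : Subgroup G, K ∈ O M ↔ ∃ a : ConjAct G, a • M = K := by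
    intro M K
    simp [O, mem_orbit_iff]
  have hOcoatom : ∀ M : Subgroup G, IsCoatom M → ∀ K ∈ O M, IsCoatom K := by
    intro M hM K hK
    obtain ⟨a, rfl⟩ := (hmemO M K).mp hK
    exact schmidt_aux_smul_coatom hM a
  have hOcard : ∀ M : Subgroup G, IsCoatom M → ∀ K ∈ O M, Nat.card K = Nat.card M := by
    intro M _ K hK
    obtain ⟨a, rfl⟩ := (hmemO M K).mp hK
    exact schmidt_aux_smul_card a M
  -- orbit size
  have horbcard : ∀ M : Subgroup G, IsCoatom M → (O M).card * Nat.card M = n := by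
    intro M hM
    have h1 := card_orbit_mul_card_stabilizer_eq_card_group (ConjAct G) M
    have h2 : (O M).card = Fintype.card (orbit (ConjAct G) M) := Set.toFinset_card _
    have h3 : Fintype.card (stabilizer (ConjAct G) M) = Nat.card M := by
      rw [← Nat.card_eq_fintype_card, schmidt_aux_stabilizer_card, hselfnorm M hM]
    have h4 : Fintype.card (ConjAct G) = n := by
      rw [← Nat.card_eq_fintype_card]; rfl
    rw [h2, ← h3, ← h4]
    exact h1
  -- the pieces
  let f : Subgroup G → Finset G := fun K => K.carrier.toFinset.erase 1
  have hfcard : ∀ K : Subgroup G, (f K).card = Nat.card K - 1 := by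
    intro K
    have h1 : (1 : G) ∈ K.carrier.toFinset := by simp [Subgroup.one_mem]
    rw [Finset.card_erase_of_mem h1]
    congr 1
    rw [Set.toFinset_card, Nat.card_eq_fintype_card]
    rfl
  have hfdisj : ∀ K1 K2 : Subgroup G, IsCoatom K1 → IsCoatom K2 → K1 ≠ K2 →
      Disjoint (f K1) (f K2) := by
    intro K1 K2 h1 h2 hne
    rw [Finset.disjoint_left]
    intro x hx1 hx2
    simp only [f, Finset.mem_erase, Set.mem_toFinset] at hx1 hx2
    have : x ∈ K1 ⊓ K2 := mem_inf.mpr ⟨hx1.2, hx2.2⟩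
    rw [hinter K1 K2 h1 h2 hne, Subgroup.mem_bot] at this
    exact hx1.1 this
  have hfsub : ∀ K : Subgroup G, f K ⊆ Finset.univ.erase 1 := by
    intro K x hx
    simp only [f, Finset.mem_erase, Set.mem_toFinset] at hx
    simp [hx.1]
  -- total count of a biUnion over a set of coatoms
  have hbi : ∀ T : Finset (Subgroup G), (∀ K ∈ T, IsCoatom K) →
      (T.biUnion f).card = ∑ K ∈ T, (Nat.card K - 1) := by
    intro T hT
    rw [Finset.card_biUnion]
    · exact Finset.sum_congr rfl fun K hK => hfcard K
    · intro K1 h1 K2 h2 hne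
      exact hfdisj K1 K2 (hT _ h1) (hT _ h2) hne
  -- count of one orbit
  have horbsum : ∀ M : Subgroup G, IsCoatom M → ((O M).biUnion f).card = n - (O M).card := by
    intro M hM
    rw [hbi _ (hOcoatom M hM)]
    have : ∀ K ∈ O M, Nat.card K - 1 = Nat.card M - 1 := fun K hK => by
      rw [hOcard M hM K hK]
    rw [Finset.sum_congr rfl this, Finset.sum_const, smul_eq_mul]
    have h1 := horbcard M hM
    have h2 : 2 ≤ Nat.card M := by
      have := (one_lt_card_iff_ne_bot M).mpr (hcoatom_ne_bot M hM)
      omega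
    have h3 : (O M).card * (Nat.card M - 1) = (O M).card * Nat.card M - (O M).card :=
      Nat.mul_sub_one _ _ ▸ by rw [Nat.mul_sub]
    omega
  -- orbit is at least 2 (M not normal)
  have horb2 : ∀ M : Subgroup G, IsCoatom M → 2 ≤ (O M).card ∧ 2 * (O M).card ≤ n := by
    intro M hM
    have h1 := horbcard M hM
    have hMcard : 2 ≤ Nat.card M := by
      have := (one_lt_card_iff_ne_bot M).mpr (hcoatom_ne_bot M hM)
      omega
    have hOpos : 1 ≤ (O M).card := by
      have : M ∈ O M := by
        rw [hmemO]
        exact ⟨1, one_smul _ _⟩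
      exact Finset.card_pos.mpr ⟨M, this⟩ 
    have hne1 : (O M).card ≠ 1 := by
      intro h
      rw [h, one_mul] at h1
      exact hM.1 (Subgroup.eq_top_of_card_eq M h1)
    constructor
    · omega
    · nlinarith
  -- choose first coatom
  obtain ⟨x0, hx0⟩ := exists_ne (1 : G)
  obtain ⟨M, hM, -⟩ := hcover x0 hx0
  -- find an element outside the orbit's union
  have hsubuniv : (O M).biUnion f ⊆ Finset.univ.erase 1 := by
    intro x hx
    obtain ⟨K, hK, hxK⟩ := Finset.mem_biUnion.mp hx
    exact hfsub K hxK
  have hcardlt : ((O M).biUnion f).card < (Finset.univ.erase (1 : G)).card := by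
    rw [horbsum M hM, Finset.card_erase_of_mem (Finset.mem_univ 1)]
    have := horb2 M hM
    have : (2:ℕ) ≤ (O M).card := this.1
    have huniv : (Finset.univ : Finset G).card = n := by
      rw [Finset.card_univ, hn, Nat.card_eq_fintype_card]
    omega
  have hne' : (O M).biUnion f ≠ Finset.univ.erase 1 := by
    intro h
    rw [h] at hcardlt
    omega
  obtain ⟨y, hy, hynot⟩ := Finset.exists_of_ssubset (lt_of_le_of_ne hsubuniv hne')
  have hy1 : y ≠ 1 := (Finset.mem_erase.mp hy).1
  obtain ⟨M', hM', hyM'⟩ := hcover y hy1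
  have hM'not : M' ∉ O M := by
    intro h
    apply hynot
    refine Finset.mem_biUnion.mpr ⟨M', h, ?_⟩
    simp only [f, Finset.mem_erase, Set.mem_toFinset]
    exact ⟨hy1, hyM'⟩
  have hdisjO : Disjoint (O M) (O M') := by
    rw [Finset.disjoint_left]
    intro K hK hK'
    apply hM'not
    rw [hmemO] at hK hK' ⊢
    obtain ⟨a, rfl⟩ := hK
    obtain ⟨b, hb⟩ := hK'
    exact ⟨b⁻¹ * a, by rw [mul_smul, ← hb, inv_smul_smul]⟩
  have hcoatU : ∀ K ∈ O M ∪ O M', IsCoatom K := by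
    intro K hK
    rcases Finset.mem_union.mp hK with h | h
    · exact hOcoatom M hM K h
    · exact hOcoatom M' hM' K h
  have hUsub : (O M ∪ O M').biUnion f ⊆ Finset.univ.erase 1 := by
    intro x hx
    obtain ⟨K, hK, hxK⟩ := Finset.mem_biUnion.mp hx
    exact hfsub K hxK
  have hUcard := hbi _ hcoatU
  have hsum1 : ∑ K ∈ O M, (Nat.card K - 1) = n - (O M).card := by
    rw [← hbi _ (hOcoatom M hM)]
    exact horbsum M hM
  have hsum2 : ∑ K ∈ O M', (Nat.card K - 1) = n - (O M').card := by
    rw [← hbi _ (hOcoatom M' hM')]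
    exact horbsum M' hM'
  rw [Finset.sum_union hdisjO, hsum1, hsum2] at hUcard
  have hle := Finset.card_le_card hUsub
  rw [hUcard, Finset.card_erase_of_mem (Finset.mem_univ 1)] at hle
  have huniv : (Finset.univ : Finset G).card = n := by
    rw [Finset.card_univ, hn, Nat.card_eq_fintype_card]
  have ⟨hi2, hi2n⟩ := horb2 M hM
  have ⟨hi2', hi2n'⟩ := horb2 M' hM'
  omega

lemma schmidt_aux_quot_coatom {N : Subgroup G} [N.Normal]
    (hmax : ∀ H : Subgroup G, IsCoatom H → Group.IsNilpotent ↥H)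
    (K : Subgroup (G ⧸ N)) (hK : IsCoatom K) : Group.IsNilpotent ↥K := by
  set φ := QuotientGroup.mk' N with hφ
  have hsurj : Function.Surjective φ := QuotientGroup.mk'_surjective N
  set K' := K.comap φ with hK'def
  have hmapK : K'.map φ = K := Subgroup.map_comap_eq_self_of_surjective hsurj K
  have hker : φ.ker ≤ K' := Subgroup.ker_le_comap φ K
  have hK'coatom : IsCoatom K' := by
    constructor
    · intro h
      apply hK.1
      rw [← hmapK, h, Subgroup.map_top_of_surjective _ hsurj]
    · intro L hL
      have h1 : K < L.map φ := by
        refine lt_of_le_of_ne (hmapK ▸ Subgroup.map_mono hL.le) ?_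
        intro h
        have : L = K' := by
          rw [hK'def, h, Subgroup.comap_map_eq_self (le_trans hker hL.le)]
        exact (lt_irrefl _ (this ▸ hL)).elim
      have h2 : L.map φ = ⊤ := hK.2 _ h1
      have := congrArg (fun J => Subgroup.comap φ J) h2
      simpa [Subgroup.comap_map_eq_self (le_trans hker hL.le), Subgroup.comap_top] using this
  haveI : Group.IsNilpotent ↥K' := hmax K' hK'coatom
  have : Group.IsNilpotent ↥(K'.map φ) :=
    nilpotent_of_surjective (φ.subgroupMap K') (φ.subgroupMap_surjective K')
  rwa [hmapK] at this

lemma schmidt_aux_not_perfect :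
    ∀ (n : ℕ) (G : Type u) [Group G] [Finite G], Nat.card G ≤ n →
      ¬ Group.IsNilpotent G → (∀ H : Subgroup G, IsCoatom H → Group.IsNilpotent ↥H) →
      commutator G ≠ ⊤ := by
  intro n
  induction n with
  | zero =>
    intro G _ _ hcard _ _
    have : 0 < Nat.card G := Nat.card_pos
    omega
  | succ n ih =>
    intro G _ _ hcard hG hmax
    have hprop : ∀ H : Subgroup G, H ≠ ⊤ → Group.IsNilpotent ↥H := fun H h =>
      schmidt_aux_proper_nilpotent hmax h
    by_cases hsimp : ∀ N : Subgroup G, N.Normal → N = ⊥ ∨ N = ⊤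
    · exact (schmidt_aux_no_simple hG hprop hsimp).elim
    · push_neg at hsimp
      obtain ⟨N, hNn, hNb, hNt⟩ := hsimp
      haveI := hNn
      intro hc
      have hsurj : Function.Surjective (QuotientGroup.mk' N) := QuotientGroup.mk'_surjective N
      have hcardQ : Nat.card (G ⧸ N) ≤ n := by
        have h1 := Subgroup.card_eq_card_quotient_mul_card_subgroup N
        have h2 : 2 ≤ Nat.card N := (one_lt_card_iff_ne_bot N).mpr hNb
        have h3 : 1 ≤ Nat.card (G ⧸ N) := Nat.card_pos
        nlinarith
      have hcomQ : commutator (G ⧸ N) = ⊤ := by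
        have h1 : Subgroup.map (QuotientGroup.mk' N) (commutator G) = commutator (G ⧸ N) := by
          rw [commutator_def, commutator_def (G ⧸ N), Subgroup.map_commutator,
            Subgroup.map_top_of_surjective _ hsurj]
        rw [← h1, hc, Subgroup.map_top_of_surjective _ hsurj]
      by_cases hQ : Group.IsNilpotent (G ⧸ N)
      · haveI : Nontrivial (G ⧸ N) := by
          rcases subsingleton_or_nontrivial (G ⧸ N) with h | h
          · exact absurd (QuotientGroup.subgroup_eq_top_of_subsingleton N h) hNt
          · exact h
        exact schmidt_aux_commutator_ne_top (G ⧸ N) hcomQ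
      · exact ih (G ⧸ N) hcardQ hQ (fun K hK => schmidt_aux_quot_coatom hmax K hK) hcomQ

lemma schmidt_aux_index_prime {M : Subgroup G} (hM : IsCoatom M) (hc : commutator G ≤ M) :
    M.index.Prime := by
  haveI hMn : M.Normal := by
    constructor
    intro h hh g
    have hcm : ⁅g, h⁆ ∈ M := hc (commutator_mem_commutator (mem_top _) (mem_top _))
    have he : g * h * g⁻¹ = ⁅g, h⁆ * h := by group
    rw [he]
    exact M.mul_mem hcm hh
  have hcomm : ∀ x y : G ⧸ M, x * y = y * x := by
    intro x y
    obtain ⟨a, rfl⟩ := QuotientGroup.mk'_surjective M x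
    obtain ⟨b, rfl⟩ := QuotientGroup.mk'_surjective M y
    show ((a * b : G) : G ⧸ M) = ((b * a : G) : G ⧸ M)
    rw [QuotientGroup.eq]
    have h1 : ⁅b⁻¹, a⁻¹⁆ ∈ M := hc (commutator_mem_commutator (mem_top _) (mem_top _))
    have h2 : (a * b)⁻¹ * (b * a) = ⁅b⁻¹, a⁻¹⁆ := by group
    rwa [h2]
  letI : CommGroup (G ⧸ M) := { (inferInstance : Group (G ⧸ M)) with mul_comm := hcomm }
  haveI : Nontrivial (G ⧸ M) := by
    rcases subsingleton_or_nontrivial (G ⧸ M) with h | h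
    · exact absurd (QuotientGroup.subgroup_eq_top_of_subsingleton M h) hM.1
    · exact h
  haveI : IsSimpleGroup (G ⧸ M) := by
    constructor
    intro H _
    set H' := H.comap (QuotientGroup.mk' M) with hH'
    have hker : M ≤ H' := by
      rw [← QuotientGroup.ker_mk' M]
      exact Subgroup.ker_le_comap _ H
    have hmapH : H'.map (QuotientGroup.mk' M) = H :=
      Subgroup.map_comap_eq_self_of_surjective (QuotientGroup.mk'_surjective M) H
    rcases eq_or_lt_of_le hker with h | h
    · left
      rw [← hmapH, ← h, Subgroup.map_eq_bot_iff, QuotientGroup.ker_mk' M]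
    · right
      rw [← hmapH, hM.2 _ h, Subgroup.map_top_of_surjective _ (QuotientGroup.mk'_surjective M)]
  exact IsSimpleGroup.prime_card

end schmidt

/-- (O. J. Schmidt) If a finite group `G` is not nilpotent but all its maximal subgroups
are nilpotent, then `|G|` is divisible by exactly two distinct primes. -/
theorem schmidt_two_prime_divisors (G : Type*) [Group G] [Finite G]
    (hG : ¬ Group.IsNilpotent G)
    (hmax : ∀ H : Subgroup G, IsCoatom H → Group.IsNilpotent ↥H) :
    (Nat.card G).primeFactors.card = 2 := by
  classical
  set n := Nat.card G with hn
  have hn0 : n ≠ 0 := Nat.card_pos.ne'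
  have hprop : ∀ H : Subgroup G, H ≠ ⊤ → Group.IsNilpotent ↥H := fun H h =>
    schmidt_aux_proper_nilpotent hmax h
  -- at least two prime factors
  have hge2 : 2 ≤ n.primeFactors.card := by
    by_contra hlt
    push_neg at hlt
    rcases (by omega : n.primeFactors.card = 0 ∨ n.primeFactors.card = 1) with h0 | h1
    · have : n.primeFactors = ∅ := Finset.card_eq_zero.mp h0
      rcases Nat.primeFactors_eq_empty.mp this with h | h
      · exact hn0 h
      · have : Subsingleton G := Nat.card_eq_one_iff_unique.mp h |>.1
        exact hG Group.isNilpotent_of_subsingleton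
    · obtain ⟨q, hq⟩ := Finset.card_eq_one.mp h1
      have hqprime : q.Prime := Nat.prime_of_mem_primeFactors (hq ▸ Finset.mem_singleton_self q)
      have hpow : ∃ k, n = q ^ k := by
        refine ⟨n.primeFactorsList.length, Nat.eq_prime_pow_of_unique_prime_dvd hn0 ?_⟩
        intro r hr hrd
        have : r ∈ n.primeFactors := Nat.mem_primeFactors.mpr ⟨hr, hrd, hn0⟩
        rw [hq, Finset.mem_singleton] at this
        exact this
      obtain ⟨k, hk⟩ := hpow
      haveI : Fact q.Prime := ⟨hqprime⟩
      have : IsPGroup q G := IsPGroup.of_card hk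
      exact hG this.isNilpotent
  -- at most two prime factors
  have hle2 : n.primeFactors.card ≤ 2 := by
    by_contra hc3
    push_neg at hc3
    have hcom : commutator G ≠ ⊤ := schmidt_aux_not_perfect n G le_rfl hG hmax
    obtain ⟨M, hM, hcM⟩ := (eq_top_or_exists_le_coatom (commutator G)).resolve_left hcom
    have hpprime : M.index.Prime := schmidt_aux_index_prime hM hcM
    haveI hMn : M.Normal := by
      constructor
      intro h hh g
      have hcm : ⁅g, h⁆ ∈ M := hcM (commutator_mem_commutator (mem_top _) (mem_top _))
      have he : g * h * g⁻¹ = ⁅g, h⁆ * h := by group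
      rw [he]
      exact M.mul_mem hcm hh
    set p := M.index with hpdef
    have hpn : p ∣ n := M.index_dvd_card
    have hMcard : Nat.card M * p = n := M.card_mul_index
    have hMnil : Group.IsNilpotent ↥M := hmax M hM
    -- normal Sylow subgroups for each prime other than p
    have hsyl : ∀ s ∈ n.primeFactors, s ≠ p → ∃ S : Subgroup G, S.Normal ∧
        Nat.card S = s ^ n.factorization s := by
      intro s hs hsp
      have hsprime : s.Prime := Nat.prime_of_mem_primeFactors hs
      haveI : Fact s.Prime := ⟨hsprime⟩
      haveI := hMnil
      let R : Sylow s ↥M := default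
      haveI hRn : (R : Subgroup ↥M).Normal :=
        Sylow.normal_of_normalizerCondition normalizerCondition_of_isNilpotent R
      haveI : (R : Subgroup ↥M).Characteristic := Sylow.characteristic_of_normal R hRn
      refine ⟨(R : Subgroup ↥M).map M.subtype, inferInstance, ?_⟩
      have h1 : Nat.card ((R : Subgroup ↥M).map M.subtype) = Nat.card (R : Subgroup ↥M) :=
        (Nat.card_congr (Subgroup.equivMapOfInjective _ _ M.subtype_injective).toEquiv).symm
      have h2 : Nat.card (R : Subgroup ↥M) = s ^ (Nat.card ↥M).factorization s :=
        R.card_eq_multiplicity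
      have h3 : (Nat.card ↥M).factorization s = n.factorization s := by
        have hM0 : Nat.card ↥M ≠ 0 := Nat.card_pos.ne'
        have hp0 : p ≠ 0 := hpprime.ne_zero
        rw [← hMcard, Nat.factorization_mul hM0 hp0]
        simp only [Finsupp.coe_add, Pi.add_apply]
        rw [hpprime.factorization]
        simp [Finsupp.single_apply, Ne.symm hsp]
      rw [h1, h2, h3]
    -- a Sylow p-subgroup
    haveI : Fact p.Prime := ⟨hpprime⟩
    let P : Sylow p G := default
    have hPcard : Nat.card (P : Subgroup G) = p ^ n.factorization p := P.card_eq_multiplicity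
    -- normal Sylow subgroups normalize P
    have hSnorm : ∀ s ∈ n.primeFactors, s ≠ p →
        ∃ S : Subgroup G, Nat.card S = s ^ n.factorization s ∧
          S ≤ (normalizer ((P : Subgroup G) : Set G)) := by
      intro s hs hsp
      have hsprime : s.Prime := Nat.prime_of_mem_primeFactors hs
      obtain ⟨S, hSn, hScard⟩ := hsyl s hs hsp
      haveI := hSn
      have hproper : (P : Subgroup G) ⊔ S ≠ ⊤ := by
        intro htop
        -- a third prime exists
        have hsub : ({p, s} : Finset ℕ) ⊆ n.primeFactors := by
          intro r hr
          rcases Finset.mem_insert.mp hr with h | h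
          · subst h
            exact Nat.mem_primeFactors.mpr ⟨hpprime, hpn, hn0⟩
          · rw [Finset.mem_singleton] at h
            subst h
            exact hs
        have hcard2 : ({p, s} : Finset ℕ).card ≤ 2 := Finset.card_insert_le _ _ |>.trans (by simp)
        have hpos : 0 < (n.primeFactors \ ({p, s} : Finset ℕ)).card := by
          have := Finset.le_card_sdiff ({p, s} : Finset ℕ) n.primeFactors
          omega
        obtain ⟨t, ht⟩ := Finset.card_pos.mp hpos
        rw [Finset.mem_sdiff] at ht
        obtain ⟨htpf, htne⟩ := ht
        have htprime : t.Prime := Nat.prime_of_mem_primeFactors htpf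
        have htp : t ≠ p := fun h => htne (by simp [h])
        have hts : t ≠ s := fun h => htne (by simp [h])
        -- n ≤ |P| * |S|
        have hle : n ≤ Nat.card (P : Subgroup G) * Nat.card S := by
          have h1 : Nat.card ((P : Subgroup G) ⊔ S : Subgroup G) = n := by
            rw [htop]
            exact Subgroup.card_top
          have h2 : (((P : Subgroup G) ⊔ S : Subgroup G) : Set G)
              = ((P : Subgroup G) : Set G) * (S : Set G) := Subgroup.mul_normal _ _
          calc n = Nat.card (((P : Subgroup G) ⊔ S : Subgroup G) : Set G) := h1.symm
            _ = Nat.card (((P : Subgroup G) : Set G) * (S : Set G)) := by rw [h2]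
            _ ≤ _ := Set.natCard_mul_le
        -- |P| * |S| divides n
        have hdvd : Nat.card (P : Subgroup G) * Nat.card S ∣ n := by
          rw [hPcard, hScard]
          refine Nat.Coprime.mul_dvd_of_dvd_of_dvd ?_ (Nat.ordProj_dvd n p) (Nat.ordProj_dvd n s)
          exact Nat.Coprime.pow _ _ ((Nat.coprime_primes hpprime hsprime).mpr (Ne.symm hsp))
        have heq : n = Nat.card (P : Subgroup G) * Nat.card S :=
          le_antisymm hle (Nat.le_of_dvd (Nat.pos_of_ne_zero hn0) hdvd)
        -- contradiction with t
        have htdvd : t ∣ p ^ n.factorization p * s ^ n.factorization s := by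
          rw [← hPcard, ← hScard, ← heq]
          exact Nat.dvd_of_mem_primeFactors htpf
        rcases (Nat.Prime.dvd_mul htprime).mp htdvd with h | h
        · exact htp ((Nat.prime_dvd_prime_iff_eq htprime hpprime).mp (htprime.dvd_of_dvd_pow h))
        · exact hts ((Nat.prime_dvd_prime_iff_eq htprime hsprime).mp (htprime.dvd_of_dvd_pow h))
      have hnil := hprop _ hproper
      have hsup := schmidt_aux_sylow_normalizer hnil P le_sup_left
      exact ⟨S, hScard, le_trans le_sup_right hsup⟩
    -- the normalizer of P is everything
    have hNtop : (normalizer ((P : Subgroup G) : Set G)) = ⊤ := by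
      have hN0 : Nat.card ((normalizer ((P : Subgroup G) : Set G))) ≠ 0 := Nat.card_pos.ne'
      have hdvd : n ∣ Nat.card ((normalizer ((P : Subgroup G) : Set G))) := by
        rw [← Nat.factorization_le_iff_dvd hn0 hN0]
        rw [Finsupp.le_iff]
        intro q hq
        rw [Nat.support_factorization] at hq
        have hqprime : q.Prime := Nat.prime_of_mem_primeFactors hq
        by_cases hqp : q = p
        · subst hqp
          have h1 : Nat.card (P : Subgroup G) ∣ Nat.card ((normalizer ((P : Subgroup G) : Set G))) :=
            Subgroup.card_dvd_of_le Subgroup.le_normalizer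
          rw [hPcard] at h1
          exact (Nat.Prime.pow_dvd_iff_le_factorization hqprime hN0).mp h1
        · obtain ⟨S, hScard, hSle⟩ := hSnorm q hq hqp
          have h1 : Nat.card S ∣ Nat.card ((normalizer ((P : Subgroup G) : Set G))) :=
            Subgroup.card_dvd_of_le hSle
          rw [hScard] at h1
          exact (Nat.Prime.pow_dvd_iff_le_factorization hqprime hN0).mp h1
      have hdvd2 : Nat.card ((normalizer ((P : Subgroup G) : Set G))) ∣ n :=
        Subgroup.card_subgroup_dvd_card _
      exact Subgroup.eq_top_of_card_eq _ (Nat.dvd_antisymm hdvd2 hdvd)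
    haveI hPnormal : (P : Subgroup G).Normal := Subgroup.normalizer_eq_top_iff.mp hNtop
    -- all Sylow subgroups are normal, so G is nilpotent
    have hnil : Group.IsNilpotent G := by
      refine ((isNilpotent_of_finite_tfae (G := G)).out 3 0).mp ?_
      intro q hq Q
      by_cases hqn : q ∣ n
      · have hqpf : q ∈ n.primeFactors := Nat.mem_primeFactors.mpr ⟨hq.1, hqn, hn0⟩
        by_cases hqp : q = p
        · subst hqp
          obtain ⟨g, hg⟩ := MulAction.exists_smul_eq G P Q
          rw [← hg, Sylow.smul_eq_of_normal]
          exact hPnormal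
        · obtain ⟨S, hSn, hScard⟩ := hsyl q hqpf hqp
          have hSp : IsPGroup q S := IsPGroup.of_card hScard
          obtain ⟨Q₁, hQ₁⟩ := hSp.exists_le_sylow
          have hSQ : S = (Q₁ : Subgroup G) := by
            refine Subgroup.eq_of_le_of_card_ge hQ₁ ?_
            rw [hScard, Q₁.card_eq_multiplicity]
          haveI : (Q₁ : Subgroup G).Normal := hSQ ▸ hSn
          obtain ⟨g, hg⟩ := MulAction.exists_smul_eq G Q₁ Q
          rw [← hg, Sylow.smul_eq_of_normal]
          infer_instance
      · have h1 : Nat.card (Q : Subgroup G) = q ^ n.factorization q := Q.card_eq_multiplicity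
        rw [Nat.factorization_eq_zero_of_not_dvd hqn, pow_zero] at h1
        have : (Q : Subgroup G) = ⊥ := Subgroup.card_eq_one.mp h1
        rw [this]
        infer_instance
    exact hG hnil
  omega
end

section
/- If G is a finite solvable group of order p_1^{a_1} ⋯ p_r^{a_r} (p_1, …, p_r distinct primes), then there exists a set of Sylow subgroups P_1, P_2, …, P_r, with P_i a Sylow p_i-subgroup of G, such that P_i P_j = P_j P_i is a subgroup of G for all i ≠ j, and in fact the product P_{i_1} P_{i_2} ⋯ P_{i_k} is a subgroup of G for any subset {i_1, …, i_k} of the indices from 1 to r. -/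
open Pointwise

universe u

private lemma hall_solvable (n : ℕ) : ∀ (G : Type u) [Group G] [Finite G] [Group.IsSolvable G],
    Nat.card G = n → ∀ m k : ℕ, Nat.card G = m * k → Nat.Coprime m k →
    ∃ H : Subgroup G, Nat.card H = m := by
  induction n using Nat.strong_induction_on with
  | _ n ih =>
  intro G _ _ _ hn m k hmk hcop
  rcases eq_or_ne m 1 with rfl | hm1
  · exact ⟨⊥, Subgroup.card_bot⟩
  have hGpos : 0 < Nat.card G := Nat.card_pos
  have hm0 : m ≠ 0 := by rintro rfl; simp at hmk; omega
  have hk0 : k ≠ 0 := by rintro rfl; simp at hmk; omega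
  have hm2 : 2 ≤ m := by omega
  have hG2 : 2 ≤ Nat.card G := by
    rw [hmk]; have : 1 ≤ k := by omega
    calc 2 ≤ m := hm2
    _ = m * 1 := (mul_one m).symm
    _ ≤ m * k := Nat.mul_le_mul_left m this
  -- minimal nontrivial normal subgroup
  obtain ⟨c, hc, hmin⟩ := Nat.lt_wfRel.wf.has_min
      {c | ∃ N : Subgroup G, N.Normal ∧ N ≠ ⊥ ∧ Nat.card N = c}
      ⟨Nat.card G, ⊤, inferInstance, by
        rw [← Subgroup.one_lt_card_iff_ne_bot, Subgroup.card_top]; omega, Subgroup.card_top⟩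
  obtain ⟨N, hNnorm, hNbot, rfl⟩ := hc
  haveI := hNnorm
  have hmin' : ∀ N' : Subgroup G, N'.Normal → N' ≠ ⊥ → Nat.card N ≤ Nat.card N' :=
    fun N' h1 h2 => Nat.le_of_not_lt (hmin _ ⟨N', h1, h2, rfl⟩)
  -- N is abelian
  have hNN : ⁅N, N⁆ = ⊥ := by
    by_contra h
    have h1 : ⁅N, N⁆ ≤ N := Subgroup.commutator_le_right N N
    haveI : (⁅N, N⁆ : Subgroup G).Normal := Subgroup.commutator_normal N N
    have h3 : ⁅N, N⁆ = N := Subgroup.eq_of_le_of_card_ge h1 (hmin' _ this h)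
    have key : ∀ j : ℕ, (derivedSeries ↥N j).map N.subtype = N := by
      intro j; induction j with
      | zero => rw [derivedSeries_zero, ← MonoidHom.range_eq_map, Subgroup.range_subtype]
      | succ j hj => rw [derivedSeries_succ, Subgroup.map_commutator, hj, h3]
    obtain ⟨j, hj⟩ := Group.IsSolvable.solvable (G := ↥N)
    have h4 := key j
    rw [hj, Subgroup.map_bot] at h4
    exact hNbot h4.symm
  have hcomm : ∀ x y : ↥N, x * y = y * x := by
    have hcen := Subgroup.commutator_eq_bot_iff_le_centralizer.mp hNN
    intro x y
    have hx := Subgroup.mem_centralizer_iff.mp (hcen x.2)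
    exact Subtype.ext (hx y y.2).symm
  -- N is a q-group
  have hNcard1 : 1 < Nat.card N := (Subgroup.one_lt_card_iff_ne_bot N).mpr hNbot
  set q := (Nat.card N).minFac with hqdef
  have hqprime : q.Prime := Nat.minFac_prime (by omega)
  haveI : Fact q.Prime := ⟨hqprime⟩
  obtain ⟨S⟩ := (inferInstance : Nonempty (Sylow q ↥N))
  have hSnorm : (S : Subgroup ↥N).Normal := by
    constructor
    intro x hx g
    have : g * x * g⁻¹ = x := by rw [hcomm g x, mul_inv_cancel_right]
    rwa [this]
  haveI := hSnorm
  haveI := Sylow.characteristic_of_normal S hSnorm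
  haveI : ((S : Subgroup ↥N).map N.subtype).Normal :=
    ConjAct.normal_of_characteristic_of_normal
  have hqdvd : q ∣ Nat.card N := Nat.minFac_dvd _
  set b := (Nat.card ↥N).factorization q with hbdef
  have hScard : Nat.card (S : Subgroup ↥N) = q ^ b := S.card_eq_multiplicity
  have hb1 : 0 < b := hqprime.factorization_pos_of_dvd (by omega) hqdvd
  have hmapcard : Nat.card ((S : Subgroup ↥N).map N.subtype) = q ^ b := by
    rw [← hScard]
    exact (Nat.card_congr ((S : Subgroup ↥N).equivMapOfInjective N.subtype
      N.subtype_injective).toEquiv).symm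
  have hNq : Nat.card N = q ^ b := by
    have h1 : Nat.card N ≤ Nat.card ((S : Subgroup ↥N).map N.subtype) := by
      apply hmin' _ inferInstance
      rw [← Subgroup.one_lt_card_iff_ne_bot, hmapcard]
      exact Nat.one_lt_pow (by omega) hqprime.one_lt
    have h2 : Nat.card ((S : Subgroup ↥N).map N.subtype) ≤ Nat.card N :=
      Subgroup.card_le_of_le (Subgroup.map_subtype_le _)
    omega
  -- quotient
  have hcardQN : Nat.card G = Nat.card (G ⧸ N) * Nat.card N :=
    Subgroup.card_eq_card_quotient_mul_card_subgroup N
  have hQpos : 0 < Nat.card (G ⧸ N) := Nat.card_pos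
  have hQlt : Nat.card (G ⧸ N) < n := by
    rw [← hn]
    rw [hcardQN]
    exact (Nat.lt_mul_iff_one_lt_right hQpos).mpr hNcard1
  have hqG : q ∣ m * k := hmk ▸ hqdvd.trans (Subgroup.card_subgroup_dvd_card N)
  have hqbG : q ^ b ∣ m * k := by rw [← hNq, ← hmk]; exact Subgroup.card_subgroup_dvd_card N
  have hqb0 : 0 < q ^ b := pow_pos hqprime.pos b
  rcases (Nat.Prime.dvd_mul hqprime).mp hqG with hqm | hqk
  · -- q ∣ m
    have hcop1 : Nat.Coprime (q ^ b) k :=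
      Nat.Coprime.pow_left b (Nat.Coprime.coprime_dvd_left hqm hcop)
    obtain ⟨m', hm'⟩ := hcop1.dvd_of_dvd_mul_right hqbG
    have hcardQ : Nat.card (G ⧸ N) = m' * k := by
      apply Nat.eq_of_mul_eq_mul_left hqb0
      calc q ^ b * Nat.card (G ⧸ N) = Nat.card (G ⧸ N) * Nat.card N := by rw [hNq, mul_comm]
      _ = Nat.card G := hcardQN.symm
      _ = m * k := hmk
      _ = q ^ b * (m' * k) := by rw [hm']; ring
    have hcop' : Nat.Coprime m' k :=
      Nat.Coprime.coprime_dvd_left ⟨q ^ b, by rw [hm']; ring⟩ hcop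
    obtain ⟨H', hH'⟩ := ih _ hQlt (G ⧸ N) rfl m' k hcardQ hcop'
    refine ⟨H'.comap (QuotientGroup.mk' N), ?_⟩
    have hm'0 : m' ≠ 0 := by rintro rfl; simp at hm'; omega
    have hidxH' : H'.index = k := by
      have h1 : Nat.card H' * H'.index = Nat.card (G ⧸ N) := Subgroup.card_mul_index H'
      rw [hH', hcardQ] at h1
      exact Nat.eq_of_mul_eq_mul_left (by omega) h1
    have hidxK : (H'.comap (QuotientGroup.mk' N)).index = k := by
      rw [Subgroup.index_comap_of_surjective _ (QuotientGroup.mk'_surjective N), hidxH']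
    have h2 : Nat.card (H'.comap (QuotientGroup.mk' N)) * k = m * k := by
      have h3 := Subgroup.card_mul_index (H'.comap (QuotientGroup.mk' N))
      rw [hidxK, hmk] at h3
      exact h3
    exact Nat.eq_of_mul_eq_mul_right (by omega) h2
  · -- q ∣ k
    have hcop1 : Nat.Coprime (q ^ b) m :=
      Nat.Coprime.pow_left b (Nat.Coprime.coprime_dvd_left hqk hcop.symm)
    obtain ⟨k', hk'⟩ := hcop1.dvd_of_dvd_mul_left hqbG
    have hcardQ : Nat.card (G ⧸ N) = m * k' := by
      apply Nat.eq_of_mul_eq_mul_left hqb0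
      calc q ^ b * Nat.card (G ⧸ N) = Nat.card (G ⧸ N) * Nat.card N := by rw [hNq, mul_comm]
      _ = Nat.card G := hcardQN.symm
      _ = m * k := hmk
      _ = q ^ b * (m * k') := by rw [hk']; ring
    have hcop' : Nat.Coprime m k' :=
      Nat.Coprime.coprime_dvd_right ⟨q ^ b, by rw [hk']; ring⟩ hcop
    obtain ⟨H', hH'⟩ := ih _ hQlt (G ⧸ N) rfl m k' hcardQ hcop'
    set K := H'.comap (QuotientGroup.mk' N) with hKdef
    have hk'0 : k' ≠ 0 := by rintro rfl; simp at hk'; omega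
    have hidxH' : H'.index = k' := by
      have h1 : Nat.card H' * H'.index = Nat.card (G ⧸ N) := Subgroup.card_mul_index H'
      rw [hH', hcardQ] at h1
      exact Nat.eq_of_mul_eq_mul_left (by omega) h1
    have hidxK : K.index = k' := by
      rw [hKdef, Subgroup.index_comap_of_surjective _ (QuotientGroup.mk'_surjective N), hidxH']
    have hcardK : Nat.card K = m * q ^ b := by
      have h2 : Nat.card K * k' = (m * q ^ b) * k' := by
        have h3 := Subgroup.card_mul_index K
        rw [hidxK, hmk, hk'] at h3
        rw [h3]; ring
      exact Nat.eq_of_mul_eq_mul_right (by omega) h2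
    have hNK : N ≤ K := by
      intro x hx
      show QuotientGroup.mk' N x ∈ H'
      have hx1 : (QuotientGroup.mk' N) x = 1 := by
        rw [← MonoidHom.mem_ker, QuotientGroup.ker_mk']; exact hx
      rw [hx1]; exact H'.one_mem
    have hcardN' : Nat.card (N.subgroupOf K) = q ^ b := by
      rw [← hNq]; exact Nat.card_congr (Subgroup.subgroupOfEquivOfLe hNK).toEquiv
    have hidxN' : (N.subgroupOf K).index = m := by
      have h1 : Nat.card (N.subgroupOf K) * (N.subgroupOf K).index = Nat.card K :=
        Subgroup.card_mul_index _
      rw [hcardN', hcardK, mul_comm m (q ^ b)] at h1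
      exact Nat.eq_of_mul_eq_mul_left hqb0 h1
    have hcop'' : Nat.Coprime (Nat.card (N.subgroupOf K)) (N.subgroupOf K).index := by
      rw [hcardN', hidxN']; exact hcop1
    obtain ⟨H, hH⟩ := Subgroup.exists_right_complement'_of_coprime hcop''
    have hcardH : Nat.card H = m := by
      have h1 := hH.card_mul
      rw [hcardN', hcardK, mul_comm m (q ^ b)] at h1
      exact Nat.eq_of_mul_eq_mul_left hqb0 h1
    refine ⟨H.map K.subtype, ?_⟩
    rw [← hcardH]
    exact (Nat.card_congr (H.equivMapOfInjective K.subtype K.subtype_injective).toEquiv).symm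

private lemma prod_pairwise_coprime_dvd {ι : Type*} [DecidableEq ι] (t : Finset ι) (f : ι → ℕ)
    (n : ℕ) (hcop : ∀ i ∈ t, ∀ j ∈ t, i ≠ j → Nat.Coprime (f i) (f j))
    (hdvd : ∀ i ∈ t, f i ∣ n) : (∏ i ∈ t, f i) ∣ n := by
  induction t using Finset.induction_on with
  | empty => simp
  | insert _ _ hx ih =>
    rename_i x s
    rw [Finset.prod_insert hx]
    refine Nat.Coprime.mul_dvd_of_dvd_of_dvd ?_ (hdvd x (by simp)) (ih ?_ ?_)
    · exact Nat.Coprime.prod_right fun j hj =>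
        hcop x (by simp) j (by simp [hj]) (fun e => hx (e ▸ hj))
    · exact fun i hi j hj hij => hcop i (by simp [hi]) j (by simp [hj]) hij
    · exact fun i hi => hdvd i (by simp [hi])

private lemma coe_mul_coe_eq {G : Type*} [Group G] [Finite G] (H K L : Subgroup G)
    (hHL : H ≤ L) (hKL : K ≤ L)
    (hcard : Nat.card H * Nat.card K = Nat.card L)
    (hcop : Nat.Coprime (Nat.card H) (Nat.card K)) :
    (H : Set G) * (K : Set G) = (L : Set G) := by
  have e1 : Nat.card (H.subgroupOf L) = Nat.card H :=
    Nat.card_congr (Subgroup.subgroupOfEquivOfLe hHL).toEquiv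
  have e2 : Nat.card (K.subgroupOf L) = Nat.card K :=
    Nat.card_congr (Subgroup.subgroupOfEquivOfLe hKL).toEquiv
  have hc : Subgroup.IsComplement' (H.subgroupOf L) (K.subgroupOf L) :=
    Subgroup.isComplement'_of_coprime (by rw [e1, e2, hcard]) (by rw [e1, e2]; exact hcop)
  have hmul : ((H.subgroupOf L : Subgroup L) : Set L) * ((K.subgroupOf L : Subgroup L) : Set L)
      = Set.univ := hc.mul_eq
  ext x
  constructor
  · rintro ⟨h, hh, k, hk, rfl⟩
    exact L.mul_mem (hHL hh) (hKL hk)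
  · intro hx
    have hx' : (⟨x, hx⟩ : L) ∈ ((H.subgroupOf L : Subgroup L) : Set L) *
        ((K.subgroupOf L : Subgroup L) : Set L) := by
      rw [hmul]; trivial
    rcases hx' with ⟨h, hh, k, hk, hhk⟩
    refine ⟨(h : G), hh, (k : G), hk, ?_⟩
    exact congrArg Subtype.val hhk

/-- (P. Hall) A finite solvable group of order `p₁^a₁ ⋯ p_r^a_r` has a Sylow system: a
family of Sylow subgroups `P 1, …, P r` (one for each prime) such that
`P i * P j = P j * P i` for all `i ≠ j` and the product of the members of any subset of
the family (as a set) is a subgroup of `G`. -/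
theorem exists_sylow_system_of_solvable (G : Type*) [Group G] [Fintype G] [Group.IsSolvable G]
    (r : ℕ) (p a : Fin r → ℕ) (hp : ∀ i, (p i).Prime) (hinj : Function.Injective p)
    (ha : ∀ i, 0 < a i) (hcard : Fintype.card G = ∏ i, p i ^ a i) :
    ∃ P : Fin r → Subgroup G,
      (∀ i, Nat.card ↥(P i) = p i ^ a i) ∧
        (∀ i j, i ≠ j →
          (P i : Set G) * (P j : Set G) = (P j : Set G) * (P i : Set G)) ∧
        ∀ l : List (Fin r), l.Nodup →
          ∃ K : Subgroup G, (K : Set G) = (l.map fun i => ((P i : Set G))).prod := by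
  classical
  have hcardG : Nat.card G = ∏ i, p i ^ a i := by rw [Nat.card_eq_fintype_card, hcard]
  have hppos : ∀ i, 0 < p i ^ a i := fun i => pow_pos (hp i).pos _
  have hpcop : ∀ i j, i ≠ j → Nat.Coprime (p i ^ a i) (p j ^ a j) := fun i j hij =>
    Nat.Coprime.pow _ _ ((Nat.coprime_primes (hp i) (hp j)).mpr (fun h => hij (hinj h)))
  -- Hall complements to each Sylow subgroup
  have hQ : ∀ i : Fin r, ∃ Q : Subgroup G,
      Nat.card Q = ∏ j ∈ Finset.univ.erase i, p j ^ a j := by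
    intro i
    apply hall_solvable (Nat.card G) G rfl _ (p i ^ a i)
    · rw [hcardG]
      exact (Finset.prod_erase_mul Finset.univ _ (Finset.mem_univ i)).symm
    · exact Nat.Coprime.prod_left fun j hj => hpcop j i (Finset.ne_of_mem_erase hj)
  choose Q hQcard using hQ
  have hQidx : ∀ i, (Q i).index = p i ^ a i := by
    intro i
    have h1 := Subgroup.card_mul_index (Q i)
    rw [hQcard, hcardG,
      ← Finset.prod_erase_mul Finset.univ _ (Finset.mem_univ i)] at h1
    exact Nat.eq_of_mul_eq_mul_left (Finset.prod_pos fun j _ => hppos j) h1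
  set D : Finset (Fin r) → Subgroup G := fun T => T.inf Q with hD
  have hDle : ∀ T : Finset (Fin r), (D T).index ≤ ∏ j ∈ T, p j ^ a j := by
    intro T
    induction T using Finset.induction_on with
    | empty => simp [hD]
    | insert _ _ hx ih =>
      rename_i i T0
      have h1 : D (insert i T0) = Q i ⊓ D T0 := Finset.inf_insert
      rw [h1, Finset.prod_insert hx]
      exact le_trans Subgroup.index_inf_le
        (Nat.mul_le_mul (le_of_eq (hQidx i)) ih)
  have hDidx : ∀ T : Finset (Fin r), (D T).index = ∏ j ∈ T, p j ^ a j := by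
    intro T
    have hdvd : (∏ j ∈ T, p j ^ a j) ∣ (D T).index := by
      apply prod_pairwise_coprime_dvd
      · exact fun i _ j _ hij => hpcop i j hij
      · intro i hi
        rw [← hQidx i]
        exact Subgroup.index_dvd_of_le (Finset.inf_le hi)
    have hne : (D T).index ≠ 0 := Subgroup.index_ne_zero_of_finite
    exact le_antisymm (hDle T) (Nat.le_of_dvd (by omega) hdvd)
  have hDcard : ∀ T : Finset (Fin r), Nat.card (D T) = ∏ j ∈ Tᶜ, p j ^ a j := by
    intro T
    have h1 := Subgroup.card_mul_index (D T)
    rw [hDidx, hcardG] at h1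
    have h2 : (∏ j ∈ Tᶜ, p j ^ a j) * (∏ j ∈ T, p j ^ a j) = ∏ j, p j ^ a j := by
      rw [mul_comm]; exact Finset.prod_mul_prod_compl T _
    exact Nat.eq_of_mul_eq_mul_right (Finset.prod_pos fun j _ => hppos j) (h1.trans h2.symm)
  set P : Fin r → Subgroup G := fun i => D {i}ᶜ with hP
  have hPcard : ∀ i, Nat.card (P i) = p i ^ a i := by
    intro i
    rw [hP]
    simp only [hDcard, compl_compl, Finset.prod_singleton]
  have hprod : ∀ l : List (Fin r), l.Nodup →
      (l.map fun i => ((P i : Set G))).prod = (D l.toFinsetᶜ : Set G) := by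
    intro l
    induction l with
    | nil =>
      intro _
      have hbot : D (List.toFinset ([] : List (Fin r)))ᶜ = ⊥ := by
        apply Subgroup.eq_bot_of_card_eq
        rw [hDcard]
        simp
      rw [hbot, Subgroup.coe_bot, List.map_nil, List.prod_nil]
      rfl
    | cons i l ihl =>
      intro hnodup
      have hi : i ∉ l := (List.nodup_cons.mp hnodup).1
      have hln : l.Nodup := (List.nodup_cons.mp hnodup).2
      have hi' : i ∉ l.toFinset := fun h => hi (List.mem_toFinset.mp h)
      rw [List.map_cons, List.prod_cons, ihl hln]
      have htf : (i :: l).toFinset = insert i l.toFinset := List.toFinset_cons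
      rw [htf]
      apply coe_mul_coe_eq (P i) (D l.toFinsetᶜ) (D (insert i l.toFinset)ᶜ)
      · exact Finset.inf_mono (Finset.compl_subset_compl.mpr
          (Finset.singleton_subset_iff.mpr (Finset.mem_insert_self i _)))
      · exact Finset.inf_mono (Finset.compl_subset_compl.mpr
          (Finset.subset_insert i _))
      · rw [hPcard, hDcard, hDcard, compl_compl, compl_compl, Finset.prod_insert hi']
      · rw [hPcard, hDcard, compl_compl]
        exact Nat.Coprime.prod_right fun j hj =>
          hpcop i j (fun e => hi' (e ▸ hj))
  refine ⟨P, hPcard, ?_, ?_⟩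
  · intro i j hij
    have h1 := hprod [i, j] (by simp [hij])
    have h2 := hprod [j, i] (by simp [Ne.symm hij])
    simp only [List.map_cons, List.map_nil, List.prod_cons, List.prod_nil, mul_one] at h1 h2
    have h3 : ([i, j].toFinset : Finset (Fin r)) = [j, i].toFinset := by
      ext x; simp [or_comm]
    rw [h1, h2, h3]
  · intro l hl
    exact ⟨D l.toFinsetᶜ, (hprod l hl).symm⟩
end

section
/- Let G be a finite group, P a Sylow p-subgroup of G, and G' the commutator subgroup of G. Then the image of the transfer homomorphism V_{G→P} : G → P/P' is isomorphic to P/(P ∩ G'). -/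
open Subgroup MonoidHom MulAction
open scoped commutatorElement

section Aux

variable {G : Type*} [Group G] {H : Subgroup G} {A : Type*} [CommGroup A] (ϕ : H →* A)

lemma my_transfer_comp {B : Type*} [CommGroup B] (f : A →* B) [H.FiniteIndex] (g : G) :
    f (MonoidHom.transfer ϕ g) = MonoidHom.transfer (f.comp ϕ) g := by
  classical
  letI := H.fintypeQuotientOfFiniteIndex
  haveI : Fintype (Quotient (orbitRel (zpowers g) (G ⧸ H))) := Fintype.ofFinite _
  rw [MonoidHom.transfer_eq_prod_quotient_orbitRel_zpowers_quot,
      MonoidHom.transfer_eq_prod_quotient_orbitRel_zpowers_quot, map_prod]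
  rfl

lemma my_transfer_eq_pow [H.FiniteIndex] (g : G) (hg : g ∈ H)
    (key : ∀ (k : ℕ) (g₀ : G) (hk : g₀⁻¹ * g ^ k * g₀ ∈ H),
      ϕ ⟨g₀⁻¹ * g ^ k * g₀, hk⟩ = ϕ ⟨g, hg⟩ ^ k) :
    MonoidHom.transfer ϕ g = ϕ ⟨g, hg⟩ ^ H.index := by
  classical
  letI := H.fintypeQuotientOfFiniteIndex
  haveI : Fintype (Quotient (orbitRel (zpowers g) (G ⧸ H))) := Fintype.ofFinite _
  rw [MonoidHom.transfer_eq_prod_quotient_orbitRel_zpowers_quot]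
  rw [Finset.prod_congr rfl fun q _ => key _ _ _]
  rw [Finset.prod_pow_eq_pow_sum]
  congr 1
  simp_rw [minimalPeriod_eq_card]
  rw [index_eq_card, Nat.card_eq_fintype_card,
    Fintype.card_congr (selfEquivSigmaOrbits (zpowers g) (G ⧸ H)), Fintype.card_sigma]
  rfl

end Aux

/-- If `P` is a Sylow `p`-subgroup of a finite group `G`, then the image of the transfer
homomorphism `V : G → P/P'` (the transfer of the abelianization map `P → P/P'`) is
isomorphic to `P/(P ∩ G')`, where `G'` is the commutator subgroup of `G`. -/
theorem transfer_range_iso (G : Type*) [Group G] [Finite G] (p : ℕ) [Fact p.Prime]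
    (P : Sylow p G) :
    Nonempty
      ((MonoidHom.transfer (Abelianization.of (G := ↥(P : Subgroup G)))).range ≃*
        (↥(P : Subgroup G) ⧸ (commutator G).subgroupOf (P : Subgroup G))) := by
  classical
  set H : Subgroup G := (P : Subgroup G) with hH
  set ϕ := (Abelianization.of (G := ↥H))
  set V := MonoidHom.transfer ϕ with hV
  set K : Subgroup ↥H := (commutator G).subgroupOf H with hKdef
  haveI : K.Normal := Subgroup.normal_subgroupOf
  have hcommK : commutator ↥H ≤ K := by
    intro x hx
    rw [hKdef, mem_subgroupOf]
    have : Subgroup.map H.subtype (commutator ↥H) ≤ commutator G := by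
      rw [_root_.commutator_def, _root_.commutator_def, Subgroup.map_commutator]
      exact Subgroup.commutator_mono le_top le_top
    exact this ⟨x, hx, rfl⟩
  letI : CommGroup (↥H ⧸ K) :=
    { (inferInstance : Group (↥H ⧸ K)) with
      mul_comm := fun a b => by
        induction a using QuotientGroup.induction_on with | H x =>
        induction b using QuotientGroup.induction_on with | H y =>
        rw [← commutatorElement_eq_one_iff_mul_comm]
        have h1 : ⁅(QuotientGroup.mk x : ↥H ⧸ K), (QuotientGroup.mk y : ↥H ⧸ K)⁆
            = QuotientGroup.mk ⁅x, y⁆ := by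
          simp [commutatorElement_def]
        rw [h1, QuotientGroup.eq_one_iff]
        exact hcommK (commutator_mem_commutator (mem_top x) (mem_top y)) }
  let q : Abelianization ↥H →* ↥H ⧸ K := Abelianization.lift (QuotientGroup.mk' K)
  -- key computation
  have hfkey : ∀ (g : G) (hg : g ∈ H), q (V g) = QuotientGroup.mk' K ⟨g, hg⟩ ^ H.index := by
    intro g hg
    rw [hV, my_transfer_comp ϕ q g]
    have hcomp : q.comp ϕ = QuotientGroup.mk' K := by
      ext x
      show q (Abelianization.of x) = QuotientGroup.mk' K x
      exact Abelianization.lift_apply_of _ x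
    rw [my_transfer_eq_pow (q.comp ϕ) g hg, hcomp]
    · intro k g₀ hk
      rw [hcomp]
      have hmem : (g ^ k)⁻¹ * (g₀⁻¹ * g ^ k * g₀) ∈ H :=
        H.mul_mem (H.inv_mem (H.pow_mem hg k)) hk
      have hsplit : (⟨g₀⁻¹ * g ^ k * g₀, hk⟩ : ↥H)
          = ⟨g, hg⟩ ^ k * ⟨(g ^ k)⁻¹ * (g₀⁻¹ * g ^ k * g₀), hmem⟩ := by
        ext
        push_cast
        group
      rw [hsplit, map_mul, map_pow]
      have hone : QuotientGroup.mk' K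
          (⟨(g ^ k)⁻¹ * (g₀⁻¹ * g ^ k * g₀), hmem⟩ : ↥H) = 1 := by
        rw [QuotientGroup.mk'_apply, QuotientGroup.eq_one_iff, hKdef, mem_subgroupOf]
        show (g ^ k)⁻¹ * (g₀⁻¹ * g ^ k * g₀) ∈ commutator G
        have : (g ^ k)⁻¹ * (g₀⁻¹ * g ^ k * g₀) = ⁅(g ^ k)⁻¹, g₀⁻¹⁆ := by
          rw [commutatorElement_def]; group
        rw [this, _root_.commutator_def]
        exact commutator_mem_commutator (mem_top _) (mem_top _)
      rw [hone, mul_one]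
  -- p-group facts
  have hP : IsPGroup p ↥H := P.2
  have hQp : IsPGroup p (↥H ⧸ K) := hP.to_quotient K
  have hA : IsPGroup p (Abelianization ↥H) := hP.to_quotient _
  have hn : ¬ p ∣ H.index := P.not_dvd_index
  -- kernel of restriction
  have hker : (V.domRestrict H).ker = K := by
    ext x
    rw [mem_ker, domRestrict_apply]
    constructor
    · intro hx
      have := hfkey x x.2
      rw [Subtype.coe_eta, hx, map_one] at this
      have h1 : QuotientGroup.mk' K x ^ H.index = (1 : ↥H ⧸ K) ^ H.index := by
        rw [one_pow, ← this]
      have := (hQp.powEquiv' hn).injective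
      rw [Function.Injective] at this
      have h2 : QuotientGroup.mk' K x = 1 := by
        apply this
        simpa [IsPGroup.powEquiv_apply] using h1
      rwa [QuotientGroup.mk'_apply, QuotientGroup.eq_one_iff] at h2
    · intro hx
      have : (x : G) ∈ commutator G := hx
      exact Abelianization.commutator_subset_ker V this
  -- G = H ⊔ ker V
  have hsup : H ⊔ V.ker = ⊤ := by
    rw [← Subgroup.index_eq_one]
    have h1 : (H ⊔ V.ker).index ∣ H.index := Subgroup.index_dvd_of_le le_sup_left
    have h2 : (H ⊔ V.ker).index ∣ V.ker.index := Subgroup.index_dvd_of_le le_sup_right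
    obtain ⟨k, hk⟩ := (hA.to_subgroup V.range).exists_card_eq
    rw [Subgroup.index_ker, hk] at h2
    have hcop : Nat.Coprime H.index (p ^ k) :=
      Nat.Coprime.pow_right _
        (((Fact.out : p.Prime).coprime_iff_not_dvd.mpr hn).symm)
    exact Nat.eq_one_of_dvd_coprimes hcop h1 h2
  -- range equals image of H
  have hrange : V.range = (V.domRestrict H).range := by
    rw [domRestrict_range, range_eq_map, ← hsup, Subgroup.map_sup]
    have : Subgroup.map V V.ker = ⊥ := by
      rw [eq_bot_iff]
      rintro x ⟨y, hy, rfl⟩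
      exact hy
    rw [this, sup_bot_eq]
  exact ⟨((MulEquiv.subgroupCongr hrange).trans
    (QuotientGroup.quotientKerEquivRange (V.domRestrict H)).symm).trans
    (QuotientGroup.quotientMulEquivOfEq hker)⟩
end

section
/- (Second Theorem of Grün) Suppose G is a finite group that is p-normal for a prime p, and let P be a Sylow p-subgroup of G. Then the maximal abelian p-factor group of G is isomorphic to the maximal abelian p-factor group of N_G(Z(P)). -/
/-- The center of a subgroup `P ≤ G`, viewed as a subgroup of `G`. -/
def centerAsSubgroup {G : Type*} [Group G] (P : Subgroup G) : Subgroup G :=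
  Subgroup.map P.subtype (Subgroup.center ↥P)

/-- `A = H'(p)` is the smallest normal subgroup of `H` whose quotient is an abelian
`p`-group (so `H/A` is the maximal abelian `p`-factor group of `H`): `A` is normal,
contains the commutator subgroup, has `p`-power index, and is contained in every normal
subgroup containing the commutator subgroup and having `p`-power index. -/
def IsMaxAbelianPFactorKernel (p : ℕ) (H : Type*) [Group H] (A : Subgroup H) : Prop :=
  A.Normal ∧ commutator H ≤ A ∧ (∃ m : ℕ, A.index = p ^ m) ∧
    ∀ K : Subgroup H, K.Normal → commutator H ≤ K → (∃ m : ℕ, K.index = p ^ m) → A ≤ K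


set_option linter.unusedSectionVars false
set_option linter.deprecated false
set_option maxHeartbeats 1000000


open Subgroup
open scoped commutatorElement

section PPart
variable (p : ℕ) (C : Type*) [CommGroup C]

/-- elements of order coprime to `p` in a commutative group -/
def pPrimePart : Subgroup C where
  carrier := {x | (orderOf x).Coprime p}
  one_mem' := by simp [Set.mem_setOf_eq, orderOf_one, Nat.coprime_one_left]
  mul_mem' := by
    intro a b ha hb
    have h := (Commute.all a b).orderOf_mul_dvd_lcm
    exact Nat.Coprime.coprime_dvd_left (h.trans (Nat.lcm_dvd_mul _ _)) (Nat.Coprime.mul ha hb)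
  inv_mem' := by
    intro a ha
    simpa [orderOf_inv] using ha

variable {C}

lemma mem_pPrimePart {x : C} : x ∈ pPrimePart p C ↔ (orderOf x).Coprime p := Iff.rfl

lemma isPGroup_quotient_pPrimePart [Finite C] (hp : p.Prime) :
    IsPGroup p (C ⧸ pPrimePart p C) := by
  intro q
  induction q using QuotientGroup.induction_on with
  | H x =>
    refine ⟨(orderOf x).factorization p, ?_⟩
    rw [← QuotientGroup.mk_pow, QuotientGroup.eq_one_iff, mem_pPrimePart]
    have hx : orderOf x ≠ 0 := (orderOf_pos x).ne'
    rw [orderOf_pow x]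
    have hdvd : p ^ (orderOf x).factorization p ∣ orderOf x := Nat.ordProj_dvd _ _
    rw [Nat.gcd_eq_right hdvd]
    exact Nat.Coprime.symm
      ((Nat.Prime.coprime_iff_not_dvd hp).mpr (Nat.not_dvd_ordCompl hp hx))

end PPart

section APart
variable (p : ℕ) (H : Type*) [Group H] [Finite H] [Fact p.Prime]

/-- the canonical kernel of the maximal abelian `p`-factor quotient -/
def apKernel : Subgroup H := (pPrimePart p (Abelianization H)).comap Abelianization.of

lemma abelianization_of_surjective : Function.Surjective (Abelianization.of : H → Abelianization H) :=
  fun b => QuotientGroup.induction_on b fun g => ⟨g, rfl⟩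

lemma commutator_le_apKernel : commutator H ≤ apKernel p H := by
  intro x hx
  have h1 : Abelianization.of x = 1 :=
    (QuotientGroup.eq_one_iff (N := commutator H) x).mpr hx
  simp only [apKernel, mem_comap, h1]
  exact one_mem _

lemma apKernel_normal : (apKernel p H).Normal := by
  constructor
  intro n hn g
  simp only [apKernel, mem_comap, map_mul, map_inv] at hn ⊢
  rw [mul_comm (Abelianization.of g)]
  group
  exact hn

lemma apKernel_index_pow : ∃ m : ℕ, (apKernel p H).index = p ^ m := by
  have hsurj := abelianization_of_surjective (H := H)
  rw [apKernel, index_comap_of_surjective _ hsurj, index_eq_card]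
  exact (isPGroup_quotient_pPrimePart p (Fact.out)).exists_card_eq

lemma apKernel_min {K : Subgroup H} (hN : K.Normal) (hcomm : commutator H ≤ K)
    (hidx : ∃ m : ℕ, K.index = p ^ m) : apKernel p H ≤ K := by
  obtain ⟨m, hm⟩ := hidx
  intro x hx
  rw [apKernel, mem_comap, mem_pPrimePart] at hx
  set n := orderOf (Abelianization.of x) with hn
  have hxn : x ^ n ∈ K := by
    apply hcomm
    have : Abelianization.of (x ^ n) = 1 := by rw [map_pow, pow_orderOf_eq_one]
    exact (QuotientGroup.eq_one_iff (N := commutator H) (x ^ n)).mp this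
  -- in H ⧸ K, the class of x has order dividing n and dividing p ^ m
  have h1 : ((x : H ⧸ K) : H ⧸ K) ^ n = 1 := by
    rw [← QuotientGroup.mk_pow, QuotientGroup.eq_one_iff]; exact hxn
  have hd1 : orderOf ((x : H) : H ⧸ K) ∣ n := orderOf_dvd_of_pow_eq_one h1
  have hd2 : orderOf ((x : H) : H ⧸ K) ∣ p ^ m := by
    rw [← hm, index_eq_card]; exact orderOf_dvd_natCard _
  have : orderOf ((x : H) : H ⧸ K) = 1 := Nat.eq_one_of_dvd_coprimes
    (Nat.Coprime.pow_right m hx) hd1 hd2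
  rw [orderOf_eq_one_iff] at this
  rw [← QuotientGroup.eq_one_iff (N := K)]
  exact this

lemma apKernel_spec : IsMaxAbelianPFactorKernel p H (apKernel p H) :=
  ⟨apKernel_normal p H, commutator_le_apKernel p H, apKernel_index_pow p H,
    fun _ h1 h2 h3 => apKernel_min p H h1 h2 h3⟩

end APart

open scoped Pointwise
open Subgroup

section CenterLemmas
variable {G : Type*} [Group G]

lemma mem_centerAsSubgroup {P : Subgroup G} {x : G} :
    x ∈ centerAsSubgroup P ↔ x ∈ P ∧ ∀ y ∈ P, y * x = x * y := by
  constructor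
  · rintro ⟨⟨z, hz⟩, hzc, rfl⟩
    refine ⟨hz, fun y hy => ?_⟩
    have := (Subgroup.mem_center_iff.mp hzc ⟨y, hy⟩)
    exact congrArg Subtype.val this
  · rintro ⟨hx, hc⟩
    exact ⟨⟨x, hx⟩, Subgroup.mem_center_iff.mpr (fun ⟨y, hy⟩ => Subtype.ext (hc y hy)), rfl⟩

lemma centerAsSubgroup_le (P : Subgroup G) : centerAsSubgroup P ≤ P := by
  intro x hx; exact (mem_centerAsSubgroup.mp hx).1

lemma centerAsSubgroup_smul (g : G) (P : Subgroup G) :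
    centerAsSubgroup (MulAut.conj g • P) = MulAut.conj g • centerAsSubgroup P := by
  have key : ∀ x, x ∈ centerAsSubgroup (MulAut.conj g • P) ↔
      g⁻¹ * x * g ∈ centerAsSubgroup P := by
    intro x
    rw [mem_centerAsSubgroup, mem_centerAsSubgroup]
    have hmem : x ∈ MulAut.conj g • P ↔ g⁻¹ * x * g ∈ P := by
      rw [Subgroup.mem_pointwise_smul_iff_inv_smul_mem]
      simp [MulAut.smul_def]
    rw [hmem]
    constructor
    · rintro ⟨hx, hc⟩
      refine ⟨hx, fun y hy => ?_⟩
      have hy' : g * y * g⁻¹ ∈ MulAut.conj g • P := by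
        rw [Subgroup.mem_pointwise_smul_iff_inv_smul_mem]
        simp [MulAut.smul_def]
        have : g * (g⁻¹ * y * g) * g⁻¹ = y := by group
        rwa [this]
      have := hc _ hy'
      have h2 : g⁻¹ * ((g * y * g⁻¹) * x) * g = g⁻¹ * (x * (g * y * g⁻¹)) * g := by
        rw [this]
      calc y * (g⁻¹ * x * g) = g⁻¹ * ((g * y * g⁻¹) * x) * g := by group
        _ = g⁻¹ * (x * (g * y * g⁻¹)) * g := h2
        _ = (g⁻¹ * x * g) * y := by group
    · rintro ⟨hx, hc⟩
      refine ⟨hx, fun y hy => ?_⟩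
      have hy' : g⁻¹ * y * g ∈ P := by
        rw [Subgroup.mem_pointwise_smul_iff_inv_smul_mem] at hy
        simpa [MulAut.smul_def] using hy
      have := hc _ hy'
      calc y * x = g * ((g⁻¹ * y * g) * (g⁻¹ * x * g)) * g⁻¹ := by group
        _ = g * ((g⁻¹ * x * g) * (g⁻¹ * y * g)) * g⁻¹ := by rw [this]
        _ = x * y := by group
  ext x
  rw [key, Subgroup.mem_pointwise_smul_iff_inv_smul_mem]
  simp [MulAut.smul_def]
end CenterLemmas

section Fusion
variable {G : Type*} [Group G] [Finite G] {p : ℕ} [Fact p.Prime]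

lemma mem_normalizer_of_conj_smul_eq {Z : Subgroup G} {a : G}
    (h : MulAut.conj a • Z = Z) : a ∈ Subgroup.normalizer (Z : Set G) := by
  rw [Subgroup.mem_normalizer_iff]
  intro w
  constructor
  · intro hw
    rw [← h]
    have : a * w * a⁻¹ = MulAut.conj a • w := by simp [MulAut.smul_def]
    rw [this]
    exact Subgroup.smul_mem_pointwise_smul _ _ _ hw
  · intro hw
    rw [← h, Subgroup.mem_pointwise_smul_iff_inv_smul_mem] at hw
    have : (MulAut.conj a)⁻¹ • (a * w * a⁻¹) = w := by simp [MulAut.smul_def]; group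
    rwa [this] at hw

lemma fusion
    (hpnormal : ∀ P Q : Sylow p G,
      centerAsSubgroup (P : Subgroup G) ≤ (Q : Subgroup G) →
        centerAsSubgroup (P : Subgroup G) = centerAsSubgroup (Q : Subgroup G))
    (P : Sylow p G) {x : G} (hx : x ∈ P) (g : G) (hy : g⁻¹ * x * g ∈ P) :
    ∃ n ∈ Subgroup.normalizer ((centerAsSubgroup (P : Subgroup G) : Set G)), n⁻¹ * x * n = g⁻¹ * x * g := by
  classical
  set Z := centerAsSubgroup (P : Subgroup G) with hZdef
  set y := g⁻¹ * x * g with hydef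
  set D := Subgroup.centralizer {y} with hDdef
  have hZP : Z ≤ (P : Subgroup G) := centerAsSubgroup_le _
  have hZpg : IsPGroup p Z := P.2.to_le hZP
  set Z' : Subgroup G := MulAut.conj g⁻¹ • Z with hZ'def
  have hZ'pg : IsPGroup p Z' := by
    rw [hZ'def, Subgroup.pointwise_smul_def]
    exact hZpg.map _
  have hZD : Z ≤ D := by
    intro z hz
    rw [hDdef, Subgroup.mem_centralizer_iff]
    rintro w hw
    rw [Set.mem_singleton_iff] at hw
    subst hw
    exact (mem_centerAsSubgroup.mp hz).2 y hy
  have hZ'D : Z' ≤ D := by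
    intro z' hz'
    rw [hZ'def, Subgroup.mem_pointwise_smul_iff_inv_smul_mem] at hz'
    have hz'' : g * z' * g⁻¹ ∈ Z := by
      have : (MulAut.conj g⁻¹)⁻¹ • z' = g * z' * g⁻¹ := by simp [MulAut.smul_def]
      rwa [this] at hz'
    rw [hDdef, Subgroup.mem_centralizer_iff]
    rintro w hw
    rw [Set.mem_singleton_iff] at hw
    subst hw
    have hcomm : x * (g * z' * g⁻¹) = (g * z' * g⁻¹) * x :=
      (mem_centerAsSubgroup.mp hz'').2 x hx
    rw [hydef]
    calc (g⁻¹ * x * g) * z' = g⁻¹ * (x * (g * z' * g⁻¹)) * g := by group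
      _ = g⁻¹ * ((g * z' * g⁻¹) * x) * g := by rw [hcomm]
      _ = z' * (g⁻¹ * x * g) := by group
  -- Sylow subgroups of D containing Z and Z'
  obtain ⟨S, hS⟩ := (hZpg.comap_subtype (K := D)).exists_le_sylow
  obtain ⟨T, hT⟩ := (hZ'pg.comap_subtype (K := D)).exists_le_sylow
  obtain ⟨d, hd⟩ := MulAction.exists_smul_eq (↥D) T S
  -- extend to Sylow subgroups of G
  obtain ⟨R₁, hR₁⟩ := (S.2.map D.subtype).exists_le_sylow
  obtain ⟨R₂, hR₂⟩ := (T.2.map D.subtype).exists_le_sylow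
  have hZR₁ : Z ≤ R₁ := by
    intro z hz
    exact hR₁ ⟨⟨z, hZD hz⟩, hS (by rwa [Subgroup.mem_comap]), rfl⟩
  have h1 : Z = centerAsSubgroup (R₁ : Subgroup G) := hpnormal P R₁ hZR₁
  -- conjugate Z' into R₁ by d
  set c : G := (d : G) with hcdef
  have hconjZ' : MulAut.conj c • Z' ≤ (R₁ : Subgroup G) := by
    intro w hw
    rw [Subgroup.mem_pointwise_smul_iff_inv_smul_mem] at hw
    have hw' : c⁻¹ * w * c ∈ Z' := by
      have : (MulAut.conj c)⁻¹ • w = c⁻¹ * w * c := by simp [MulAut.smul_def]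
      rwa [this] at hw
    set z' : ↥D := ⟨c⁻¹ * w * c, by
      have := hZ'D hw'
      exact this⟩ with hz'def
    have hz'T : z' ∈ (T : Subgroup ↥D) := hT (by rwa [Subgroup.mem_comap])
    have : d * z' * d⁻¹ ∈ ((d • T : Sylow p ↥D) : Subgroup ↥D) := by
      rw [Sylow.coe_subgroup_smul]
      have : d * z' * d⁻¹ = MulAut.conj d • z' := by simp [MulAut.smul_def]
      rw [this]
      exact Subgroup.smul_mem_pointwise_smul _ _ _ hz'T
    rw [hd] at this
    have hwin : w ∈ Subgroup.map D.subtype (S : Subgroup ↥D) := by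
      refine ⟨d * z' * d⁻¹, this, ?_⟩
      show ((d * z' * d⁻¹ : ↥D) : G) = w
      have he : ((d * z' * d⁻¹ : ↥D) : G) = c * (c⁻¹ * w * c) * c⁻¹ := rfl
      rw [he]
      group
    exact hR₁ hwin
  have hconj2 : centerAsSubgroup (((c * g⁻¹) • P : Sylow p G) : Subgroup G)
      ≤ (R₁ : Subgroup G) := by
    have : centerAsSubgroup (((c * g⁻¹) • P : Sylow p G) : Subgroup G)
        = MulAut.conj (c * g⁻¹) • Z := by
      rw [Sylow.coe_subgroup_smul, centerAsSubgroup_smul]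
    rw [this, map_mul, mul_smul]
    exact hconjZ'
  have h2 : centerAsSubgroup (((c * g⁻¹) • P : Sylow p G) : Subgroup G)
      = centerAsSubgroup (R₁ : Subgroup G) := hpnormal _ R₁ hconj2
  have h3 : MulAut.conj (c * g⁻¹) • Z = Z := by
    have e1 : centerAsSubgroup (((c * g⁻¹) • P : Sylow p G) : Subgroup G)
        = MulAut.conj (c * g⁻¹) • Z := by
      rw [Sylow.coe_subgroup_smul, centerAsSubgroup_smul]
    rw [← e1, h2, ← h1]
  have hmem : c * g⁻¹ ∈ Subgroup.normalizer (Z : Set G) := mem_normalizer_of_conj_smul_eq h3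
  refine ⟨g * c⁻¹, ?_, ?_⟩
  · have : g * c⁻¹ = (c * g⁻¹)⁻¹ := by group
    rw [this]
    exact Subgroup.normalizer (Z : Set G) |>.inv_mem hmem
  · have hdc : y * c = c * y := by
      have hd2 : (d : G) ∈ Subgroup.centralizer {y} := d.2
      exact Subgroup.mem_centralizer_iff.mp hd2 y rfl
    calc (g * c⁻¹)⁻¹ * x * (g * c⁻¹) = c * (g⁻¹ * x * g) * c⁻¹ := by group
      _ = c * y * c⁻¹ := by rw [hydef]
      _ = y := by rw [← hdc]; group
end Fusion


section Transfer
open Subgroup Finset MulAction Function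
variable {G : Type*} [Group G] {H : Subgroup G} {A : Type*} [CommGroup A] (ϕ : H →* A)

theorem transfer_eq_pow_of_ϕ_key [H.FiniteIndex] (g : G) (hg : g ∈ H)
    (key : ∀ (k : ℕ) (g₀ : G) (hk : g₀⁻¹ * g ^ k * g₀ ∈ H),
      ϕ ⟨g₀⁻¹ * g ^ k * g₀, hk⟩ = ϕ ⟨g ^ k, H.pow_mem hg k⟩) :
    MonoidHom.transfer ϕ g = ϕ ⟨g, hg⟩ ^ H.index := by
  classical
  letI := H.fintypeQuotientOfFiniteIndex
  rw [MonoidHom.transfer_eq_prod_quotient_orbitRel_zpowers_quot]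
  have step : ∀ q : Quotient (orbitRel (zpowers g) (G ⧸ H)),
      ϕ ⟨q.out.out⁻¹ * g ^ Function.minimalPeriod (g • ·) q.out * q.out.out,
        QuotientGroup.out_conj_pow_minimalPeriod_mem H g q.out⟩
      = ϕ ⟨g, hg⟩ ^ Function.minimalPeriod (g • ·) q.out := by
    intro q
    rw [key]
    rw [← map_pow]
    rfl
  simp_rw [step]
  rw [Finset.prod_pow_eq_pow_sum]
  congr 1
  rw [index_eq_card, Nat.card_eq_fintype_card,
    Fintype.card_congr (selfEquivSigmaOrbits (zpowers g) (G ⧸ H)), Fintype.card_sigma]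
  exact Finset.sum_congr rfl fun q _ => minimalPeriod_eq_card g q.out

end Transfer

section Helpers
variable {H : Type*} [Group H]

lemma mk_conj_eq {B : Subgroup H} [B.Normal] (hc : commutator H ≤ B) (a b : H) :
    ((a * b * a⁻¹ : H) : H ⧸ B) = ((b : H) : H ⧸ B) := by
  rw [QuotientGroup.eq]
  have h : (a * b * a⁻¹)⁻¹ * b = ⁅a, b⁻¹⁆ := by
    rw [commutatorElement_def]; group
  rw [h]
  refine hc ?_
  rw [_root_.commutator_def]
  exact Subgroup.commutator_mem_commutator (Subgroup.mem_top a) (Subgroup.mem_top b⁻¹)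

lemma quotient_mul_comm {B : Subgroup H} [B.Normal] (hc : commutator H ≤ B)
    (a b : H ⧸ B) : a * b = b * a := by
  induction a using QuotientGroup.induction_on with
  | H x =>
    induction b using QuotientGroup.induction_on with
    | H y =>
      have h1 : ((y * x : H) : H ⧸ B) = ((x⁻¹ * (x * y) * x⁻¹⁻¹ : H) : H ⧸ B) := by
        congr 1; group
      rw [← QuotientGroup.mk_mul, ← QuotientGroup.mk_mul, h1, mk_conj_eq hc]

lemma sylow_sup_eq_top [Finite H] {p : ℕ} [Fact p.Prime]
    (P : Sylow p H) {B : Subgroup H} {m : ℕ} (hB : B.index = p ^ m) :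
    B ⊔ (P : Subgroup H) = ⊤ := by
  have h1 : (B ⊔ (P : Subgroup H)).index ∣ p ^ m :=
    hB ▸ Subgroup.index_dvd_of_le le_sup_left
  have h2 : (B ⊔ (P : Subgroup H)).index ∣ (P : Subgroup H).index :=
    Subgroup.index_dvd_of_le le_sup_right
  obtain ⟨k, hk, hpk⟩ := (Nat.dvd_prime_pow Fact.out).mp h1
  rw [← Subgroup.index_eq_one]
  rcases Nat.eq_zero_or_pos k with hk0 | hk0
  · rw [hpk, hk0, pow_zero]
  · exfalso
    apply P.not_dvd_index
    refine dvd_trans ?_ h2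
    rw [hpk]
    exact dvd_pow_self p hk0.ne'

lemma pelement_conj_into_sylow [Finite H] {p : ℕ} [Fact p.Prime]
    (Q : Sylow p H) {w : H} (hw : ∃ n : ℕ, w ^ p ^ n = 1) :
    ∃ m : H, m * w * m⁻¹ ∈ Q := by
  have hpg : IsPGroup p (Subgroup.zpowers w) := by
    intro q
    obtain ⟨j, hj⟩ := Subgroup.mem_zpowers_iff.mp q.2
    obtain ⟨n, hn⟩ := hw
    refine ⟨n, Subtype.ext ?_⟩
    have hcoe : ((q ^ p ^ n : Subgroup.zpowers w) : H) = (q : H) ^ p ^ n := by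
      push_cast; rfl
    rw [hcoe, ← hj, ← zpow_natCast (w ^ j) (p ^ n), ← zpow_mul, mul_comm, zpow_mul,
      zpow_natCast, hn, one_zpow]
    rfl
  obtain ⟨S, hS⟩ := hpg.exists_le_sylow
  obtain ⟨m, hm⟩ := MulAction.exists_smul_eq H S Q
  refine ⟨m, ?_⟩
  have hwS : w ∈ S := hS (Subgroup.mem_zpowers w)
  have hmem : m * w * m⁻¹ ∈ ((m • S : Sylow p H) : Subgroup H) := by
    rw [Sylow.coe_subgroup_smul]
    have h1 : m * w * m⁻¹ = MulAut.conj m • w := by simp [MulAut.smul_def]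
    rw [h1]
    exact Subgroup.smul_mem_pointwise_smul _ _ _ hwS
  rwa [hm] at hmem

end Helpers


/-- (Second Theorem of Grün) If a finite group `G` is `p`-normal (whenever the center
`Z(P)` of a Sylow `p`-subgroup `P` is contained in another Sylow `p`-subgroup `Q`, one has
`Z(P) = Z(Q)`), then the maximal abelian `p`-factor group of `G` is isomorphic to the
maximal abelian `p`-factor group of `N_G(Z(P))`, for `P` a Sylow `p`-subgroup. -/
theorem gruen_second_theorem (G : Type*) [Group G] [Finite G] (p : ℕ) [Fact p.Prime]
    (hpnormal : ∀ P Q : Sylow p G,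
      centerAsSubgroup (P : Subgroup G) ≤ (Q : Subgroup G) →
        centerAsSubgroup (P : Subgroup G) = centerAsSubgroup (Q : Subgroup G))
    (P : Sylow p G) :
    ∃ (A : Subgroup G)
      (B : Subgroup ↥(Subgroup.normalizer ((centerAsSubgroup (P : Subgroup G) : Set G)))),
      IsMaxAbelianPFactorKernel p G A ∧
        IsMaxAbelianPFactorKernel p ↥(Subgroup.normalizer ((centerAsSubgroup (P : Subgroup G) : Set G))) B ∧
          ∃ (hA : A.Normal) (hB : B.Normal),
            letI := hA
            letI := hB
            Nonempty
              ((G ⧸ A) ≃*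
                (↥(Subgroup.normalizer ((centerAsSubgroup (P : Subgroup G) : Set G))) ⧸ B)) := by

  classical
  set Z := centerAsSubgroup (P : Subgroup G) with hZdef
  set N := Subgroup.normalizer (Z : Set G) with hNdef
  -- P normalizes its center
  have hPN : (P : Subgroup G) ≤ N := by
    intro u hu
    apply mem_normalizer_of_conj_smul_eq
    have h1 : u • P = P := Sylow.smul_eq_iff_mem_normalizer.mpr (Subgroup.le_normalizer hu)
    have h2 : centerAsSubgroup ((u • P : Sylow p G) : Subgroup G) = MulAut.conj u • Z := by
      rw [Sylow.coe_subgroup_smul, centerAsSubgroup_smul]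
    rw [h1] at h2
    exact h2.symm
  set A := apKernel p G with hAdef
  have hAspec := apKernel_spec p G
  set B := apKernel p ↥N with hBdef
  have hBspec := apKernel_spec p ↥N
  obtain ⟨mA, hmA⟩ := hAspec.2.2.1
  obtain ⟨mB, hmB⟩ := hBspec.2.2.1
  letI hBnormal : B.Normal := hBspec.1
  letI hAnormal : A.Normal := hAspec.1
  -- the natural map N → G⧸A
  set f : ↥N →* G ⧸ A := (QuotientGroup.mk' A).comp N.subtype with hfdef
  have hmapP : Subgroup.map (QuotientGroup.mk' A) (P : Subgroup G) = ⊤ := by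
    have htop : A ⊔ (P : Subgroup G) = ⊤ := sylow_sup_eq_top P hmA
    have h2 : Subgroup.map (QuotientGroup.mk' A) (A ⊔ (P : Subgroup G)) = ⊤ := by
      rw [htop]; exact Subgroup.map_top_of_surjective _ (QuotientGroup.mk'_surjective A)
    rwa [Subgroup.map_sup, QuotientGroup.map_mk'_self, bot_sup_eq] at h2
  have hfsurj : Function.Surjective f := by
    rw [← MonoidHom.range_eq_top, hfdef, MonoidHom.range_comp, Subgroup.range_subtype]
    rw [← top_le_iff, ← hmapP]
    exact Subgroup.map_mono hPN
  have hker : f.ker = A.subgroupOf N := by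
    rw [hfdef, ← MonoidHom.comap_ker, QuotientGroup.ker_mk', Subgroup.comap_subtype]
  -- B ≤ A.subgroupOf N
  have hANnormal : (A.subgroupOf N).Normal := by
    rw [← Subgroup.comap_subtype]
    exact hAnormal.comap _
  have hANcomm : commutator ↥N ≤ A.subgroupOf N := by
    rw [_root_.commutator_def, Subgroup.commutator_le]
    intro a _ b _
    rw [Subgroup.mem_subgroupOf]
    have hco : ((⁅a, b⁆ : ↥N) : G) = ⁅(a : G), (b : G)⁆ := rfl
    rw [hco]
    refine hAspec.2.1 ?_
    rw [_root_.commutator_def]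
    exact Subgroup.commutator_mem_commutator (Subgroup.mem_top _) (Subgroup.mem_top _)
  have hANidx : (A.subgroupOf N).index = A.index := by
    rw [← hker, Subgroup.index_ker, MonoidHom.range_eq_top.mpr hfsurj]
    rw [Subgroup.index_eq_card]
    exact Nat.card_congr (Subgroup.topEquiv.toEquiv)
  have hBle : B ≤ A.subgroupOf N :=
    hBspec.2.2.2 _ hANnormal hANcomm ⟨mA, by rw [hANidx, hmA]⟩
  -- the transfer homomorphism
  letI commNB : CommGroup (↥N ⧸ B) :=
    { (inferInstance : Group (↥N ⧸ B)) with
      mul_comm := quotient_mul_comm hBspec.2.1 }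
  set φ : ↥N →* ↥N ⧸ B := QuotientGroup.mk' B with hφdef
  set V : G →* ↥N ⧸ B := MonoidHom.transfer φ with hVdef
  -- the key transfer computation
  have key : ∀ (g : G) (hg : g ∈ P) (k : ℕ) (u : G) (hk : u⁻¹ * g ^ k * u ∈ N),
      φ ⟨u⁻¹ * g ^ k * u, hk⟩ = φ ⟨g ^ k, hPN ((P : Subgroup G).pow_mem hg k)⟩ := by
    intro g hg k u hk
    have hgk : g ^ k ∈ (P : Subgroup G) := (P : Subgroup G).pow_mem hg k
    -- w is a p-element of N
    have hwp : ∃ n : ℕ, (⟨u⁻¹ * g ^ k * u, hk⟩ : ↥N) ^ p ^ n = 1 := by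
      obtain ⟨n, hn⟩ := P.2 ⟨g, hg⟩
      refine ⟨n, Subtype.ext ?_⟩
      have hgpn : g ^ p ^ n = 1 := congrArg Subtype.val hn
      have hcoe : (((⟨u⁻¹ * g ^ k * u, hk⟩ : ↥N) ^ p ^ n : ↥N) : G)
          = (u⁻¹ * g ^ k * u) ^ p ^ n := by push_cast; rfl
      rw [hcoe]
      have h1 : (u⁻¹ * g ^ k * u) ^ p ^ n = u⁻¹ * (g ^ k) ^ p ^ n * u := by
        have := conj_pow (i := p ^ n) (a := u⁻¹) (b := g ^ k)
        rwa [inv_inv] at this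
      rw [h1, ← pow_mul, mul_comm k, pow_mul, hgpn, one_pow]
      group
      simp
    -- conjugate w into P inside N
    obtain ⟨m, hm⟩ := pelement_conj_into_sylow (P.subtype hPN) hwp
    have hmP : ((m * ⟨u⁻¹ * g ^ k * u, hk⟩ * m⁻¹ : ↥N) : G) ∈ (P : Subgroup G) := by
      have := hm
      rw [← Subgroup.mem_subgroupOf (K := N), ← Sylow.coe_subtype P hPN]
      exact hm
    have hmc : ((m * ⟨u⁻¹ * g ^ k * u, hk⟩ * m⁻¹ : ↥N) : G)
        = (m : G) * (u⁻¹ * g ^ k * u) * (m : G)⁻¹ := rfl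
    -- fusion
    have hy' : (u * (m : G)⁻¹)⁻¹ * g ^ k * (u * (m : G)⁻¹) ∈ (P : Subgroup G) := by
      have he : (u * (m : G)⁻¹)⁻¹ * g ^ k * (u * (m : G)⁻¹)
          = (m : G) * (u⁻¹ * g ^ k * u) * (m : G)⁻¹ := by group
      rw [he, ← hmc]
      exact hmP
    obtain ⟨n, hnN, hn⟩ := fusion hpnormal P hgk (u * (m : G)⁻¹) hy'
    -- now compute in the quotient
    set wN : ↥N := ⟨u⁻¹ * g ^ k * u, hk⟩ with hwNdef
    set gN : ↥N := ⟨g ^ k, hPN hgk⟩ with hgNdef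
    set nHat : ↥N := ⟨n, hnN⟩ with hnHatdef
    have hconj : m * wN * m⁻¹ = nHat⁻¹ * gN * nHat := by
      apply Subtype.ext
      have h2 : ((nHat⁻¹ * gN * nHat : ↥N) : G) = n⁻¹ * g ^ k * n := rfl
      rw [hmc, h2, hn]
      group
    have e1 : φ wN = φ (m * wN * m⁻¹) := (mk_conj_eq hBspec.2.1 m wN).symm
    have e2 : φ (nHat⁻¹ * gN * nHat) = φ gN := by
      have h3 : nHat⁻¹ * gN * nHat = nHat⁻¹ * gN * (nHat⁻¹)⁻¹ := by rw [inv_inv]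
      rw [h3]
      exact mk_conj_eq hBspec.2.1 nHat⁻¹ gN
    rw [e1, hconj, e2]
  have hVP : ∀ (g : G) (hg : g ∈ P),
      V g = φ ⟨g, hPN hg⟩ ^ N.index := by
    intro g hg
    exact transfer_eq_pow_of_ϕ_key φ g (hPN hg) (fun k u hk => key g hg k u hk)
  have hVsurj : Function.Surjective V := by
    intro c
    have hPsyl : (((P.subtype hPN) : Sylow p ↥N) : Subgroup ↥N)
        = (P : Subgroup G).subgroupOf N := Sylow.coe_subtype P hPN
    have hmapP' : Subgroup.map φ ((P : Subgroup G).subgroupOf N) = ⊤ := by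
      have htop : B ⊔ (((P.subtype hPN) : Sylow p ↥N) : Subgroup ↥N) = ⊤ :=
        sylow_sup_eq_top (P.subtype hPN) hmB
      have h2 : Subgroup.map φ (B ⊔ (((P.subtype hPN) : Sylow p ↥N) : Subgroup ↥N)) = ⊤ := by
        rw [htop]
        exact Subgroup.map_top_of_surjective _ (QuotientGroup.mk'_surjective B)
      rwa [Subgroup.map_sup, QuotientGroup.map_mk'_self, bot_sup_eq, hPsyl] at h2
    have hcard : Nat.card (↥N ⧸ B) = p ^ mB := by
      rw [← hmB, Subgroup.index_eq_card]
    have hcop : (Nat.card (↥N ⧸ B)).Coprime N.index := by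
      rw [hcard]
      have hnd : ¬ p ∣ N.index := by
        intro hdvd
        exact P.not_dvd_index (hdvd.trans (Subgroup.index_dvd_of_le hPN))
      exact Nat.Coprime.pow_left _ (((Nat.Prime.coprime_iff_not_dvd Fact.out).mpr hnd))
    obtain ⟨z, hz⟩ := (powCoprime hcop).surjective c
    have hzmem : z ∈ (⊤ : Subgroup (↥N ⧸ B)) := Subgroup.mem_top z
    rw [← hmapP'] at hzmem
    obtain ⟨a, haP, hφa⟩ := hzmem
    have haP' : (a : G) ∈ (P : Subgroup G) := Subgroup.mem_subgroupOf.mp haP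
    refine ⟨(a : G), ?_⟩
    rw [hVP (a : G) haP']
    have ha2 : (⟨(a : G), hPN haP'⟩ : ↥N) = a := rfl
    rw [ha2, hφa]
    exact hz
  -- A ≤ ker V
  have hAkerV : A ≤ V.ker := by
    refine hAspec.2.2.2 _ (MonoidHom.normal_ker V) ?_ ⟨mB, ?_⟩
    · rw [_root_.commutator_def, Subgroup.commutator_le]
      intro a _ b _
      rw [MonoidHom.mem_ker, map_commutatorElement]
      exact commutatorElement_eq_one_iff_commute.mpr (mul_comm _ _)
    · rw [Subgroup.index_ker, MonoidHom.range_eq_top.mpr hVsurj, ← hmB,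
        Subgroup.index_eq_card]
      exact Nat.card_congr (Subgroup.topEquiv.toEquiv)
  -- index chase
  have hidx1 : (A.subgroupOf N).index ∣ B.index := Subgroup.index_dvd_of_le hBle
  have hidx2 : B.index ∣ A.index := by
    have h1 : V.ker.index ∣ A.index := Subgroup.index_dvd_of_le hAkerV
    have hr : V.range = ⊤ := MonoidHom.range_eq_top.mpr hVsurj
    have h2 : V.ker.index = B.index := by
      rw [Subgroup.index_ker, hr, Subgroup.index_eq_card]
      exact Nat.card_congr (Subgroup.topEquiv.toEquiv)
    rwa [h2] at h1
  have hidxeq : B.index = (A.subgroupOf N).index := by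
    refine Nat.dvd_antisymm ?_ hidx1
    rw [hANidx]
    exact hidx2
  have hBeq : B = A.subgroupOf N := by
    refine Subgroup.eq_of_le_of_card_ge hBle ?_
    have h1 := Subgroup.card_mul_index B
    have h2 := Subgroup.card_mul_index (A.subgroupOf N)
    rw [← hidxeq] at h2
    have hpos : B.index ≠ 0 := by rw [hmB]; exact pow_ne_zero _ (Nat.Prime.ne_zero Fact.out)
    have := h1.trans h2.symm
    exact Nat.le_of_mul_le_mul_right (le_of_eq this.symm) (Nat.pos_of_ne_zero hpos)
  -- conclude
  refine ⟨A, B, hAspec, hBspec, hAnormal, hBnormal, ?_⟩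
  have hBker : B = f.ker := by rw [hBeq, hker]
  letI : f.ker.Normal := MonoidHom.normal_ker f
  exact ⟨((QuotientGroup.quotientMulEquivOfEq hBker).trans
    (QuotientGroup.quotientKerEquivOfSurjective f hfsurj)).symm⟩
end

section
/- Every finite supersolvable group has an ordered Sylow tower; in particular, if G is a finite supersolvable group of order p_1^{a_1} p_2^{a_2} ⋯ p_r^{a_r} with primes p_1 < p_2 < ⋯ < p_r, then there is a chain of subgroups G = R_0 ⊇ R_1 ⊇ ⋯ ⊇ R_r = {e}, each R_i normal in G, with |R_{i−1} : R_i| = p_i^{a_i} for i = 1, …, r. -/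
universe u

/-- A group `G` is *supersolvable* if there is a chain of subgroups
`{e} = R 0 ⊆ R 1 ⊆ ⋯ ⊆ R m = G`, each normal in `G`, with all successive quotients
`R (i+1) / R i` cyclic. -/
def IsSupersolvable (G : Type*) [Group G] : Prop :=
  ∃ (m : ℕ) (R : Fin (m + 1) → Subgroup G) (hR : ∀ i, (R i).Normal),
    Monotone R ∧ R 0 = ⊥ ∧ R (Fin.last m) = ⊤ ∧
      ∀ i : Fin m,
        letI : ((R i.castSucc).subgroupOf (R i.succ)).Normal :=
          Subgroup.Normal.subgroupOf (hR i.castSucc) _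
        IsCyclic (↥(R i.succ) ⧸ (R i.castSucc).subgroupOf (R i.succ))

open Subgroup

/-- Supersolvability passes to quotients (images under surjective homomorphisms). -/
lemma IsSupersolvable.of_surjective' {G G' : Type*} [Group G] [Group G'] (f : G →* G')
    (hf : Function.Surjective f) (hss : IsSupersolvable G) : IsSupersolvable G' := by
  obtain ⟨m, R, hR, hmono, h0, hlast, hcyc⟩ := hss
  refine ⟨m, fun i => (R i).map f, fun i => Subgroup.Normal.map (hR i) f hf,
    fun i j hij => Subgroup.map_mono (hmono hij), by simp [h0], ?_, ?_⟩
  · show Subgroup.map f (R (Fin.last m)) = ⊤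
    rw [hlast, ← MonoidHom.range_eq_map, MonoidHom.range_eq_top.mpr hf]
  · intro i
    letI := Subgroup.Normal.subgroupOf (hR i.castSucc) (R i.succ)
    haveI : (((R i.castSucc).map f).subgroupOf ((R i.succ).map f)).Normal :=
      Subgroup.Normal.subgroupOf (Subgroup.Normal.map (hR i.castSucc) f hf) _
    have hc := hcyc i
    let φ : ↥(R i.succ) →* ↥((R i.succ).map f) := f.subgroupMap (R i.succ)
    have hφ : Function.Surjective φ := f.subgroupMap_surjective (R i.succ)
    let ψ := (QuotientGroup.mk' (((R i.castSucc).map f).subgroupOf ((R i.succ).map f))).comp φ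
    have hψ : Function.Surjective ψ :=
      (QuotientGroup.mk'_surjective _).comp hφ
    have hker : (R i.castSucc).subgroupOf (R i.succ) ≤ ψ.ker := by
      intro x hx
      simp only [ψ, MonoidHom.mem_ker, MonoidHom.comp_apply, QuotientGroup.mk'_apply,
        QuotientGroup.eq_one_iff]
      exact ⟨x, hx, rfl⟩
    exact isCyclic_of_surjective (QuotientGroup.lift _ ψ hker)
      (fun y => by obtain ⟨x, hx⟩ := hψ y; exact ⟨QuotientGroup.mk x, hx⟩)

/-- A nontrivial finite supersolvable group has a normal subgroup of prime order. -/
lemma exists_normal_prime_order' (G : Type*) [Group G] [Finite G] [Nontrivial G]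
    (hss : IsSupersolvable G) :
    ∃ (p : ℕ) (H : Subgroup G), p.Prime ∧ H.Normal ∧ Nat.card H = p := by
  classical
  obtain ⟨m, R, hR, hmono, h0, hlast, hcyc⟩ := hss
  -- first: find a nontrivial normal cyclic subgroup M
  have key : ∃ i : Fin m, R i.castSucc = ⊥ ∧ R i.succ ≠ ⊥ := by
    by_contra h
    push_neg at h
    have hall : ∀ k : ℕ, ∀ hk : k < m + 1, R ⟨k, hk⟩ = ⊥ := by
      intro k
      induction k with
      | zero => intro hk; exact h0
      | succ n ih =>
        intro hk
        have hn : n < m := Nat.lt_of_succ_lt_succ hk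
        have := h ⟨n, hn⟩ (ih (Nat.lt_of_succ_lt hk))
        simpa [Fin.succ] using this
    have := hall m (Nat.lt_succ_self m)
    rw [show (⟨m, Nat.lt_succ_self m⟩ : Fin (m+1)) = Fin.last m from rfl, hlast] at this
    exact absurd this.symm bot_ne_top
  obtain ⟨i, hbot, hMne⟩ := key
  set M := R i.succ with hMdef
  have hM : M.Normal := hR _
  have hMc : IsCyclic M := by
    have hc := hcyc i
    have hsub : (R i.castSucc).subgroupOf (R i.succ) = (⊥ : Subgroup (R i.succ)) := by
      rw [hbot, bot_subgroupOf]
    haveI : ((R i.castSucc).subgroupOf (R i.succ)).Normal :=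
      Subgroup.Normal.subgroupOf (hR i.castSucc) _
    let e : (↥(R i.succ) ⧸ (R i.castSucc).subgroupOf (R i.succ)) ≃* ↥(R i.succ) :=
      (QuotientGroup.quotientMulEquivOfEq hsub).trans QuotientGroup.quotientBot
    exact isCyclic_of_surjective e.toMonoidHom e.surjective
  -- now: a prime-order subgroup of M, characteristic in M, hence normal in G
  have hcard : Nat.card M ≠ 1 := by
    simpa [Subgroup.card_eq_one] using hMne
  obtain ⟨p, hp, hpdvd⟩ := Nat.exists_prime_and_dvd hcard
  haveI : Fact p.Prime := ⟨hp⟩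
  haveI : Fintype M := Fintype.ofFinite _
  rw [Nat.card_eq_fintype_card] at hpdvd
  obtain ⟨g, hg⟩ := exists_prime_orderOf_dvd_card p hpdvd
  set H' : Subgroup M := Subgroup.zpowers g with hH'
  have hcardH' : Nat.card H' = p := by rw [Nat.card_zpowers, hg]
  have hsetle : (H' : Set M) ⊆ {x : M | x ^ p = 1} := by
    rintro x ⟨k, rfl⟩
    simp only [Set.mem_setOf_eq]
    rw [← zpow_natCast, ← zpow_mul, mul_comm, zpow_mul, zpow_natCast, ← hg,
      pow_orderOf_eq_one, one_zpow]
  have hchar : H'.Characteristic := by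
    rw [Subgroup.characteristic_iff_map_le]
    intro φ
    have hfilt : (Finset.univ.filter fun x : M => x ^ p = 1).card ≤ p :=
      IsCyclic.card_pow_eq_one_le hp.pos
    have hH'filt : (H' : Set M).toFinset ⊆ Finset.univ.filter fun x : M => x ^ p = 1 := by
      intro x hx
      rw [Set.mem_toFinset] at hx
      exact Finset.mem_filter.mpr ⟨Finset.mem_univ _, hsetle hx⟩
    have hcardfin : (H' : Set M).toFinset.card = p := by
      rw [Set.toFinset_card, ← Nat.card_eq_fintype_card]; exact hcardH'
    have heq : (H' : Set M).toFinset = Finset.univ.filter fun x : M => x ^ p = 1 :=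
      Finset.eq_of_subset_of_card_le hH'filt (by omega)
    intro x hx
    obtain ⟨y, hy, rfl⟩ := hx
    have : φ y ^ p = 1 := by
      rw [← map_pow, show y ^ p = 1 from hsetle hy, map_one]
    have : (φ y : M) ∈ (H' : Set M).toFinset := by
      rw [heq]; exact Finset.mem_filter.mpr ⟨Finset.mem_univ _, this⟩
    rwa [Set.mem_toFinset] at this
  haveI := hchar
  haveI := hM
  refine ⟨p, H'.map M.subtype, hp, inferInstance, ?_⟩
  rw [← hcardH']
  exact (Nat.card_congr (Subgroup.equivMapOfInjective H' M.subtype M.subtype_injective).toEquiv).symm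

/-- Key step: a finite supersolvable group has a normal Sylow subgroup for the largest
prime dividing its order. -/
theorem key_aux' (n : ℕ) : ∀ (G : Type u) [Group G] [Finite G], Nat.card G = n →
    ∀ (q : ℕ), q.Prime → (∀ t : ℕ, t.Prime → t ∣ Nat.card G → t ≤ q) →
    IsSupersolvable G →
    ∃ Q : Subgroup G, Q.Normal ∧ Nat.card Q = q ^ (Nat.card G).factorization q := by
  induction n using Nat.strong_induction_on with
  | _ n ih =>
    intro G _ _ hn q hq hmax hss
    rcases subsingleton_or_nontrivial G with hs | hs
    · refine ⟨⊥, inferInstance, ?_⟩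
      have h1 : Nat.card G = 1 := Nat.card_eq_one_iff_unique.mpr ⟨⟨Subsingleton.elim⟩, ⟨1⟩⟩
      simp [h1, Subgroup.card_bot]
    obtain ⟨p, N, hp, hN, hNcard⟩ := exists_normal_prime_order' G hss
    haveI := hN
    set π := QuotientGroup.mk' N with hπ
    have hπs : Function.Surjective π := QuotientGroup.mk'_surjective N
    have hGN : Nat.card G = Nat.card (G ⧸ N) * p := by
      rw [Subgroup.card_eq_card_quotient_mul_card_subgroup N, hNcard]
    set m := Nat.card (G ⧸ N) with hm
    have hm0 : m ≠ 0 := Nat.card_pos.ne'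
    have hmlt : m < n := by
      have h2p := hp.two_le
      have hm1 : 1 ≤ m := Nat.one_le_iff_ne_zero.mpr hm0
      have : m * 2 ≤ m * p := Nat.mul_le_mul_left m h2p
      omega
    have hmaxm : ∀ t : ℕ, t.Prime → t ∣ Nat.card (G ⧸ N) → t ≤ q := fun t ht htd =>
      hmax t ht (htd.trans (by rw [hGN]; exact Dvd.dvd.mul_right dvd_rfl p))
    obtain ⟨Qb, hQbN, hQbcard⟩ := ih m hmlt (G ⧸ N) rfl q hq hmaxm
      (hss.of_surjective' π hπs)
    set K := Subgroup.comap π Qb with hK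
    haveI hKN : K.Normal := hQbN.comap π
    have hKindex : K.index = Qb.index := Subgroup.index_comap_of_surjective Qb hπs
    have hKcard : Nat.card K = p * Nat.card Qb := by
      have h1 : Nat.card K * K.index = Nat.card G := Subgroup.card_mul_index K
      have h2 : Nat.card Qb * Qb.index = m := Subgroup.card_mul_index Qb
      have hindex0 : K.index ≠ 0 := by
        intro h; rw [h, mul_zero] at h1; exact (Nat.card_pos (α := G)).ne' h1.symm
      apply Nat.eq_of_mul_eq_mul_right (Nat.pos_of_ne_zero hindex0)
      rw [h1, hGN, hKindex, ← h2]
      ring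
    have hpq : p ≤ q := hmax p hp (by rw [hGN]; exact dvd_mul_left p m)
    by_cases hpeq : p = q
    · refine ⟨K, hKN, ?_⟩
      have hfact : (Nat.card G).factorization q = m.factorization q + 1 := by
        rw [hGN, Nat.factorization_mul hm0 hp.pos.ne', Finsupp.add_apply, hpeq,
          Nat.Prime.factorization hq, Finsupp.single_eq_same]
      rw [hKcard, hQbcard, hfact, hpeq, pow_succ, mul_comm]
    · have hplt : p < q := lt_of_le_of_ne hpq hpeq
      have hqndvdp : ¬ q ∣ p := fun h => absurd (Nat.le_of_dvd hp.pos h) (by omega)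
      have hfact : (Nat.card G).factorization q = m.factorization q := by
        rw [hGN, Nat.factorization_mul hm0 hp.pos.ne', Finsupp.add_apply,
          Nat.factorization_eq_zero_of_not_dvd hqndvdp, add_zero]
      haveI : Fact q.Prime := ⟨hq⟩
      obtain ⟨P⟩ : Nonempty (Sylow q K) := inferInstance
      have hKfact : (Nat.card K).factorization q = m.factorization q := by
        rw [hKcard, hQbcard, Nat.factorization_mul hp.pos.ne' (pow_ne_zero _ hq.pos.ne'),
          Finsupp.add_apply, Nat.factorization_eq_zero_of_not_dvd hqndvdp,
          hq.factorization_pow, Finsupp.single_eq_same, zero_add]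
      have hPcard : Nat.card P = q ^ m.factorization q := by
        rw [P.card_eq_multiplicity, hKfact]
      have hPindex : (P : Subgroup K).index = p := by
        have h1 : Nat.card P * (P : Subgroup K).index = Nat.card K :=
          Subgroup.card_mul_index _
        rw [hPcard, hKcard, hQbcard, mul_comm p] at h1
        exact Nat.eq_of_mul_eq_mul_left (pow_pos hq.pos _) h1
      have hnq1 : Nat.card (Sylow q K) = 1 := by
        have hdvd : Nat.card (Sylow q K) ∣ p := hPindex ▸ Sylow.card_dvd_index P
        have hmod : Nat.card (Sylow q K) ≡ 1 [MOD q] := card_sylow_modEq_one q K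
        rcases (Nat.Prime.eq_one_or_self_of_dvd hp _ hdvd) with h | h
        · exact h
        · exfalso
          rw [h] at hmod
          have : p % q = 1 % q := hmod
          rw [Nat.mod_eq_of_lt hplt, Nat.mod_eq_of_lt hq.one_lt] at this
          exact hp.one_lt.ne' this
      haveI : Subsingleton (Sylow q K) := (Nat.card_eq_one_iff_unique.mp hnq1).1
      have hPnormal : (P : Subgroup K).Normal := by
        rw [← Subgroup.normalizer_eq_top_iff]
        rw [eq_top_iff]
        intro g _
        exact Sylow.smul_eq_iff_mem_normalizer.mp (Subsingleton.elim (g • P) P)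
      haveI := hPnormal
      haveI : (P : Subgroup K).Characteristic := Sylow.characteristic_of_normal P hPnormal
      refine ⟨(P : Subgroup K).map K.subtype, inferInstance, ?_⟩
      rw [hfact, ← hPcard]
      exact (Nat.card_congr
        (Subgroup.equivMapOfInjective _ K.subtype K.subtype_injective).toEquiv).symm

theorem tower_aux (r : ℕ) : ∀ (G : Type u) [Group G] [Finite G] (p a : Fin r → ℕ),
    (∀ i, (p i).Prime) → StrictMono p → (∀ i, 0 < a i) →
    Nat.card G = ∏ i, p i ^ a i → IsSupersolvable G →
    ∃ R : Fin (r + 1) → Subgroup G,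
      Antitone R ∧ R 0 = ⊤ ∧ R (Fin.last r) = ⊥ ∧ (∀ i, (R i).Normal) ∧
        ∀ i : Fin r, (R i.succ).relIndex (R i.castSucc) = p i ^ a i := by
  induction r with
  | zero =>
    intro G _ _ p a hp hmono ha hcard hss
    have h1 : Nat.card G = 1 := by simpa using hcard
    haveI : Subsingleton G := (Nat.card_eq_one_iff_unique.mp h1).1
    have hbt : (⊥ : Subgroup G) = ⊤ := by
      ext x
      simp [Subsingleton.elim x 1]
    exact ⟨fun _ => ⊥, fun _ _ _ => le_rfl, hbt, rfl, fun _ => inferInstance, fun i => i.elim0⟩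
  | succ r ih =>
    intro G _ _ p a hp hmono ha hcard hss
    set q := p (Fin.last r) with hqdef
    have hq : q.Prime := hp _
    set al := a (Fin.last r) with haldef
    set m' : ℕ := ∏ i : Fin r, p i.castSucc ^ a i.castSucc with hm'def
    have hn' : Nat.card G = m' * q ^ al := by
      rw [hcard, Fin.prod_univ_castSucc]
    have hm'0 : m' ≠ 0 := by
      apply Finset.prod_ne_zero_iff.mpr
      intro i _
      exact pow_ne_zero _ (hp i.castSucc).pos.ne'
    have hqm' : ¬ q ∣ m' := by
      intro hdvd
      obtain ⟨i, _, hi⟩ := (Nat.Prime.prime hq).exists_mem_finset_dvd hdvd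
      have : q = p i.castSucc :=
        (Nat.prime_dvd_prime_iff_eq hq (hp i.castSucc)).mp (hq.dvd_of_dvd_pow hi)
      have hlt : p i.castSucc < q := hmono (Fin.castSucc_lt_last i)
      omega
    have hfact : (Nat.card G).factorization q = al := by
      rw [hn', Nat.factorization_mul hm'0 (pow_ne_zero _ hq.pos.ne'), Finsupp.add_apply,
        Nat.factorization_eq_zero_of_not_dvd hqm', hq.factorization_pow,
        Finsupp.single_eq_same, zero_add]
    have hmax : ∀ t : ℕ, t.Prime → t ∣ Nat.card G → t ≤ q := by
      intro t ht htd
      rw [hcard] at htd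
      obtain ⟨i, _, hi⟩ := (Nat.Prime.prime ht).exists_mem_finset_dvd htd
      have : t = p i := (Nat.prime_dvd_prime_iff_eq ht (hp i)).mp (ht.dvd_of_dvd_pow hi)
      rw [this]
      exact hmono.monotone (Fin.le_last i)
    obtain ⟨Q, hQN, hQcard⟩ := key_aux' (Nat.card G) G rfl q hq hmax hss
    rw [hfact] at hQcard
    haveI := hQN
    set π := QuotientGroup.mk' Q with hπdef
    have hπs : Function.Surjective π := QuotientGroup.mk'_surjective Q
    have hG'card : Nat.card (G ⧸ Q) = m' := by
      have h1 : Nat.card G = Nat.card (G ⧸ Q) * Nat.card Q :=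
        Subgroup.card_eq_card_quotient_mul_card_subgroup Q
      rw [hn', hQcard] at h1
      exact (Nat.eq_of_mul_eq_mul_right (pow_pos hq.pos _) h1.symm)
    obtain ⟨S, hSanti, hS0, hSlast, hSN, hSrel⟩ := ih (G ⧸ Q)
      (fun i => p i.castSucc) (fun i => a i.castSucc) (fun i => hp _)
      (fun i j hij => hmono (Fin.castSucc_lt_castSucc_iff.mpr hij)) (fun i => ha _)
      (by rw [hG'card]) (hss.of_surjective' π hπs)
    refine ⟨fun i => if h : (i : ℕ) < r + 1 then Subgroup.comap π (S ⟨i, h⟩) else ⊥,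
      ?_, ?_, ?_, ?_, ?_⟩
    · intro i j hij
      by_cases hj : (j : ℕ) < r + 1
      · have hi : (i : ℕ) < r + 1 := lt_of_le_of_lt hij hj
        simp only [dif_pos hi, dif_pos hj]
        exact Subgroup.comap_mono (hSanti (show (⟨i, hi⟩ : Fin (r+1)) ≤ ⟨j, hj⟩ from hij))
      · simp only [dif_neg hj]
        exact bot_le
    · have h0 : ((0 : Fin (r + 2)) : ℕ) < r + 1 := Nat.succ_pos r
      simp only [dif_pos h0]
      have : (⟨(0 : Fin (r+2)), h0⟩ : Fin (r + 1)) = 0 := rfl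
      rw [this, hS0, Subgroup.comap_top]
    · have hlast : ¬ ((Fin.last (r + 1) : Fin (r + 2)) : ℕ) < r + 1 := by simp
      simp only [dif_neg hlast]
    · intro i
      by_cases hi : (i : ℕ) < r + 1
      · simp only [dif_pos hi]; exact (hSN _).comap π
      · simp only [dif_neg hi]; infer_instance
    · intro i
      rcases lt_or_eq_of_le (Nat.lt_succ_iff.mp i.isLt) with hi | hi
      · have h1 : ((i.succ : Fin (r + 2)) : ℕ) < r + 1 := by
          simp only [Fin.val_succ]; omega
        have h2 : ((i.castSucc : Fin (r + 2)) : ℕ) < r + 1 := by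
          simp only [Fin.coe_castSucc]; omega
        simp only [dif_pos h1, dif_pos h2]
        rw [Subgroup.relIndex_comap, Subgroup.map_comap_eq_self_of_surjective hπs]
        have key := hSrel ⟨(i : ℕ), hi⟩
        have e1 : (⟨(i : ℕ), hi⟩ : Fin r).succ = ⟨((i.succ : Fin (r+2)) : ℕ), h1⟩ := by
          ext; simp [Fin.val_succ]
        have e2 : (⟨(i : ℕ), hi⟩ : Fin r).castSucc = ⟨((i.castSucc : Fin (r+2)) : ℕ), h2⟩ := by
          ext; simp [Fin.coe_castSucc]
        rw [e1, e2] at key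
        rw [key]
        have e6 : (⟨((i.castSucc : Fin (r+2)) : ℕ), h2⟩ : Fin (r+1)) = i := by ext; simp
        rw [e6]
      · have h1 : ¬ ((i.succ : Fin (r + 2)) : ℕ) < r + 1 := by
          simp only [Fin.val_succ, hi]
          omega
        have h2 : ((i.castSucc : Fin (r + 2)) : ℕ) < r + 1 := by
          simp [Fin.coe_castSucc, hi]
        simp only [dif_neg h1, dif_pos h2]
        have e3 : (⟨((i.castSucc : Fin (r+2)) : ℕ), h2⟩ : Fin (r+1)) = Fin.last r := by
          ext; simp [Fin.coe_castSucc, hi]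
        rw [e3, hSlast]
        have : Subgroup.comap π (⊥ : Subgroup (G ⧸ Q)) = Q := by
          rw [MonoidHom.comap_bot, hπdef, QuotientGroup.ker_mk']
        rw [this, Subgroup.relIndex_bot_left, hQcard]
        have e4 : i = Fin.last r := by ext; exact hi
        rw [e4]

/-- Every finite supersolvable group has an ordered Sylow tower: if `G` is a finite
supersolvable group of order `p₁^a₁ ⋯ p_r^a_r` with primes `p₁ < ⋯ < p_r`, then there is
a chain of subgroups `G = R 0 ⊇ R 1 ⊇ ⋯ ⊇ R r = {e}`, each normal in `G`, with
`|R (i-1) : R i| = pᵢ^aᵢ`. -/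
theorem orderedSylowTower_of_supersolvable (G : Type*) [Group G] [Fintype G]
    (r : ℕ) (p a : Fin r → ℕ) (hp : ∀ i, (p i).Prime) (hmono : StrictMono p)
    (ha : ∀ i, 0 < a i) (hcard : Fintype.card G = ∏ i, p i ^ a i)
    (hss : IsSupersolvable G) :
    ∃ R : Fin (r + 1) → Subgroup G,
      Antitone R ∧ R 0 = ⊤ ∧ R (Fin.last r) = ⊥ ∧ (∀ i, (R i).Normal) ∧
        ∀ i : Fin r, (R i.succ).relIndex (R i.castSucc) = p i ^ a i := by
  exact tower_aux r G p a hp hmono ha (by rw [Nat.card_eq_fintype_card, hcard]) hss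
end
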